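/- arXiv:1305.6162 — 3 statements merged into one kernel-verified Lean document; each statement's English description precedes it below -/
import Mathlib

section
/- Let W_{p'} ⊆ W_p be a parabolic subgroup and let W^{p'}∩W_p denote the set of shortest coset representatives for W_{p'}\W_p. The homomorphism of right H_n-modules z : M^{p'}_q → M^p_q determined by z(N_e) = N_e is well defined, commutes with the bar involutions, sends the canonical basis element N̲_w of M^{p'}_q to the canonical basis element N̲_w of M^p_q if w ∈ W^{p+q} and to 0 otherwise, and satisfies z ∘ j = (Σ_{x ∈ W^{p'}∩W_p} q^{2 l(x)})·id_{M^p_q}, where j : M^p_q → M^{p'}_q is the injective homomorphism of right H_n-modules defined by j(N_w) = Σ_{x ∈ W^{p'}∩W_p} (-q)^{l(x)}·N_{xw}. -/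
open scoped Classical

noncomputable section

abbrev K : Type := RatFunc ℂ

noncomputable def q : K := RatFunc.X

def s (n : ℕ) (i : Fin (n - 1)) : Equiv.Perm (Fin n) :=
  Equiv.swap ⟨(i : ℕ), by have := i.isLt; omega⟩ ⟨(i : ℕ) + 1, by have := i.isLt; omega⟩

def wordProd (n : ℕ) (l : List (Fin (n - 1))) : Equiv.Perm (Fin n) :=
  (l.map (s n)).prod

def len (n : ℕ) (w : Equiv.Perm (Fin n)) : ℕ :=
  sInf {k | ∃ l : List (Fin (n - 1)), l.length = k ∧ wordProd n l = w}

def bruhatLE (n : ℕ) (u w : Equiv.Perm (Fin n)) : Prop :=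
  ∃ l : List (Fin (n - 1)), l.length = len n w ∧ wordProd n l = w ∧
    ∃ t : List (Fin (n - 1)), t.Sublist l ∧ wordProd n t = u

def bruhatLT (n : ℕ) (u w : Equiv.Perm (Fin n)) : Prop :=
  bruhatLE n u w ∧ u ≠ w

/-- The parabolic subgroup of `S_n` generated by the simple transpositions indexed by `P`. -/
def parab (n : ℕ) (P : Finset (Fin (n - 1))) : Subgroup (Equiv.Perm (Fin n)) :=
  Subgroup.closure {σ | ∃ i ∈ P, σ = s n i}

/-- `w` is a shortest coset representative for `W_P \ S_n`. -/
def IsShort (n : ℕ) (P : Finset (Fin (n - 1))) (w : Equiv.Perm (Fin n)) : Prop :=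
  ∀ x ∈ parab n P, len n w ≤ len n (x * w)

/-- `C` is the canonical basis of the mixed induced module with standard basis `N`
(indexed by the permutations satisfying `short`) and bar involution `barM`:
each `C w` is bar-invariant and `C w = N w + Σ_{w' ≺ w} R(q)·N_{w'}` with `R ∈ q·ℤ[q]`. -/
def IsCanonBasis (n : ℕ) {M : Type} [AddCommGroup M] [Module K M]
    (short : Equiv.Perm (Fin n) → Prop) (N : Equiv.Perm (Fin n) → M)
    (barM : M → M) (C : Equiv.Perm (Fin n) → M) : Prop :=
  ∀ w, short w →
    barM (C w) = C w ∧
    ∃ R : Equiv.Perm (Fin n) → Polynomial ℤ,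
      (∀ w', ¬ (short w' ∧ bruhatLT n w' w) → R w' = 0) ∧
      C w = N w + ∑ w' : Equiv.Perm (Fin n), (q * Polynomial.aeval q (R w')) • N w'

/-!
STATEMENT 5: The map `z : M^{p'}_q → M^p_q` determined by `z(N_e) = N_e` is a well-defined
right `H_n`-module homomorphism which commutes with the bar involutions, sends the canonical
basis element `N̲_w` of `M^{p'}_q` to `N̲_w ∈ M^p_q` if `w ∈ W^{p+q}` and to `0` otherwise,
and satisfies `z ∘ j = (Σ_{x ∈ W^{p'}∩W_p} q^{2ℓ(x)})·id`, where
`j : M^p_q → M^{p'}_q` is the injective `H_n`-module homomorphism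
`N_w ↦ Σ_{x ∈ W^{p'}∩W_p} (-q)^{ℓ(x)} N_{xw}`.
-/

namespace S5


variable {n : ℕ}

def fa (i : Fin (n - 1)) : Fin n := ⟨i.1, by have := i.isLt; omega⟩
def fb (i : Fin (n - 1)) : Fin n := ⟨i.1 + 1, by have := i.isLt; omega⟩

@[simp] lemma fa_val (i : Fin (n - 1)) : (fa i).1 = i.1 := rfl
@[simp] lemma fb_val (i : Fin (n - 1)) : (fb i).1 = i.1 + 1 := rfl

lemma fa_lt_fb (i : Fin (n - 1)) : fa i < fb i := by
  simp [Fin.lt_def]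

lemma fa_ne_fb (i : Fin (n - 1)) : fa i ≠ fb i := ne_of_lt (fa_lt_fb i)

lemma s_def (i : Fin (n - 1)) : s n i = Equiv.swap (fa i) (fb i) := rfl

@[simp] lemma s_fa (i : Fin (n - 1)) : s n i (fa i) = fb i := Equiv.swap_apply_left _ _

@[simp] lemma s_fb (i : Fin (n - 1)) : s n i (fb i) = fa i := Equiv.swap_apply_right _ _

lemma s_other {i : Fin (n - 1)} {x : Fin n} (h1 : x ≠ fa i) (h2 : x ≠ fb i) :
    s n i x = x := Equiv.swap_apply_of_ne_of_ne h1 h2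

lemma s_mul_self (i : Fin (n - 1)) : s n i * s n i = 1 := Equiv.swap_mul_self _ _

lemma s_inv (i : Fin (n - 1)) : (s n i)⁻¹ = s n i := by
  rw [s_def, Equiv.swap_inv]

lemma s_apply_self (i : Fin (n - 1)) (x : Fin n) : s n i (s n i x) = x := by
  rw [← Equiv.Perm.mul_apply, s_mul_self, Equiv.Perm.one_apply]

lemma s_val (i : Fin (n - 1)) (x : Fin n) :
    (s n i x).1 = if x.1 = i.1 then i.1 + 1 else if x.1 = i.1 + 1 then i.1 else x.1 := by
  rcases eq_or_ne x (fa i) with rfl | h1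
  · simp
  · rcases eq_or_ne x (fb i) with rfl | h2
    · have : (fb i).1 ≠ i.1 := by simp
      simp [this]
    · have e1 : x.1 ≠ i.1 := fun h => h1 (Fin.ext h)
      have e2 : x.1 ≠ i.1 + 1 := fun h => h2 (Fin.ext h)
      rw [s_other h1 h2, if_neg e1, if_neg e2]

-- inversion number
lemma perm_apply_inv_self {α : Type*} (w : Equiv.Perm α) (x : α) : w (w⁻¹ x) = x := by
  simp only [Equiv.Perm.coe_inv, Equiv.apply_symm_apply]

lemma perm_inv_apply_self {α : Type*} (w : Equiv.Perm α) (x : α) : w⁻¹ (w x) = x := by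
  simp only [Equiv.Perm.coe_inv, Equiv.symm_apply_apply]

def invNum (w : Equiv.Perm (Fin n)) : ℕ :=
  (Finset.univ.filter (fun p : Fin n × Fin n => p.1 < p.2 ∧ w p.2 < w p.1)).card

lemma s_mono {i : Fin (n - 1)} {x y : Fin n} (hxy : x < y) (hne : ¬(x = fa i ∧ y = fb i)) :
    s n i x < s n i y := by
  have hx := s_val i x
  have hy := s_val i y
  have hxy' : x.1 < y.1 := hxy
  have hne' : ¬(x.1 = i.1 ∧ y.1 = i.1 + 1) := by
    rintro ⟨h1, h2⟩; exact hne ⟨Fin.ext h1, Fin.ext h2⟩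
  have hyb : y.1 < n := y.isLt
  rw [Fin.lt_def, hx, hy]
  split_ifs <;> omega

lemma invNum_one : invNum (1 : Equiv.Perm (Fin n)) = 0 := by
  rw [invNum, Finset.card_eq_zero, Finset.filter_eq_empty_iff]
  rintro p -
  simp only [Equiv.Perm.one_apply]
  rintro ⟨h1, h2⟩
  exact absurd h2 (not_lt.mpr h1.le)

lemma invNum_mul_s (w : Equiv.Perm (Fin n)) (i : Fin (n - 1)) :
    (w (fa i) < w (fb i) → invNum (w * s n i) = invNum w + 1) ∧
    (w (fb i) < w (fa i) → invNum w = invNum (w * s n i) + 1) := by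
  classical
  set A := Finset.univ.filter (fun p : Fin n × Fin n => p.1 < p.2 ∧ w p.2 < w p.1) with hA
  set B := Finset.univ.filter
    (fun p : Fin n × Fin n => p.1 < p.2 ∧ (w * s n i) p.2 < (w * s n i) p.1) with hB
  have hmemA : ∀ p : Fin n × Fin n, p ∈ A ↔ p.1 < p.2 ∧ w p.2 < w p.1 := by
    intro p; simp [hA]
  have hmemB : ∀ p : Fin n × Fin n, p ∈ B ↔ p.1 < p.2 ∧ w (s n i p.2) < w (s n i p.1) := by
    intro p; rw [hB, Finset.mem_filter]; simp [Equiv.Perm.mul_apply]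
  have hAB : invNum w = A.card := rfl
  have hBB : invNum (w * s n i) = B.card := rfl
  have hnab : ∀ p : Fin n × Fin n, p.1 < p.2 → p ≠ (fa i, fb i) →
      ¬(p.1 = fa i ∧ p.2 = fb i) := by
    rintro p hp hne ⟨h1, h2⟩
    exact hne (Prod.ext h1 h2)
  have hcon_aux : ∀ x y : Fin n, x < y →
      ((s n i x, s n i y) : Fin n × Fin n) ≠ (fa i, fb i) := by
    intro x y h1 hcon
    have hx : s n i x = fa i := congrArg Prod.fst hcon
    have hy : s n i y = fb i := congrArg Prod.snd hcon
    have hxb : x = fb i := by rw [← s_apply_self i x, hx, s_fa]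
    have hya : y = fa i := by rw [← s_apply_self i y, hy, s_fb]
    rw [hxb, hya] at h1
    exact absurd h1 (not_lt.mpr (fa_lt_fb i).le)
  have key : (B.erase (fa i, fb i)).card = (A.erase (fa i, fb i)).card := by
    apply Finset.card_bij' (fun p _ => (s n i p.1, s n i p.2)) (fun p _ => (s n i p.1, s n i p.2))
    · rintro ⟨x, y⟩ hp
      rw [Finset.mem_erase] at hp
      obtain ⟨hne, hpB⟩ := hp
      rw [hmemB] at hpB
      obtain ⟨h1, h2⟩ := hpB
      rw [Finset.mem_erase]
      exact ⟨hcon_aux x y h1, (hmemA _).mpr ⟨s_mono h1 (hnab _ h1 hne), h2⟩⟩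
    · rintro ⟨x, y⟩ hp
      rw [Finset.mem_erase] at hp
      obtain ⟨hne, hpA⟩ := hp
      rw [hmemA] at hpA
      obtain ⟨h1, h2⟩ := hpA
      rw [Finset.mem_erase]
      refine ⟨hcon_aux x y h1, (hmemB _).mpr ⟨s_mono h1 (hnab _ h1 hne), ?_⟩⟩
      rw [s_apply_self, s_apply_self]
      exact h2
    · rintro ⟨x, y⟩ _
      simp [s_apply_self]
    · rintro ⟨x, y⟩ _
      simp [s_apply_self]
  have habB : ((fa i, fb i) : Fin n × Fin n) ∈ B ↔ w (fa i) < w (fb i) := by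
    rw [hmemB]
    simp only [s_fa, s_fb]
    exact ⟨fun h => h.2, fun h => ⟨fa_lt_fb i, h⟩⟩
  have habA : ((fa i, fb i) : Fin n × Fin n) ∈ A ↔ w (fb i) < w (fa i) := by
    rw [hmemA]
    exact ⟨fun h => h.2, fun h => ⟨fa_lt_fb i, h⟩⟩
  constructor
  · intro h
    have h1 : ((fa i, fb i) : Fin n × Fin n) ∈ B := habB.mpr h
    have h2 : ((fa i, fb i) : Fin n × Fin n) ∉ A := fun hc => absurd h (not_lt.mpr (habA.mp hc).le)
    have e1 : (B.erase (fa i, fb i)).card + 1 = B.card := Finset.card_erase_add_one h1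
    have e2 : A.erase (fa i, fb i) = A := Finset.erase_eq_of_notMem h2
    rw [hBB, hAB, ← e1, key, e2]
  · intro h
    have h1 : ((fa i, fb i) : Fin n × Fin n) ∈ A := habA.mpr h
    have h2 : ((fa i, fb i) : Fin n × Fin n) ∉ B := fun hc => absurd h (not_lt.mpr (habB.mp hc).le)
    have e1 : (A.erase (fa i, fb i)).card + 1 = A.card := Finset.card_erase_add_one h1
    have e2 : B.erase (fa i, fb i) = B := Finset.erase_eq_of_notMem h2
    rw [hBB, hAB, ← e1, ← key, e2]


-- ===== chains and monotonicity =====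

lemma lt_of_chain (f : Fin n → Fin n) :
    ∀ (d : ℕ) (x y : Fin n), y.1 = x.1 + d + 1 →
    (∀ (c : ℕ) (hc : c < n - 1), x.1 ≤ c → c < y.1 → f (fa ⟨c, hc⟩) < f (fb ⟨c, hc⟩)) →
    f x < f y := by
  intro d
  induction d with
  | zero =>
    intro x y hy h
    have hc : x.1 < n - 1 := by have := y.isLt; omega
    have h1 := h x.1 hc le_rfl (by omega)
    have e1 : fa ⟨x.1, hc⟩ = x := Fin.ext rfl
    have e2 : fb ⟨x.1, hc⟩ = y := Fin.ext (by simp [hy])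
    rwa [e1, e2] at h1
  | succ d ih =>
    intro x y hy h
    have hy'lt : x.1 + d + 1 < n := by have := y.isLt; omega
    have h1 : f x < f ⟨x.1 + d + 1, hy'lt⟩ :=
      ih x ⟨x.1 + d + 1, hy'lt⟩ rfl (fun c hc hc1 hc2 => by
        have hc2' : c < x.1 + d + 1 := hc2
        exact h c hc hc1 (by omega))
    have hc : x.1 + d + 1 < n - 1 := by have := y.isLt; omega
    have h2 := h (x.1 + d + 1) hc (by omega) (by omega)
    have e1 : fa ⟨x.1 + d + 1, hc⟩ = (⟨x.1 + d + 1, hy'lt⟩ : Fin n) := Fin.ext rfl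
    have e2 : fb ⟨x.1 + d + 1, hc⟩ = y := Fin.ext (by simp; omega)
    rw [e1, e2] at h2
    exact h1.trans h2

lemma strictMono_of_adj {w : Equiv.Perm (Fin n)} (h : ∀ i : Fin (n - 1), w (fa i) < w (fb i)) :
    StrictMono w := by
  intro x y hxy
  have hd : y.1 = x.1 + (y.1 - x.1 - 1) + 1 := by
    have : x.1 < y.1 := hxy
    omega
  exact lt_of_chain w _ x y hd (fun c hc _ _ => h ⟨c, hc⟩)

lemma le_apply_of_strictMono {f : Fin n → Fin n} (hf : StrictMono f) : ∀ x, x ≤ f x := by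
  have : ∀ (k : ℕ) (x : Fin n), x.1 = k → x.1 ≤ (f x).1 := by
    intro k
    induction k with
    | zero => intro x hx; omega
    | succ k ih =>
      intro x hx
      have hk : k < n := by have := x.isLt; omega
      have hlt : (⟨k, hk⟩ : Fin n) < x := by
        rw [Fin.lt_def]
        show k < x.1
        omega
      have h1 : (f ⟨k, hk⟩).1 < (f x).1 := hf hlt
      have h2 : k ≤ (f ⟨k, hk⟩).1 := ih ⟨k, hk⟩ rfl
      omega
  intro x
  exact Fin.le_def.mpr (this x.1 x rfl)

lemma strictMono_perm_eq_one {w : Equiv.Perm (Fin n)} (hw : StrictMono (w : Fin n → Fin n)) :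
    w = 1 := by
  have hinv : StrictMono ((w⁻¹ : Equiv.Perm (Fin n)) : Fin n → Fin n) := by
    intro x y hxy
    rcases lt_trichotomy (w⁻¹ x) (w⁻¹ y) with h | h | h
    · exact h
    · exact absurd ((Equiv.injective _) h) (ne_of_lt hxy)
    · exfalso
      have := hw h
      rw [perm_apply_inv_self, perm_apply_inv_self] at this
      exact absurd hxy (not_lt.mpr this.le)
  have h1 := le_apply_of_strictMono hw
  have h2 := le_apply_of_strictMono hinv
  apply Equiv.ext
  intro x
  have ha := h1 x
  have hb := h2 (w x)
  rw [perm_inv_apply_self] at hb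
  simp only [Equiv.Perm.one_apply]
  exact le_antisymm hb ha

lemma exists_descent {w : Equiv.Perm (Fin n)} (hw : w ≠ 1) :
    ∃ i : Fin (n - 1), w (fb i) < w (fa i) := by
  by_contra h
  push_neg at h
  apply hw
  apply strictMono_perm_eq_one
  apply strictMono_of_adj
  intro i
  rcases lt_trichotomy (w (fa i)) (w (fb i)) with h1 | h1 | h1
  · exact h1
  · exact absurd (w.injective h1) (fa_ne_fb i)
  · exact absurd h1 (not_lt.mpr (h i))

-- ===== words =====

lemma wordProd_nil : wordProd n [] = 1 := rfl

lemma wordProd_cons (i : Fin (n - 1)) (l : List (Fin (n - 1))) :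
    wordProd n (i :: l) = s n i * wordProd n l := by
  simp [wordProd]

lemma wordProd_append (l t : List (Fin (n - 1))) :
    wordProd n (l ++ t) = wordProd n l * wordProd n t := by
  unfold wordProd
  rw [List.map_append, List.prod_append]

lemma wordProd_concat (l : List (Fin (n - 1))) (i : Fin (n - 1)) :
    wordProd n (l ++ [i]) = wordProd n l * s n i := by
  rw [wordProd_append]
  simp [wordProd]

lemma invNum_wordProd_le (l : List (Fin (n - 1))) : invNum (wordProd n l) ≤ l.length := by
  induction l using List.reverseRecOn with
  | nil => simp [wordProd_nil, invNum_one]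
  | append_singleton t i ih =>
    rw [wordProd_concat]
    have h := invNum_mul_s (wordProd n t) i
    rcases lt_trichotomy (wordProd n t (fa i)) (wordProd n t (fb i)) with h1 | h1 | h1
    · rw [h.1 h1]
      simp only [List.length_append, List.length_singleton]
      omega
    · exact absurd ((wordProd n t).injective h1) (fa_ne_fb i)
    · have h2 := h.2 h1
      simp only [List.length_append, List.length_singleton]
      omega

lemma exists_word_invNum : ∀ (k : ℕ) (w : Equiv.Perm (Fin n)), invNum w = k →
    ∃ l, wordProd n l = w ∧ l.length = k := by
  intro k
  induction k using Nat.strong_induction_on with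
  | _ k ih =>
    intro w hw
    rcases eq_or_ne w 1 with rfl | hne
    · refine ⟨[], rfl, ?_⟩
      rw [← hw, invNum_one]
      rfl
    · obtain ⟨i, hi⟩ := exists_descent hne
      have h2 := (invNum_mul_s w i).2 hi
      obtain ⟨l, hl, hlen⟩ := ih (invNum (w * s n i)) (by omega) _ rfl
      refine ⟨l ++ [i], ?_, by simp [hlen]; omega⟩
      rw [wordProd_concat, hl, mul_assoc, s_mul_self, mul_one]

lemma len_le_of_word {l : List (Fin (n - 1))} {w : Equiv.Perm (Fin n)}
    (hl : wordProd n l = w) : len n w ≤ l.length :=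
  Nat.sInf_le ⟨l, rfl, hl⟩

lemma len_eq_invNum (w : Equiv.Perm (Fin n)) : len n w = invNum w := by
  obtain ⟨l, hl, hlen⟩ := exists_word_invNum (invNum w) w rfl
  refine le_antisymm (hlen ▸ len_le_of_word hl) ?_
  have hne : {k | ∃ l : List (Fin (n - 1)), l.length = k ∧ wordProd n l = w}.Nonempty :=
    ⟨l.length, l, rfl, hl⟩
  obtain ⟨l', hl'len, hl'⟩ := Nat.sInf_mem hne
  calc invNum w = invNum (wordProd n l') := by rw [hl']
    _ ≤ l'.length := invNum_wordProd_le _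
    _ = len n w := hl'len

lemma len_one : len n (1 : Equiv.Perm (Fin n)) = 0 := by
  rw [len_eq_invNum, invNum_one]

lemma len_mul_s_lt {w : Equiv.Perm (Fin n)} {i : Fin (n - 1)} (h : w (fa i) < w (fb i)) :
    len n (w * s n i) = len n w + 1 := by
  rw [len_eq_invNum, len_eq_invNum]
  exact (invNum_mul_s w i).1 h

lemma len_mul_s_gt {w : Equiv.Perm (Fin n)} {i : Fin (n - 1)} (h : w (fb i) < w (fa i)) :
    len n w = len n (w * s n i) + 1 := by
  rw [len_eq_invNum, len_eq_invNum]
  exact (invNum_mul_s w i).2 h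

lemma eq_one_of_len_eq_zero {w : Equiv.Perm (Fin n)} (h : len n w = 0) : w = 1 := by
  rcases eq_or_ne w 1 with rfl | hne
  · rfl
  · exfalso
    obtain ⟨i, hi⟩ := exists_descent hne
    have := len_mul_s_gt hi
    omega

lemma len_inv (w : Equiv.Perm (Fin n)) : len n w⁻¹ = len n w := by
  rw [len_eq_invNum, len_eq_invNum]
  unfold invNum
  apply Finset.card_bij' (fun p _ => ((w⁻¹ p.2 : Fin n), (w⁻¹ p.1 : Fin n)))
    (fun p _ => ((w p.2 : Fin n), (w p.1 : Fin n)))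
  · rintro ⟨x, y⟩ hp
    simp only [Finset.mem_filter, Finset.mem_univ, true_and,
      perm_apply_inv_self] at hp ⊢
    exact ⟨hp.2, hp.1⟩
  · rintro ⟨x, y⟩ hp
    simp only [Finset.mem_filter, Finset.mem_univ, true_and,
      perm_inv_apply_self] at hp ⊢
    exact ⟨hp.2, hp.1⟩
  · rintro ⟨x, y⟩ _
    simp
  · rintro ⟨x, y⟩ _
    simp

lemma exists_reduced (w : Equiv.Perm (Fin n)) :
    ∃ l, wordProd n l = w ∧ l.length = len n w := by
  rw [len_eq_invNum]
  exact exists_word_invNum (invNum w) w rfl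

lemma len_mul_le (w v : Equiv.Perm (Fin n)) : len n (w * v) ≤ len n w + len n v := by
  obtain ⟨lw, hlw, hlw2⟩ := exists_reduced w
  obtain ⟨lv, hlv, hlv2⟩ := exists_reduced v
  have : wordProd n (lw ++ lv) = w * v := by rw [wordProd_append, hlw, hlv]
  have h := len_le_of_word this
  simp only [List.length_append] at h
  omega

lemma len_s_mul_lt {w : Equiv.Perm (Fin n)} {i : Fin (n - 1)} (h : w⁻¹ (fa i) < w⁻¹ (fb i)) :
    len n (s n i * w) = len n w + 1 := by
  have e : (s n i * w)⁻¹ = w⁻¹ * s n i := by rw [mul_inv_rev, s_inv]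
  rw [← len_inv (s n i * w), e, len_mul_s_lt h, len_inv]

lemma len_s_mul_gt {w : Equiv.Perm (Fin n)} {i : Fin (n - 1)} (h : w⁻¹ (fb i) < w⁻¹ (fa i)) :
    len n w = len n (s n i * w) + 1 := by
  have e : (s n i * w)⁻¹ = w⁻¹ * s n i := by rw [mul_inv_rev, s_inv]
  rw [← len_inv (s n i * w), e, ← len_inv w]
  exact len_mul_s_gt h


-- ===== parabolic subgroups =====

def noLD (J : Finset (Fin (n - 1))) (u : Equiv.Perm (Fin n)) : Prop :=
  ∀ i ∈ J, u⁻¹ (fa i) < u⁻¹ (fb i)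

lemma s_mem_parab {J : Finset (Fin (n - 1))} {i : Fin (n - 1)} (hi : i ∈ J) :
    s n i ∈ parab n J :=
  Subgroup.subset_closure ⟨i, hi, rfl⟩

lemma wordProd_mem_parab {J : Finset (Fin (n - 1))} {l : List (Fin (n - 1))}
    (hl : ∀ i ∈ l, i ∈ J) : wordProd n l ∈ parab n J := by
  induction l with
  | nil => exact one_mem _
  | cons i t ih =>
    rw [wordProd_cons]
    exact mul_mem (s_mem_parab (hl i (List.mem_cons_self)))
      (ih fun j hj => hl j (List.mem_cons_of_mem i hj))

lemma parab_cut {J : Finset (Fin (n - 1))} {y : Equiv.Perm (Fin n)} (hy : y ∈ parab n J)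
    (c : ℕ) (hc : ∀ h : c < n - 1, (⟨c, h⟩ : Fin (n - 1)) ∉ J) :
    ∀ x : Fin n, x.1 ≤ c ↔ (y x).1 ≤ c := by
  induction hy using Subgroup.closure_induction with
  | mem g hg =>
    obtain ⟨i, hi, rfl⟩ := hg
    intro x
    have hic : i.1 ≠ c := by
      intro h
      exact hc (h ▸ i.isLt) (by rw [show (⟨c, h ▸ i.isLt⟩ : Fin (n - 1)) = i from Fin.ext h.symm]; exact hi)
    have := s_val i x
    rw [this]
    split_ifs <;> omega
  | one => intro x; simp
  | mul g h _ _ ihg ihh =>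
    intro x
    rw [Equiv.Perm.mul_apply]
    exact (ihh x).trans (ihg (h x))
  | inv g _ ihg =>
    intro x
    have := ihg (g⁻¹ x)
    rw [perm_apply_inv_self] at this
    exact this.symm

lemma descent_mem_right {J : Finset (Fin (n - 1))} {x : Equiv.Perm (Fin n)}
    {i : Fin (n - 1)} (hx : x ∈ parab n J) (h : x (fb i) < x (fa i)) : i ∈ J := by
  by_contra hi
  have hcut := parab_cut hx i.1 (fun h' => by
    rwa [show (⟨i.1, h'⟩ : Fin (n - 1)) = i from Fin.ext rfl])
  have h1 : (x (fa i)).1 ≤ i.1 := (hcut (fa i)).mp (le_of_eq rfl)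
  have h2 : ¬ (x (fb i)).1 ≤ i.1 := by
    intro hh
    have := (hcut (fb i)).mpr hh
    simp at this
  have h3 : (x (fb i)).1 < (x (fa i)).1 := h
  omega

lemma parab_word {J : Finset (Fin (n - 1))} :
    ∀ (k : ℕ) (x : Equiv.Perm (Fin n)), len n x = k → x ∈ parab n J →
    ∃ l, (∀ i ∈ l, i ∈ J) ∧ wordProd n l = x ∧ l.length = k := by
  intro k
  induction k using Nat.strong_induction_on with
  | _ k ih =>
    intro x hk hx
    rcases eq_or_ne x 1 with rfl | hne
    · refine ⟨[], by simp, rfl, ?_⟩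
      rw [← hk, len_one]
      rfl
    · obtain ⟨i, hi⟩ := exists_descent hne
      have hiJ : i ∈ J := descent_mem_right hx hi
      have hlen := len_mul_s_gt hi
      have hmem : x * s n i ∈ parab n J := mul_mem hx (s_mem_parab hiJ)
      obtain ⟨l, hlJ, hl, hllen⟩ := ih (len n (x * s n i)) (by omega) _ rfl hmem
      refine ⟨l ++ [i], ?_, ?_, ?_⟩
      · intro j hj
        rcases List.mem_append.mp hj with h | h
        · exact hlJ j h
        · rw [List.mem_singleton.mp h]; exact hiJ
      · rw [wordProd_concat, hl, mul_assoc, s_mul_self, mul_one]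
      · simp [hllen]; omega

lemma len_parab_add {J : Finset (Fin (n - 1))} :
    ∀ (k : ℕ) {y u : Equiv.Perm (Fin n)}, len n y = k → y ∈ parab n J → noLD J u →
    len n (y * u) = len n y + len n u := by
  intro k
  induction k using Nat.strong_induction_on with
  | _ k ih =>
    intro y u hk hy hu
    rcases eq_or_ne y 1 with rfl | hne
    · simp [len_one]
    · have hinv : y⁻¹ ≠ 1 := by simpa using hne
      obtain ⟨j, hj⟩ := exists_descent hinv
      have hjJ : j ∈ J := descent_mem_right (inv_mem hy) hj
      have hlen : len n y = len n (s n j * y) + 1 := len_s_mul_gt hj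
      have hy'mem : s n j * y ∈ parab n J := mul_mem (s_mem_parab hjJ) hy
      have hyy : y = s n j * (s n j * y) := by
        rw [← mul_assoc, s_mul_self, one_mul]
      have hcrit : (s n j * y)⁻¹ (fa j) < (s n j * y)⁻¹ (fb j) := by
        rcases lt_trichotomy ((s n j * y)⁻¹ (fa j)) ((s n j * y)⁻¹ (fb j)) with h | h | h
        · exact h
        · exact absurd (Equiv.injective _ h) (fa_ne_fb j)
        · have := len_s_mul_gt h
          rw [← hyy] at this
          omega
      -- chain condition
      have hxy0 : (s n j * y)⁻¹ (fa j) < (s n j * y)⁻¹ (fb j) := hcrit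
      have hchain : u⁻¹ ((s n j * y)⁻¹ (fa j)) < u⁻¹ ((s n j * y)⁻¹ (fb j)) := by
        set x0 := (s n j * y)⁻¹ (fa j) with hx0
        set y0 := (s n j * y)⁻¹ (fb j) with hy0
        have hd : y0.1 = x0.1 + (y0.1 - x0.1 - 1) + 1 := by
          have : x0.1 < y0.1 := hxy0
          omega
        apply lt_of_chain (fun t => u⁻¹ t) _ x0 y0 hd
        intro c hc h1 h2
        have hcJ : (⟨c, hc⟩ : Fin (n - 1)) ∈ J := by
          by_contra hcJ
          have hcut := parab_cut (inv_mem hy'mem) c (fun h' => by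
            rwa [show (⟨c, h'⟩ : Fin (n - 1)) = ⟨c, hc⟩ from rfl])
          have e1 : (fa j).1 ≤ c ↔ x0.1 ≤ c := hcut (fa j)
          have e2 : (fb j).1 ≤ c ↔ y0.1 ≤ c := hcut (fb j)
          have f1 : j.1 ≤ c := by
            have := e1.mpr h1
            simpa using this
          have f2 : ¬ (j.1 + 1 ≤ c) := by
            intro hh
            have := e2.mp (by simpa using hh)
            omega
          have : c = j.1 := by omega
          exact hcJ (by rw [show (⟨c, hc⟩ : Fin (n - 1)) = j from Fin.ext this]; exact hjJ)
        exact hu _ hcJ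
      have hcrit2 : ((s n j * y) * u)⁻¹ (fa j) < ((s n j * y) * u)⁻¹ (fb j) := by
        simpa [mul_inv_rev, Equiv.Perm.mul_apply] using hchain
      have hstep : len n (s n j * ((s n j * y) * u)) = len n ((s n j * y) * u) + 1 :=
        len_s_mul_lt hcrit2
      have hIH : len n ((s n j * y) * u) = len n (s n j * y) + len n u :=
        ih (len n (s n j * y)) (by omega) rfl hy'mem hu
      have e : y * u = s n j * ((s n j * y) * u) := by
        rw [← mul_assoc, ← hyy]
      rw [e, hstep, hIH]
      omega

lemma noLD_iff_short {J : Finset (Fin (n - 1))} {u : Equiv.Perm (Fin n)} :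
    IsShort n J u ↔ noLD J u := by
  constructor
  · intro h i hi
    rcases lt_trichotomy (u⁻¹ (fa i)) (u⁻¹ (fb i)) with h2 | h2 | h2
    · exact h2
    · exact absurd (Equiv.injective _ h2) (fa_ne_fb i)
    · have h3 := len_s_mul_gt h2
      have h4 := h (s n i) (s_mem_parab hi)
      omega
  · intro h x hx
    rw [len_parab_add (len n x) rfl hx h]
    omega

lemma noLD_one (J : Finset (Fin (n - 1))) : noLD J (1 : Equiv.Perm (Fin n)) := by
  intro i _
  simpa using fa_lt_fb i

lemma noLD_mono {J J' : Finset (Fin (n - 1))} (h : J ⊆ J') {u : Equiv.Perm (Fin n)}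
    (hu : noLD J' u) : noLD J u := fun i hi => hu i (h hi)

lemma decomp_word (J : Finset (Fin (n - 1))) :
    ∀ (k : ℕ) (v : Equiv.Perm (Fin n)), len n v = k →
    ∃ l u, (∀ i ∈ l, i ∈ J) ∧ noLD J u ∧ v = wordProd n l * u ∧
      len n v = l.length + len n u ∧ len n (wordProd n l) = l.length := by
  intro k
  induction k using Nat.strong_induction_on with
  | _ k ih =>
    intro v hk
    by_cases hv : noLD J v
    · exact ⟨[], v, by simp, hv, by rw [wordProd_nil, one_mul],
        by simp [wordProd_nil, len_one]⟩
    · rw [noLD] at hv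
      push_neg at hv
      obtain ⟨i, hiJ, hi⟩ := hv
      have hi' : v⁻¹ (fb i) < v⁻¹ (fa i) := by
        rcases lt_trichotomy (v⁻¹ (fa i)) (v⁻¹ (fb i)) with h | h | h
        · exact absurd hi (not_le.mpr h)
        · exact absurd (Equiv.injective _ h) (fa_ne_fb i)
        · exact h
      have hlen := len_s_mul_gt hi'
      obtain ⟨l, u, hlJ, hu, heq, hsum, hred⟩ := ih (len n (s n i * v)) (by omega) _ rfl
      refine ⟨i :: l, u, ?_, hu, ?_, ?_, ?_⟩
      · intro j hj
        rcases List.mem_cons.mp hj with h | h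
        · rw [h]; exact hiJ
        · exact hlJ j h
      · rw [wordProd_cons, mul_assoc, ← heq, ← mul_assoc, s_mul_self, one_mul]
      · have : len n v = len n (s n i * v) + 1 := hlen
        simp only [List.length_cons]
        omega
      · have h1 : len n (wordProd n (i :: l)) ≤ l.length + 1 := by
          have := len_le_of_word (rfl : wordProd n (i :: l) = wordProd n (i :: l))
          simpa using this
        have heq2 : v = wordProd n (i :: l) * u := by
          rw [wordProd_cons, mul_assoc, ← heq, ← mul_assoc, s_mul_self, one_mul]
        have h2 : len n v ≤ len n (wordProd n (i :: l)) + len n u := by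
          rw [heq2]; exact len_mul_le _ _
        simp only [List.length_cons]
        omega

lemma parab_mono {J J' : Finset (Fin (n - 1))} (h : J ⊆ J') :
    parab n J ≤ parab n J' := by
  apply Subgroup.closure_mono
  rintro σ ⟨i, hi, rfl⟩
  exact ⟨i, h hi, rfl⟩

lemma parab_commute {J1 J2 : Finset (Fin (n - 1))}
    (hcomm : ∀ i ∈ J1, ∀ j ∈ J2, s n i * s n j = s n j * s n i) :
    ∀ x ∈ parab n J1, ∀ y ∈ parab n J2, x * y = y * x := by
  have hgen : ∀ j ∈ J2, ∀ x ∈ parab n J1, Commute x (s n j) := by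
    intro j hj x hx
    induction hx using Subgroup.closure_induction with
    | mem g hg =>
      obtain ⟨i, hi, rfl⟩ := hg
      exact hcomm i hi j hj
    | one => exact Commute.one_left _
    | mul g h _ _ ihg ihh => exact ihg.mul_left ihh
    | inv g _ ihg => exact ihg.inv_left
  intro x hx y hy
  induction hy using Subgroup.closure_induction with
  | mem g hg =>
    obtain ⟨j, hj, rfl⟩ := hg
    exact hgen j hj x hx
  | one => exact Commute.one_right _
  | mul g h _ _ ihg ihh => exact Commute.mul_right ihg ihh
  | inv g _ ihg => exact Commute.inv_right ihg

lemma s_commute_word {Pf Qf : Finset (Fin (n - 1))}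
    (hcomm : ∀ i ∈ Pf, ∀ j ∈ Qf, s n i * s n j = s n j * s n i)
    {j : Fin (n - 1)} (hj : j ∈ Qf) {l : List (Fin (n - 1))} (hl : ∀ i ∈ l, i ∈ Pf) :
    s n j * wordProd n l = wordProd n l * s n j := by
  induction l with
  | nil => rw [wordProd_nil, one_mul, mul_one]
  | cons i t ih =>
    rw [wordProd_cons, ← mul_assoc, ← hcomm i (hl i (List.mem_cons_self)) j hj,
      mul_assoc, ih (fun a ha => hl a (List.mem_cons_of_mem i ha)), mul_assoc]

lemma sort_word {Pf Qf : Finset (Fin (n - 1))}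
    (hcomm : ∀ i ∈ Pf, ∀ j ∈ Qf, s n i * s n j = s n j * s n i) :
    ∀ l : List (Fin (n - 1)), (∀ i ∈ l, i ∈ Pf ∪ Qf) →
    ∃ lP lQ, (∀ i ∈ lP, i ∈ Pf) ∧ (∀ j ∈ lQ, j ∈ Qf) ∧
      wordProd n l = wordProd n lP * wordProd n lQ ∧ lP.length + lQ.length = l.length := by
  intro l
  induction l with
  | nil => exact fun _ => ⟨[], [], by simp, by simp, by simp [wordProd_nil], rfl⟩
  | cons i t ih =>
    intro hl
    obtain ⟨lP, lQ, hlP, hlQ, heq, hlen⟩ := ih (fun a ha => hl a (List.mem_cons_of_mem i ha))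
    by_cases hiP : i ∈ Pf
    · refine ⟨i :: lP, lQ, ?_, hlQ, ?_, ?_⟩
      · intro a ha
        rcases List.mem_cons.mp ha with h | h
        · rw [h]; exact hiP
        · exact hlP a h
      · rw [wordProd_cons, heq, wordProd_cons, mul_assoc]
      · simp only [List.length_cons]; omega
    · have hiQ : i ∈ Qf := by
        rcases Finset.mem_union.mp (hl i (List.mem_cons_self)) with h | h
        · exact absurd h hiP
        · exact h
      refine ⟨lP, i :: lQ, hlP, ?_, ?_, ?_⟩
      · intro a ha
        rcases List.mem_cons.mp ha with h | h
        · rw [h]; exact hiQ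
        · exact hlQ a h
      · rw [wordProd_cons, heq, wordProd_cons, ← mul_assoc,
          s_commute_word hcomm hiQ hlP, mul_assoc]
      · simp only [List.length_cons]; omega


-- ===== Deodhar dichotomy =====

lemma deodhar {P' : Finset (Fin (n - 1))} {x : Equiv.Perm (Fin n)} {i : Fin (n - 1)}
    (hx : noLD P' x) (hxs : ¬ noLD P' (x * s n i)) :
    ∃ j ∈ P', x⁻¹ (fa j) = fa i ∧ x⁻¹ (fb j) = fb i := by
  rw [noLD] at hxs
  push_neg at hxs
  obtain ⟨j, hj, hjle⟩ := hxs
  refine ⟨j, hj, ?_⟩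
  have he : (x * s n i)⁻¹ = s n i * x⁻¹ := by rw [mul_inv_rev, s_inv]
  rw [he] at hjle
  simp only [Equiv.Perm.mul_apply] at hjle
  have horig : x⁻¹ (fa j) < x⁻¹ (fb j) := hx j hj
  have hsa := s_val i (x⁻¹ (fa j))
  have hsb := s_val i (x⁻¹ (fb j))
  have hle : (s n i (x⁻¹ (fb j))).1 ≤ (s n i (x⁻¹ (fa j))).1 := hjle
  have horig' : (x⁻¹ (fa j)).1 < (x⁻¹ (fb j)).1 := horig
  rw [hsa, hsb] at hle
  constructor
  · apply Fin.ext
    simp only [fa_val]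
    split_ifs at hle <;> omega
  · apply Fin.ext
    simp only [fb_val]
    split_ifs at hle <;> omega

lemma deodhar_eq {x : Equiv.Perm (Fin n)} {i j : Fin (n - 1)}
    (h1 : x⁻¹ (fa j) = fa i) (h2 : x⁻¹ (fb j) = fb i) :
    x * s n i = s n j * x := by
  have e1 : x (fa i) = fa j := by rw [← h1, perm_apply_inv_self]
  have e2 : x (fb i) = fb j := by rw [← h2, perm_apply_inv_self]
  apply Equiv.ext
  intro k
  simp only [Equiv.Perm.mul_apply]
  rcases eq_or_ne k (fa i) with rfl | hk1
  · rw [s_fa, e2, e1, s_fa]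
  · rcases eq_or_ne k (fb i) with rfl | hk2
    · rw [s_fb, e1, e2, s_fb]
    · rw [s_other hk1 hk2, s_other]
      · intro hc
        exact hk1 (by rw [← h1, ← hc, perm_inv_apply_self])
      · intro hc
        exact hk2 (by rw [← h2, ← hc, perm_inv_apply_self])

-- ===== Hecke algebra lemmas =====

section Hecke

variable {A : Type} [Ring A] [Algebra K A] {H : Equiv.Perm (Fin n) → A}

lemma H_word (hone : H 1 = 1)
    (hmul : ∀ (w : Equiv.Perm (Fin n)) (i : Fin (n - 1)),
      len n (w * s n i) = len n w + 1 → H (w * s n i) = H w * H (s n i)) :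
    ∀ l : List (Fin (n - 1)), len n (wordProd n l) = l.length →
    H (wordProd n l) = (l.map fun i => H (s n i)).prod := by
  intro l
  induction l using List.reverseRecOn with
  | nil => intro _; simpa [wordProd_nil] using hone
  | append_singleton t i ih =>
    intro hred
    have hlen1 : len n (wordProd n t) ≤ t.length := len_le_of_word rfl
    have hlen2 : len n (wordProd n t * s n i) = t.length + 1 := by
      rw [← wordProd_concat]
      simpa using hred
    have hlen3 : len n (s n i) ≤ 1 := by
      have : wordProd n [i] = s n i := by simp [wordProd]
      simpa using len_le_of_word this
    have hlen4 : len n (wordProd n t) = t.length := by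
      have := len_mul_le (wordProd n t) (s n i)
      omega
    have hstep : len n (wordProd n t * s n i) = len n (wordProd n t) + 1 := by omega
    rw [wordProd_concat, hmul _ _ hstep, ih hlen4]
    simp

lemma H_mul_add (hone : H 1 = 1)
    (hmul : ∀ (w : Equiv.Perm (Fin n)) (i : Fin (n - 1)),
      len n (w * s n i) = len n w + 1 → H (w * s n i) = H w * H (s n i))
    {w v : Equiv.Perm (Fin n)} (h : len n (w * v) = len n w + len n v) :
    H (w * v) = H w * H v := by
  obtain ⟨lw, hlw, hlw2⟩ := exists_reduced w
  obtain ⟨lv, hlv, hlv2⟩ := exists_reduced v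
  have hcat : wordProd n (lw ++ lv) = w * v := by rw [wordProd_append, hlw, hlv]
  have hredcat : len n (wordProd n (lw ++ lv)) = (lw ++ lv).length := by
    rw [hcat, h]
    simp [hlw2, hlv2]
  rw [← hcat, H_word hone hmul _ hredcat, List.map_append, List.prod_append,
    ← H_word hone hmul lw (by rw [hlw, hlw2]), ← H_word hone hmul lv (by rw [hlv, hlv2]),
    hlw, hlv]

lemma H_mul_s_down (hone : H 1 = 1)
    (hmul : ∀ (w : Equiv.Perm (Fin n)) (i : Fin (n - 1)),
      len n (w * s n i) = len n w + 1 → H (w * s n i) = H w * H (s n i))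
    (hquad : ∀ i : Fin (n - 1), H (s n i) * H (s n i) = (q⁻¹ - q) • H (s n i) + 1)
    {w : Equiv.Perm (Fin n)} {i : Fin (n - 1)} (h : len n w = len n (w * s n i) + 1) :
    H w * H (s n i) = (q⁻¹ - q) • H w + H (w * s n i) := by
  have he : (w * s n i) * s n i = w := by rw [mul_assoc, s_mul_self, mul_one]
  have hw : H w = H (w * s n i) * H (s n i) := by
    have := hmul (w * s n i) i (by rw [he]; omega)
    rw [he] at this
    exact this
  rw [hw, mul_assoc, hquad i, mul_add, mul_one, mul_smul_comm, ← hw]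

end Hecke

-- ===== K-side =====

lemma q_ne_zero : (q : K) ≠ 0 := RatFunc.X_ne_zero

lemma algebraMap_poly_injective :
    Function.Injective (algebraMap (Polynomial ℂ) K) :=
  RatFunc.algebraMap_injective ℂ

lemma aeval_q_eq_algebraMap (p : Polynomial ℂ) :
    Polynomial.aeval (q : K) p = algebraMap (Polynomial ℂ) K p := by
  induction p using Polynomial.induction_on' with
  | add p r hp hr => rw [map_add, map_add, hp, hr]
  | monomial k a =>
    rw [Polynomial.aeval_monomial, ← Polynomial.C_mul_X_pow_eq_monomial, map_mul, map_pow,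
      RatFunc.algebraMap_C, RatFunc.algebraMap_X, RatFunc.algebraMap_eq_C]
    rfl

lemma rigidC (S : Polynomial ℂ) (h0 : S.coeff 0 = 0)
    (h : Polynomial.aeval (q : K) S = Polynomial.aeval (q⁻¹ : K) S) : S = 0 := by
  by_contra hS
  set d := S.natDegree with hd
  have hd1 : 1 ≤ d := by
    rcases Nat.eq_zero_or_pos d with h' | h'
    · exfalso
      have heq := Polynomial.eq_C_of_natDegree_eq_zero (hd ▸ h')
      rw [heq, h0] at hS
      exact hS (by simp)
    · exact h'
  have haev : Polynomial.aeval (q⁻¹ : K) S =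
      ∑ k ∈ Finset.range (d + 1), algebraMap ℂ K (S.coeff k) * (q⁻¹ : K) ^ k := by
    conv_lhs => rw [Polynomial.as_sum_range' S (d + 1) (by omega)]
    rw [map_sum]
    apply Finset.sum_congr rfl
    intro k _
    rw [Polynomial.aeval_monomial]
  have key : algebraMap (Polynomial ℂ) K (Polynomial.X ^ d * S) =
      algebraMap (Polynomial ℂ) K
        (∑ k ∈ Finset.range (d + 1), Polynomial.C (S.coeff k) * Polynomial.X ^ (d - k)) := by
    rw [map_mul, map_pow, RatFunc.algebraMap_X, ← aeval_q_eq_algebraMap, h, haev,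
      ← aeval_q_eq_algebraMap, map_sum, Finset.mul_sum]
    apply Finset.sum_congr rfl
    intro k hk
    rw [Finset.mem_range] at hk
    rw [map_mul, Polynomial.aeval_C, map_pow, Polynomial.aeval_X, inv_pow, mul_left_comm]
    congr 1
    exact (pow_sub₀ (RatFunc.X : K) q_ne_zero (show k ≤ d by omega)).symm
  have keyp : Polynomial.X ^ d * S =
      ∑ k ∈ Finset.range (d + 1), Polynomial.C (S.coeff k) * Polynomial.X ^ (d - k) :=
    algebraMap_poly_injective key
  have hXd : (Polynomial.X ^ d : Polynomial ℂ) ≠ 0 := pow_ne_zero _ Polynomial.X_ne_zero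
  have hdeg1 : (Polynomial.X ^ d * S).natDegree = d + d := by
    rw [Polynomial.natDegree_mul hXd hS, Polynomial.natDegree_X_pow]
  have hdeg2 : (∑ k ∈ Finset.range (d + 1),
      Polynomial.C (S.coeff k) * Polynomial.X ^ (d - k)).natDegree ≤ d := by
    apply Polynomial.natDegree_sum_le_of_forall_le
    intro k _
    exact (Polynomial.natDegree_C_mul_X_pow_le _ _).trans (by omega)
  rw [keyp] at hdeg1
  omega


lemma barK_aeval (barK : K →+* K) (hq : barK (q : K) = q⁻¹) (c : Polynomial ℤ) :
    barK (Polynomial.aeval (q : K) c) = Polynomial.aeval (q⁻¹ : K) c := by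
  induction c using Polynomial.induction_on' with
  | add p r hp hr => rw [map_add, map_add, map_add, hp, hr]
  | monomial k a =>
    rw [Polynomial.aeval_monomial, Polynomial.aeval_monomial, map_mul, map_pow, hq]
    congr 1
    simp

lemma rigidZ (c : Polynomial ℤ)
    (h : Polynomial.aeval (q : K) (Polynomial.X * c) =
         Polynomial.aeval (q⁻¹ : K) (Polynomial.X * c)) : c = 0 := by
  set T : Polynomial ℤ := Polynomial.X * c with hT
  set S : Polynomial ℂ := T.map (Int.castRingHom ℂ) with hS
  have h0 : S.coeff 0 = 0 := by
    rw [hS, Polynomial.coeff_map, hT, Polynomial.mul_coeff_zero]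
    simp
  have hcomp : (algebraMap ℂ K).comp (Int.castRingHom ℂ) = algebraMap ℤ K :=
    RingHom.ext_int _ _
  have he1 : Polynomial.aeval (q : K) S = Polynomial.aeval (q : K) T := by
    rw [hS, Polynomial.aeval_def, Polynomial.aeval_def, Polynomial.eval₂_map, hcomp]
  have he2 : Polynomial.aeval (q⁻¹ : K) S = Polynomial.aeval (q⁻¹ : K) T := by
    rw [hS, Polynomial.aeval_def, Polynomial.aeval_def, Polynomial.eval₂_map, hcomp]
  have hS0 : S = 0 := rigidC S h0 (by rw [he1, he2]; exact h)
  have hT0 : T = 0 := by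
    apply Polynomial.map_injective (Int.castRingHom ℂ) Int.cast_injective
    rw [← hS, hS0]
    simp
  rcases mul_eq_zero.mp (hT ▸ hT0) with h' | h'
  · exact absurd h' Polynomial.X_ne_zero
  · exact h'

-- ===== generic module lemmas =====

section Mod

variable {A : Type} [Ring A] [Algebra K A] {H : Equiv.Perm (Fin n) → A}
variable {V : Type} [AddCommGroup V] [Module K V]

omit [Algebra K A] in
lemma act_zero (actV : V → A → V)
    (haddr : ∀ (m : V) (a b : A), actV m (a + b) = actV m a + actV m b) (m : V) :
    actV m 0 = 0 := by
  have h := haddr m 0 0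
  rw [add_zero] at h
  exact (left_eq_add.mp h)

lemma act_list (actV : V → A → V) (ξ0 : V)
    (hmulV : ∀ (m : V) (a b : A), actV m (a * b) = actV (actV m a) b)
    (hsmull : ∀ (c : K) (m : V) (a : A), actV (c • m) a = c • actV m a)
    (honeV : ∀ m : V, actV m 1 = m)
    (g : Fin (n - 1) → K) :
    ∀ l : List (Fin (n - 1)), (∀ i ∈ l, actV ξ0 (H (s n i)) = g i • ξ0) →
    actV ξ0 ((l.map fun i => H (s n i)).prod) = (l.map g).prod • ξ0 := by
  intro l
  induction l with
  | nil => intro _; simp [honeV]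
  | cons i t ih =>
    intro hg
    rw [List.map_cons, List.prod_cons, List.map_cons, List.prod_cons, hmulV,
      hg i (List.mem_cons_self), hsmull,
      ih (fun a ha => hg a (List.mem_cons_of_mem i ha)), smul_smul]

lemma act_red (actV : V → A → V) (ξ0 : V)
    (hmulV : ∀ (m : V) (a b : A), actV m (a * b) = actV (actV m a) b)
    (hsmull : ∀ (c : K) (m : V) (a : A), actV (c • m) a = c • actV m a)
    (honeV : ∀ m : V, actV m 1 = m)
    (hone : H 1 = 1)
    (hmul : ∀ (w : Equiv.Perm (Fin n)) (i : Fin (n - 1)),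
      len n (w * s n i) = len n w + 1 → H (w * s n i) = H w * H (s n i))
    (g : Fin (n - 1) → K) {x : Equiv.Perm (Fin n)} {l : List (Fin (n - 1))}
    (hl : wordProd n l = x) (hred : l.length = len n x)
    (hg : ∀ i ∈ l, actV ξ0 (H (s n i)) = g i • ξ0) :
    actV ξ0 (H x) = (l.map g).prod • ξ0 := by
  rw [← hl, H_word hone hmul l (by rw [hl, ← hred]),
    act_list actV ξ0 hmulV hsmull honeV g l hg]

end Mod

-- ===== bar triangularity =====

section BarTri

variable {A : Type} [Ring A] [Algebra K A] {H : Equiv.Perm (Fin n) → A}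

def lowSet (H : Equiv.Perm (Fin n) → A) (c : ℕ) : Set A := {a | ∃ v, len n v < c ∧ a = H v}

lemma low_mono {c c' : ℕ} (h : c ≤ c') :
    Submodule.span K (lowSet H c) ≤ Submodule.span K (lowSet H c') :=
  Submodule.span_mono (fun a ha => by
    obtain ⟨v, hv, he⟩ := ha
    exact ⟨v, by omega, he⟩)

lemma mulS_low (hone : H 1 = 1)
    (hmul : ∀ (w : Equiv.Perm (Fin n)) (i : Fin (n - 1)),
      len n (w * s n i) = len n w + 1 → H (w * s n i) = H w * H (s n i))
    (hquad : ∀ i : Fin (n - 1), H (s n i) * H (s n i) = (q⁻¹ - q) • H (s n i) + 1)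
    (i : Fin (n - 1)) {c : ℕ} {a : A}
    (ha : a ∈ Submodule.span K (lowSet H c)) :
    a * H (s n i) ∈ Submodule.span K (lowSet H (c + 1)) := by
  induction ha using Submodule.span_induction with
  | mem a hmem =>
    obtain ⟨v, hv, rfl⟩ := hmem
    rcases lt_trichotomy (v (fa i)) (v (fb i)) with h | h | h
    · rw [← hmul v i (len_mul_s_lt h)]
      exact Submodule.subset_span ⟨v * s n i, by rw [len_mul_s_lt h]; omega, rfl⟩
    · exact absurd (Equiv.injective _ h) (fa_ne_fb i)
    · rw [H_mul_s_down hone hmul hquad (len_mul_s_gt h)]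
      apply Submodule.add_mem
      · exact Submodule.smul_mem _ _ (Submodule.subset_span ⟨v, by omega, rfl⟩)
      · exact Submodule.subset_span ⟨v * s n i, by have := len_mul_s_gt h; omega, rfl⟩
  | zero => rw [zero_mul]; exact Submodule.zero_mem _
  | add x y _ _ hx hy => rw [add_mul]; exact Submodule.add_mem _ hx hy
  | smul c x _ hx => rw [smul_mul_assoc]; exact Submodule.smul_mem _ _ hx

lemma bar_Hs
    (hquad : ∀ i : Fin (n - 1), H (s n i) * H (s n i) = (q⁻¹ - q) • H (s n i) + 1)
    (bar : A →+* A)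
    (hbarH : ∀ w : Equiv.Perm (Fin n), bar (H w) * H w⁻¹ = 1 ∧ H w⁻¹ * bar (H w) = 1)
    (i : Fin (n - 1)) :
    bar (H (s n i)) = H (s n i) + (q - q⁻¹) • (1 : A) := by
  have h1 : bar (H (s n i)) * H (s n i) = 1 := by
    have := (hbarH (s n i)).1
    rwa [s_inv] at this
  have h3 : (q⁻¹ - q) • H (s n i) + (q - q⁻¹) • H (s n i) = 0 := by
    rw [← add_smul, show (q⁻¹ - q) + (q - q⁻¹) = (0 : K) by ring, zero_smul]
  have h2 : H (s n i) * (H (s n i) + (q - q⁻¹) • 1) = 1 := by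
    rw [mul_add, hquad i, mul_smul_comm, mul_one]
    calc (q⁻¹ - q) • H (s n i) + 1 + (q - q⁻¹) • H (s n i)
        = (q⁻¹ - q) • H (s n i) + (q - q⁻¹) • H (s n i) + 1 := by abel
      _ = 1 := by rw [h3, zero_add]
  calc bar (H (s n i)) = bar (H (s n i)) * (H (s n i) * (H (s n i) + (q - q⁻¹) • 1)) := by
        rw [h2, mul_one]
    _ = (bar (H (s n i)) * H (s n i)) * (H (s n i) + (q - q⁻¹) • 1) := by rw [mul_assoc]
    _ = H (s n i) + (q - q⁻¹) • 1 := by rw [h1, one_mul]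

lemma bar_H_tri (hone : H 1 = 1)
    (hmul : ∀ (w : Equiv.Perm (Fin n)) (i : Fin (n - 1)),
      len n (w * s n i) = len n w + 1 → H (w * s n i) = H w * H (s n i))
    (hquad : ∀ i : Fin (n - 1), H (s n i) * H (s n i) = (q⁻¹ - q) • H (s n i) + 1)
    (bar : A →+* A)
    (hbarH : ∀ w : Equiv.Perm (Fin n), bar (H w) * H w⁻¹ = 1 ∧ H w⁻¹ * bar (H w) = 1) :
    ∀ (k : ℕ) (w : Equiv.Perm (Fin n)), len n w = k →
    bar (H w) - H w ∈ Submodule.span K (lowSet H k) := by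
  intro k
  induction k using Nat.strong_induction_on with
  | _ k ih =>
    intro w hk
    rcases Nat.eq_zero_or_pos k with hk0 | hkpos
    · have hw1 : w = 1 := eq_one_of_len_eq_zero (by omega)
      rw [hw1, hone, map_one, sub_self]
      exact Submodule.zero_mem _
    · obtain ⟨l, hl, hllen⟩ := exists_reduced w
      have hlne : l ≠ [] := by
        intro hc
        rw [hc] at hllen
        simp at hllen
        omega
      set t := l.dropLast with ht
      set i := l.getLast hlne with hi
      have hsplit : t ++ [i] = l := List.dropLast_append_getLast hlne
      set v := wordProd n t with hv
      have hw_eq' : v * s n i = w := by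
        rw [hv, ← wordProd_concat, hsplit, hl]
      have htlen : t.length + 1 = k := by
        have : l.length = t.length + 1 := by
          rw [← hsplit]
          simp
        omega
      have hlen1 : len n v ≤ t.length := len_le_of_word rfl
      have hlen3 : len n (s n i) ≤ 1 := by
        have : wordProd n [i] = s n i := by simp [wordProd]
        simpa using len_le_of_word this
      have hlen4 : len n v = t.length := by
        have h1 := len_mul_le v (s n i)
        rw [hw_eq', hk] at h1
        omega
      have hstep : len n (v * s n i) = len n v + 1 := by
        rw [hw_eq', hk, hlen4]
        omega
      have hw_mul : H w = H v * H (s n i) := by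
        rw [← hw_eq']
        exact hmul v i hstep
      have hE := ih t.length (by omega) v hlen4
      set E := bar (H v) - H v with hEdef
      have hbarv : bar (H v) = H v + E := by rw [hEdef]; abel
      have hexp : bar (H w) - H w =
          (q - q⁻¹) • H v + (E * H (s n i) + (q - q⁻¹) • E) := by
        calc bar (H w) - H w
            = (H v + E) * (H (s n i) + (q - q⁻¹) • 1) - H v * H (s n i) := by
              rw [hw_mul, map_mul, hbarv, bar_Hs hquad bar hbarH i]
          _ = (q - q⁻¹) • H v + (E * H (s n i) + (q - q⁻¹) • E) := by
              rw [add_mul, mul_add, mul_add, mul_smul_comm, mul_smul_comm, mul_one, mul_one]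
              abel
      rw [hexp]
      have hk' : t.length + 1 = k := htlen
      apply Submodule.add_mem
      · exact Submodule.smul_mem _ _ (Submodule.subset_span ⟨v, by omega, rfl⟩)
      · apply Submodule.add_mem
        · have := mulS_low hone hmul hquad i hE
          exact (by rw [← hk']; exact this : E * H (s n i) ∈ Submodule.span K (lowSet H k))
        · exact Submodule.smul_mem _ _ (low_mono (by omega) hE)

end BarTri



lemma len_s (i : Fin (n - 1)) : len n (s n i) = 1 := by
  have h1 : len n (s n i) ≤ 1 := by
    have : wordProd n [i] = s n i := by simp [wordProd]
    simpa using len_le_of_word this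
  have h2 : s n i ≠ 1 := fun h =>
    fa_ne_fb i (by rw [← s_fa i, h, Equiv.Perm.one_apply])
  have h3 : len n (s n i) ≠ 0 := fun h => h2 (eq_one_of_len_eq_zero h)
  omega

lemma short_decomp {Pf Qf P'f : Finset (Fin (n - 1))}
    (hcomm : ∀ i ∈ Pf, ∀ j ∈ Qf, s n i * s n j = s n j * s n i)
    {w : Equiv.Perm (Fin n)} (hw : noLD (P'f ∪ Qf) w) :
    ∃ l u, (∀ i ∈ l, i ∈ Pf) ∧ noLD (Pf ∪ Qf) u ∧ w = wordProd n l * u ∧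
      len n w = l.length + len n u ∧ len n (wordProd n l) = l.length := by
  obtain ⟨l0, u, hl0, hu, hweq, hlen, hred⟩ := decomp_word (Pf ∪ Qf) (len n w) w rfl
  obtain ⟨lP, lQ, hlP, hlQ, hsplit, hcount⟩ := sort_word hcomm l0 hl0
  have h1 : len n (wordProd n lP) ≤ lP.length := len_le_of_word rfl
  have h2 : len n (wordProd n lQ) ≤ lQ.length := len_le_of_word rfl
  have hxQmem : wordProd n lQ ∈ parab n (P'f ∪ Qf) :=
    wordProd_mem_parab (fun j hj => Finset.mem_union_right _ (hlQ j hj))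
  have hshort := (noLD_iff_short.mpr hw) _ (inv_mem hxQmem)
  have hcommx : wordProd n lP * wordProd n lQ = wordProd n lQ * wordProd n lP :=
    parab_commute hcomm _ (wordProd_mem_parab hlP) _ (wordProd_mem_parab hlQ)
  have hkey : (wordProd n lQ)⁻¹ * w = wordProd n lP * u := by
    rw [hweq, hsplit, hcommx]
    group
  have h4 : len n (wordProd n lP * u) ≤ len n (wordProd n lP) + len n u := len_mul_le _ _
  have h5 : len n w ≤ len n ((wordProd n lQ)⁻¹ * w) := hshort
  rw [hkey] at h5
  have hQ0 : lQ.length = 0 := by omega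
  have hlP_red : len n (wordProd n lP) = lP.length := by omega
  have hQ1 : wordProd n lQ = 1 := by
    cases lQ with
    | nil => rfl
    | cons a t => simp at hQ0
  refine ⟨lP, u, hlP, hu, ?_, ?_, hlP_red⟩
  · rw [hweq, hsplit, hQ1, mul_one]
  · omega

lemma prod_map_const {α : Type*} (l : List α) (c : K) :
    (l.map (fun _ => c)).prod = c ^ l.length := by
  induction l with
  | nil => simp
  | cons a t ih => simp [ih, pow_succ, mul_comm]

lemma q_add_inv_ne : (q : K) + q⁻¹ ≠ 0 := by
  intro h
  have h1 : (q : K) * (q + q⁻¹) = q ^ 2 + 1 := by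
    rw [mul_add, mul_inv_cancel₀ q_ne_zero, sq]
  rw [h, mul_zero] at h1
  have h2 : algebraMap (Polynomial ℂ) K (Polynomial.X ^ 2 + 1) = 0 := by
    rw [map_add, map_pow, RatFunc.algebraMap_X, map_one]
    show (q : K) ^ 2 + 1 = 0
    rw [← h1]
  have h3 : (Polynomial.X ^ 2 + 1 : Polynomial ℂ) = 0 :=
    algebraMap_poly_injective (by rw [h2, map_zero])
  have h4 : (Polynomial.X ^ 2 + 1 : Polynomial ℂ) ≠ 0 := by
    have := Polynomial.X_pow_add_C_ne_zero (by norm_num : 0 < 2) (1 : ℂ)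
    rwa [map_one] at this
  exact h4 h3

end S5

open S5 in
set_option maxHeartbeats 1600000 in
set_option synthInstance.maxHeartbeats 400000 in
theorem statement5 (n : ℕ) (A : Type) [Ring A] [Algebra K A]
    (H : Equiv.Perm (Fin n) → A)
    (hHLI : LinearIndependent K H)
    (hHspan : Submodule.span K (Set.range H) = ⊤)
    (hone : H 1 = 1)
    (hmul : ∀ (w : Equiv.Perm (Fin n)) (i : Fin (n - 1)),
      len n (w * s n i) = len n w + 1 → H (w * s n i) = H w * H (s n i))
    (hquad : ∀ i : Fin (n - 1),
      H (s n i) * H (s n i) = (q⁻¹ - q) • H (s n i) + 1)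
    (barK : K →+* K) (hbarKq : barK q = q⁻¹)
    (hbarKc : ∀ z : ℂ, barK (algebraMap ℂ K z) = algebraMap ℂ K z)
    (bar : A →+* A)
    (hbar_smul : ∀ (c : K) (x : A), bar (c • x) = barK c • bar x)
    (hbarH : ∀ w : Equiv.Perm (Fin n),
      bar (H w) * H w⁻¹ = 1 ∧ H w⁻¹ * bar (H w) = 1)
    (P P' Q : Finset (Fin (n - 1)))
    (hPQ : ∀ i ∈ P, ∀ j ∈ Q, s n i * s n j = s n j * s n i)
    (hP'P : P' ⊆ P)
    -- the module M^p_q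
    (M : Type) [AddCommGroup M] [Module K M]
    (act : M → A → M)
    (hact_addlM : ∀ (m m' : M) (a : A), act (m + m') a = act m a + act m' a)
    (hact_addrM : ∀ (m : M) (a b : A), act m (a + b) = act m a + act m b)
    (hact_smullM : ∀ (c : K) (m : M) (a : A), act (c • m) a = c • act m a)
    (hact_smulrM : ∀ (c : K) (m : M) (a : A), act m (c • a) = c • act m a)
    (hact_oneM : ∀ m : M, act m 1 = m)
    (hact_mulM : ∀ (m : M) (a b : A), act m (a * b) = act (act m a) b)
    (N : Equiv.Perm (Fin n) → M)
    (hNM : ∀ w, N w = act (N 1) (H w))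
    (hgenPM : ∀ i ∈ P, act (N 1) (H (s n i)) = (-q) • N 1)
    (hgenQM : ∀ i ∈ Q, act (N 1) (H (s n i)) = q⁻¹ • N 1)
    (hNLIM : LinearIndependent K
      (fun w : {w : Equiv.Perm (Fin n) // IsShort n (P ∪ Q) w} => N w))
    (hNspanM : Submodule.span K (N '' {w | IsShort n (P ∪ Q) w}) = ⊤)
    (barM : M → M)
    (hbar_addM : ∀ m m' : M, barM (m + m') = barM m + barM m')
    (hbar_smulM : ∀ (c : K) (m : M), barM (c • m) = barK c • barM m)
    (hbar_actM : ∀ (m : M) (a : A), barM (act m a) = act (barM m) (bar a))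
    (hbar_oneM : barM (N 1) = N 1)
    -- the module M^{p'}_q
    (M' : Type) [AddCommGroup M'] [Module K M']
    (act' : M' → A → M')
    (hact_addlM' : ∀ (m m' : M') (a : A), act' (m + m') a = act' m a + act' m' a)
    (hact_addrM' : ∀ (m : M') (a b : A), act' m (a + b) = act' m a + act' m b)
    (hact_smullM' : ∀ (c : K) (m : M') (a : A), act' (c • m) a = c • act' m a)
    (hact_smulrM' : ∀ (c : K) (m : M') (a : A), act' m (c • a) = c • act' m a)
    (hact_oneM' : ∀ m : M', act' m 1 = m)
    (hact_mulM' : ∀ (m : M') (a b : A), act' m (a * b) = act' (act' m a) b)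
    (N' : Equiv.Perm (Fin n) → M')
    (hNM' : ∀ w, N' w = act' (N' 1) (H w))
    (hgenPM' : ∀ i ∈ P', act' (N' 1) (H (s n i)) = (-q) • N' 1)
    (hgenQM' : ∀ i ∈ Q, act' (N' 1) (H (s n i)) = q⁻¹ • N' 1)
    (hNLIM' : LinearIndependent K
      (fun w : {w : Equiv.Perm (Fin n) // IsShort n (P' ∪ Q) w} => N' w))
    (hNspanM' : Submodule.span K (N' '' {w | IsShort n (P' ∪ Q) w}) = ⊤)
    (barM' : M' → M')
    (hbar_addM' : ∀ m m' : M', barM' (m + m') = barM' m + barM' m')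
    (hbar_smulM' : ∀ (c : K) (m : M'), barM' (c • m) = barK c • barM' m)
    (hbar_actM' : ∀ (m : M') (a : A), barM' (act' m a) = act' (barM' m) (bar a))
    (hbar_oneM' : barM' (N' 1) = N' 1)
 :
    (∃! z : M' →ₗ[K] M,
      (∀ (m : M') (a : A), z (act' m a) = act (z m) a) ∧ z (N' 1) = N 1) ∧
    (∀ z : M' →ₗ[K] M,
      ((∀ (m : M') (a : A), z (act' m a) = act (z m) a) ∧ z (N' 1) = N 1) →
      (∀ m : M', z (barM' m) = barM (z m)) ∧
      (∀ (C' : Equiv.Perm (Fin n) → M') (C : Equiv.Perm (Fin n) → M),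
        IsCanonBasis n (IsShort n (P' ∪ Q)) N' barM' C' →
        IsCanonBasis n (IsShort n (P ∪ Q)) N barM C →
        ∀ w, IsShort n (P' ∪ Q) w →
          (IsShort n (P ∪ Q) w → z (C' w) = C w) ∧
          (¬ IsShort n (P ∪ Q) w → z (C' w) = 0)) ∧
      (∀ φ : M →ₗ[K] M',
        (∀ w, IsShort n (P ∪ Q) w →
          φ (N w) = ∑ᶠ x ∈ {x : Equiv.Perm (Fin n) |
              x ∈ parab n P ∧ ∀ y ∈ parab n P', len n x ≤ len n (y * x)},
            ((-q) ^ (len n x)) • N' (x * w)) →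
        (Function.Injective φ ∧ ∀ (m : M) (a : A), φ (act m a) = act' (φ m) a) ∧
        ∀ m : M, z (φ m) = (∑ᶠ x ∈ {x : Equiv.Perm (Fin n) |
            x ∈ parab n P ∧ ∀ y ∈ parab n P', len n x ≤ len n (y * x)},
          q ^ (2 * len n x)) • m)) := by
  classical
  have hshort1 : IsShort n (P ∪ Q) 1 := noLD_iff_short.mpr (noLD_one _)
  have hshort1' : IsShort n (P' ∪ Q) 1 := noLD_iff_short.mpr (noLD_one _)
  have hN1ne : N 1 ≠ 0 := by
    have := hNLIM.ne_zero ⟨1, hshort1⟩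
    simpa using this
  have hdisj : ∀ i ∈ P, i ∉ Q := by
    intro i hiP hiQ
    have h1 := hgenPM i hiP
    have h2 := hgenQM i hiQ
    rw [h1] at h2
    have h3 : ((-q) - q⁻¹) • N 1 = 0 := by rw [sub_smul, h2, sub_self]
    rcases smul_eq_zero.mp h3 with h4 | h4
    · refine q_add_inv_ne ?_
      have : (-q - q⁻¹ : K) = -(q + q⁻¹) := by ring
      rw [this] at h4
      exact neg_eq_zero.mp h4
    · exact hN1ne h4
  have hdisj' : ∀ i ∈ P', i ∉ Q := fun i hi => hdisj i (hP'P hi)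
  -- scalar functions
  set gM : Fin (n - 1) → K := fun i => if i ∈ P then (-q) else q⁻¹ with hgM
  set gM' : Fin (n - 1) → K := fun i => if i ∈ P' then (-q) else q⁻¹ with hgM'
  have hgMval : ∀ i ∈ P ∪ Q, act (N 1) (H (s n i)) = gM i • N 1 := by
    intro i hi
    rcases Finset.mem_union.mp hi with h | h
    · rw [hgM]; simp only [h, if_pos]; exact hgenPM i h
    · have hnp : i ∉ P := fun hp => hdisj i hp h
      rw [hgM]; simp only [hnp, if_neg, if_false]; exact hgenQM i h
  have hgM'val : ∀ i ∈ P' ∪ Q, act' (N' 1) (H (s n i)) = gM' i • N' 1 := by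
    intro i hi
    rcases Finset.mem_union.mp hi with h | h
    · rw [hgM']; simp only [h, if_pos]; exact hgenPM' i h
    · by_cases hp : i ∈ P'
      · rw [hgM']; simp only [hp, if_pos]; exact hgenPM' i hp
      · rw [hgM']; simp only [hp, if_neg, if_false]; exact hgenQM' i h
  have hgagree : ∀ i, i ∈ P' ∪ Q → gM i = gM' i := by
    intro i hi
    rcases Finset.mem_union.mp hi with h | h
    · rw [hgM, hgM']; simp [h, hP'P h]
    · have hnp : i ∉ P := fun hp => hdisj i hp h
      have hnp' : i ∉ P' := fun hp => hnp (hP'P hp)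
      rw [hgM, hgM']; simp [hnp, hnp']
  -- basic decomposition of N v in M
  have hNdec : ∀ (J : Finset (Fin (n - 1))) (g : Fin (n - 1) → K)
      (hg : ∀ i ∈ J, act (N 1) (H (s n i)) = g i • N 1)
      (l : List (Fin (n - 1))) (u : Equiv.Perm (Fin n)) (hlJ : ∀ i ∈ l, i ∈ J)
      (hred : len n (wordProd n l) = l.length)
      (hadd : len n (wordProd n l * u) = l.length + len n u),
      N (wordProd n l * u) = (l.map g).prod • N u := by
    intro J g hg l u hlJ hred hadd
    rw [hNM (wordProd n l * u),
      H_mul_add hone hmul (by rw [hadd, hred]), hact_mulM,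
      act_red act (N 1) hact_mulM hact_smullM hact_oneM hone hmul g rfl hred.symm
        (fun i hi => hg i (hlJ i hi)),
      hact_smullM, ← hNM]
  have hNdec' : ∀ (J : Finset (Fin (n - 1))) (g : Fin (n - 1) → K)
      (hg : ∀ i ∈ J, act' (N' 1) (H (s n i)) = g i • N' 1)
      (l : List (Fin (n - 1))) (u : Equiv.Perm (Fin n)) (hlJ : ∀ i ∈ l, i ∈ J)
      (hred : len n (wordProd n l) = l.length)
      (hadd : len n (wordProd n l * u) = l.length + len n u),
      N' (wordProd n l * u) = (l.map g).prod • N' u := by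
    intro J g hg l u hlJ hred hadd
    rw [hNM' (wordProd n l * u),
      H_mul_add hone hmul (by rw [hadd, hred]), hact_mulM',
      act_red act' (N' 1) hact_mulM' hact_smullM' hact_oneM' hone hmul g rfl hred.symm
        (fun i hi => hg i (hlJ i hi)),
      hact_smullM', ← hNM']
  -- bases
  have hrg' : Set.range (fun w : {w // IsShort n (P' ∪ Q) w} => N' ↑w)
      = N' '' {w | IsShort n (P' ∪ Q) w} := by
    ext m
    constructor
    · rintro ⟨⟨w, hw⟩, rfl⟩; exact ⟨w, hw, rfl⟩
    · rintro ⟨w, hw, rfl⟩; exact ⟨⟨w, hw⟩, rfl⟩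
  have hrg : Set.range (fun w : {w // IsShort n (P ∪ Q) w} => N ↑w)
      = N '' {w | IsShort n (P ∪ Q) w} := by
    ext m
    constructor
    · rintro ⟨⟨w, hw⟩, rfl⟩; exact ⟨w, hw, rfl⟩
    · rintro ⟨w, hw, rfl⟩; exact ⟨⟨w, hw⟩, rfl⟩
  let bM' : Module.Basis {w // IsShort n (P' ∪ Q) w} K M' := Module.Basis.mk hNLIM'
    (by rw [hrg', hNspanM'])
  let bM : Module.Basis {w // IsShort n (P ∪ Q) w} K M := Module.Basis.mk hNLIM
    (by rw [hrg, hNspanM])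
  have hbM'apply : ∀ w : {w // IsShort n (P' ∪ Q) w}, bM' w = N' ↑w := fun w =>
    Module.Basis.mk_apply _ _ _
  have hbMapply : ∀ w : {w // IsShort n (P ∪ Q) w}, bM w = N ↑w := fun w =>
    Module.Basis.mk_apply _ _ _
  -- representation lemmas
  have hrepM' : ∀ m : M', ∃ b : A, m = act' (N' 1) b := by
    have hsub : ∀ m ∈ Submodule.span K (N' '' {w | IsShort n (P' ∪ Q) w}),
        ∃ b : A, m = act' (N' 1) b := by
      intro m hm
      induction hm using Submodule.span_induction with
      | mem x hx =>
        obtain ⟨w, _, rfl⟩ := hx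
        exact ⟨H w, hNM' w⟩
      | zero => exact ⟨0, (act_zero act' hact_addrM' _).symm⟩
      | add x y _ _ hx hy =>
        obtain ⟨b1, rfl⟩ := hx
        obtain ⟨b2, rfl⟩ := hy
        exact ⟨b1 + b2, (hact_addrM' _ _ _).symm⟩
      | smul c x _ hx =>
        obtain ⟨b, rfl⟩ := hx
        exact ⟨c • b, (hact_smulrM' _ _ _).symm⟩
    intro m
    exact hsub m (by rw [hNspanM']; trivial)
  have hrepM : ∀ m : M, ∃ b : A, m = act (N 1) b := by
    have hsub : ∀ m ∈ Submodule.span K (N '' {w | IsShort n (P ∪ Q) w}),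
        ∃ b : A, m = act (N 1) b := by
      intro m hm
      induction hm using Submodule.span_induction with
      | mem x hx =>
        obtain ⟨w, _, rfl⟩ := hx
        exact ⟨H w, hNM w⟩
      | zero => exact ⟨0, (act_zero act hact_addrM _).symm⟩
      | add x y _ _ hx hy =>
        obtain ⟨b1, rfl⟩ := hx
        obtain ⟨b2, rfl⟩ := hy
        exact ⟨b1 + b2, (hact_addrM _ _ _).symm⟩
      | smul c x _ hx =>
        obtain ⟨b, rfl⟩ := hx
        exact ⟨c • b, (hact_smulrM _ _ _).symm⟩
    intro m
    exact hsub m (by rw [hNspanM]; trivial)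
  -- construction of z0
  let z0 : M' →ₗ[K] M := bM'.constr K (fun w => N ↑w)
  have hz0short : ∀ (w : Equiv.Perm (Fin n)) (hw : IsShort n (P' ∪ Q) w),
      z0 (N' w) = N w := by
    intro w hw
    have := bM'.constr_basis K (fun w : {w // IsShort n (P' ∪ Q) w} => N ↑w) ⟨w, hw⟩
    rwa [hbM'apply ⟨w, hw⟩] at this
  have hz0all : ∀ v, z0 (N' v) = N v := by
    intro v
    obtain ⟨l, u, hlJ, hu, hveq, hsum, hred⟩ := decomp_word (P' ∪ Q) (len n v) v rfl
    have hadd : len n (wordProd n l * u) = l.length + len n u := by rw [← hveq]; omega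
    have hv1 : N' v = (l.map gM').prod • N' u := by
      rw [hveq]; exact hNdec' (P' ∪ Q) gM' hgM'val l u hlJ hred hadd
    have hv2 : N v = (l.map gM).prod • N u := by
      rw [hveq]
      refine hNdec (P' ∪ Q) gM ?_ l u hlJ hred hadd
      intro i hi
      rcases Finset.mem_union.mp hi with h | h
      · exact hgMval i (Finset.mem_union_left _ (hP'P h))
      · exact hgMval i (Finset.mem_union_right _ h)
    have hgeq : (l.map gM).prod = (l.map gM').prod := by
      congr 1
      exact List.map_congr_left (fun i hi => hgagree i (hlJ i hi))
    rw [hv1, map_smul, hz0short u (noLD_iff_short.mpr hu), hv2, hgeq]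
  have hz0A : ∀ a : A, z0 (act' (N' 1) a) = act (N 1) a := by
    let L1 : A →ₗ[K] M :=
      { toFun := fun a => z0 (act' (N' 1) a)
        map_add' := fun a b => by
          show z0 (act' (N' 1) (a + b)) = z0 (act' (N' 1) a) + z0 (act' (N' 1) b)
          rw [hact_addrM', map_add]
        map_smul' := fun c a => by
          show z0 (act' (N' 1) (c • a)) = c • z0 (act' (N' 1) a)
          rw [hact_smulrM', map_smul] }
    let L2 : A →ₗ[K] M :=
      { toFun := fun a => act (N 1) a
        map_add' := fun a b => hact_addrM _ a b
        map_smul' := fun c a => by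
          show act (N 1) (c • a) = c • act (N 1) a
          exact hact_smulrM c _ a }
    have hLeq : L1 = L2 := by
      apply LinearMap.ext_on hHspan
      rintro x ⟨v, rfl⟩
      show z0 (act' (N' 1) (H v)) = act (N 1) (H v)
      rw [← hNM', ← hNM]
      exact hz0all v
    intro a
    exact DFunLike.congr_fun hLeq a
  have hz0act : ∀ (m : M') (a : A), z0 (act' m a) = act (z0 m) a := by
    intro m a
    obtain ⟨b, rfl⟩ := hrepM' m
    calc z0 (act' (act' (N' 1) b) a) = z0 (act' (N' 1) (b * a)) := by rw [hact_mulM']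
      _ = act (N 1) (b * a) := hz0A _
      _ = act (act (N 1) b) a := hact_mulM _ _ _
      _ = act (z0 (act' (N' 1) b)) a := by rw [hz0A]
  have hz0one : z0 (N' 1) = N 1 := hz0short 1 hshort1'
  constructor
  · refine ⟨z0, ⟨hz0act, hz0one⟩, ?_⟩
    rintro z2 ⟨hz2act, hz2one⟩
    have hz2all : ∀ v, z2 (N' v) = N v := by
      intro v
      rw [hNM' v, hz2act, hz2one, ← hNM]
    apply LinearMap.ext_on hNspanM'
    rintro x ⟨w, _, rfl⟩
    rw [hz2all, hz0all]
  · intro z ⟨hzact, hzone⟩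
    have hzall : ∀ v, z (N' v) = N v := by
      intro v
      rw [hNM' v, hzact, hzone, ← hNM]
    have hzbar : ∀ m : M', z (barM' m) = barM (z m) := by
      intro m
      obtain ⟨b, rfl⟩ := hrepM' m
      calc z (barM' (act' (N' 1) b)) = z (act' (barM' (N' 1)) (bar b)) := by rw [hbar_actM']
        _ = z (act' (N' 1) (bar b)) := by rw [hbar_oneM']
        _ = act (z (N' 1)) (bar b) := hzact _ _
        _ = act (N 1) (bar b) := by rw [hzone]
        _ = act (barM (N 1)) (bar b) := by rw [hbar_oneM]
        _ = barM (act (N 1) b) := (hbar_actM _ _).symm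
        _ = barM (act (z (N' 1)) b) := by rw [hzone]
        _ = barM (z (act' (N' 1) b)) := by rw [hzact]
    -- general decomposition of N v
    have hNdecomp : ∀ v, ∃ (cv : K) (uv : Equiv.Perm (Fin n)), IsShort n (P ∪ Q) uv ∧
        len n uv ≤ len n v ∧ N v = cv • N uv := by
      intro v
      obtain ⟨l, u, hlJ, hu, hveq, hsum, hred⟩ := decomp_word (P ∪ Q) (len n v) v rfl
      refine ⟨(l.map gM).prod, u, noLD_iff_short.mpr hu, by omega, ?_⟩
      rw [hveq]
      exact hNdec (P ∪ Q) gM hgMval l u hlJ hred (by rw [← hveq]; omega)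
    -- refined decomposition for noLD (P'∪Q) elements
    have hNdecompP : ∀ w', noLD (P' ∪ Q) w' → ∃ (e : ℕ) (u : Equiv.Perm (Fin n)),
        noLD (P ∪ Q) u ∧ len n u + e = len n w' ∧ N w' = ((-q) ^ e) • N u ∧
        (e = 0 → w' = u) := by
      intro w' hw'
      obtain ⟨l, u, hlP, hu, heq, hsum, hred⟩ := short_decomp hPQ hw'
      refine ⟨l.length, u, hu, by omega, ?_, ?_⟩
      · have h1 : N w' = (l.map gM).prod • N u := by
          rw [heq]
          exact hNdec P gM (fun i hi => hgMval i (Finset.mem_union_left _ hi)) l u hlP hred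
            (by rw [← heq]; omega)
        rw [h1]
        congr 1
        rw [List.map_congr_left (fun i hi => show gM i = -q by
          rw [hgM]; simp [hlP i hi]), prod_map_const]
      · intro he
        rw [heq, List.length_eq_zero_iff.mp he, wordProd_nil, one_mul]
    have hdecP' : ∀ w' : Equiv.Perm (Fin n), ∃ (e : ℕ) (u : Equiv.Perm (Fin n)),
        IsShort n (P ∪ Q) u ∧ (noLD (P' ∪ Q) w' → N w' = ((-q) ^ e) • N u) := by
      intro w'
      by_cases h : noLD (P' ∪ Q) w'
      · obtain ⟨e, u, hu, _, hN, _⟩ := hNdecompP w' h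
        exact ⟨e, u, noLD_iff_short.mpr hu, fun _ => hN⟩
      · exact ⟨0, 1, hshort1, fun hc => absurd hc h⟩
    choose eF uF huF hNF using hdecP'
    -- Good pieces
    have hGoodPiece : ∀ T : Equiv.Perm (Fin n) → Polynomial ℤ,
        (∀ w', T w' ≠ 0 → noLD (P' ∪ Q) w') →
        ∃ c : Equiv.Perm (Fin n) → Polynomial ℤ,
          (∀ u, ¬ IsShort n (P ∪ Q) u → c u = 0) ∧
          ∑ w' : Equiv.Perm (Fin n), (q * Polynomial.aeval q (T w')) • N w'
            = ∑ u : Equiv.Perm (Fin n), (q * Polynomial.aeval q (c u)) • N u := by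
      intro T hT
      refine ⟨fun v => ∑ w' ∈ Finset.univ.filter (fun w' => uF w' = v),
        T w' * (-Polynomial.X) ^ (eF w'), ?_, ?_⟩
      · intro v hv
        apply Finset.sum_eq_zero
        intro w' hw'
        rw [Finset.mem_filter] at hw'
        exact False.elim (hv (hw'.2 ▸ huF w'))
      · have hterm : ∀ w' : Equiv.Perm (Fin n),
            (q * Polynomial.aeval q (T w')) • N w'
              = (q * Polynomial.aeval q (T w' * (-Polynomial.X) ^ (eF w'))) • N (uF w') := by
          intro w'
          by_cases h0 : T w' = 0
          · rw [h0]; simp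
          · have hnl := hT w' h0
            rw [hNF w' hnl, smul_smul]
            congr 1
            rw [map_mul, map_pow, map_neg, Polynomial.aeval_X]
            ring
        rw [Finset.sum_congr rfl (fun w' _ => hterm w'),
          ← Finset.sum_fiberwise Finset.univ uF
            (fun w' => (q * Polynomial.aeval q (T w' * (-Polynomial.X) ^ (eF w'))) • N (uF w'))]
        apply Finset.sum_congr rfl
        intro v _
        rw [Finset.sum_congr rfl (fun w' hw' => by
          rw [(Finset.mem_filter.mp hw').2]),
          ← Finset.sum_smul, ← Finset.mul_sum, ← map_sum]
    have hGoodN : ∀ w, noLD (P' ∪ Q) w → ¬ IsShort n (P ∪ Q) w →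
        ∃ c : Equiv.Perm (Fin n) → Polynomial ℤ,
          (∀ u, ¬ IsShort n (P ∪ Q) u → c u = 0) ∧
          N w = ∑ u : Equiv.Perm (Fin n), (q * Polynomial.aeval q (c u)) • N u := by
      intro w hw hws
      obtain ⟨e, u, hu, hlen, hNw, he0⟩ := hNdecompP w hw
      have hushort : IsShort n (P ∪ Q) u := noLD_iff_short.mpr hu
      have hene : e ≠ 0 := by
        intro h
        rw [he0 h] at hws
        exact hws hushort
      refine ⟨fun v => if v = u then (-1) ^ e * Polynomial.X ^ (e - 1) else 0,
        fun v hv => if_neg (fun hc => hv (by rw [hc]; exact hushort)), ?_⟩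
      rw [Finset.sum_eq_single_of_mem u (Finset.mem_univ u)
        (fun v _ hv => by simp only [if_neg hv]; simp)]
      simp only [eq_self_iff_true, if_true]
      rw [hNw]
      congr 1
      rw [map_mul, map_pow, map_pow, map_neg, map_one, Polynomial.aeval_X]
      have hqe : (q : K) ^ e = q * q ^ (e - 1) := by
        conv_lhs => rw [show e = (e - 1) + 1 by omega]
        rw [pow_succ']
      rw [neg_pow, hqe]
      ring
    -- bar of finite sums in M
    have hbarM0 : barM (0 : M) = 0 := by
      have h := hbar_addM 0 0
      rw [add_zero] at h
      exact (left_eq_add.mp h)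
    have hbar_negM : ∀ m : M, barM (-m) = - barM m := by
      intro m
      have h2 : barM (-m) + barM m = 0 := by rw [← hbar_addM, neg_add_cancel, hbarM0]
      exact eq_neg_of_add_eq_zero_left h2
    have hbar_subM : ∀ a b : M, barM (a - b) = barM a - barM b := by
      intro a b
      rw [sub_eq_add_neg, hbar_addM, hbar_negM, sub_eq_add_neg]
    have hbar_finsum : ∀ (t : Finset (Equiv.Perm (Fin n))) (g : Equiv.Perm (Fin n) → M),
        barM (∑ u ∈ t, g u) = ∑ u ∈ t, barM (g u) := by
      intro t g
      induction t using Finset.induction_on with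
      | empty => simpa using hbarM0
      | insert _ _ hnotmem ih =>
        rw [Finset.sum_insert hnotmem, hbar_addM, ih, Finset.sum_insert hnotmem]
    -- the key uniqueness statement
    have hU1 : ∀ c : Equiv.Perm (Fin n) → Polynomial ℤ,
        (∀ u, ¬ IsShort n (P ∪ Q) u → c u = 0) →
        barM (∑ u : Equiv.Perm (Fin n), (q * Polynomial.aeval q (c u)) • N u)
          = ∑ u : Equiv.Perm (Fin n), (q * Polynomial.aeval q (c u)) • N u →
        ∀ u, c u = 0 := by
      intro c hsupp hbarfix
      by_contra hcon
      push_neg at hcon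
      obtain ⟨u1, hu1⟩ := hcon
      set S := Finset.univ.filter (fun u : Equiv.Perm (Fin n) => c u ≠ 0) with hSdef
      have hSne : S.Nonempty := ⟨u1, by simp [hSdef, hu1]⟩
      obtain ⟨u0, hu0S, hu0max⟩ := S.exists_max_image (fun u => len n u) hSne
      have hu0ne : c u0 ≠ 0 := by
        rw [hSdef] at hu0S
        simpa using hu0S
      have hu0short : IsShort n (P ∪ Q) u0 := by
        by_contra h
        exact hu0ne (hsupp u0 h)
      set f : M →ₗ[K] K := bM.coord ⟨u0, hu0short⟩ with hfdef
      have hfN : ∀ (u) (hu : IsShort n (P ∪ Q) u), f (N u) = if u = u0 then 1 else 0 := by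
        intro u hu
        rw [← hbMapply ⟨u, hu⟩, hfdef, Module.Basis.coord_apply, Module.Basis.repr_self]
        rw [Finsupp.single_apply]
        by_cases h : u = u0
        · rw [if_pos (by exact Subtype.ext h), if_pos h]
        · rw [if_neg (fun hc => h (congrArg Subtype.val hc)), if_neg h]
      have hflow : ∀ v, len n v < len n u0 → f (N v) = 0 := by
        intro v hv
        obtain ⟨cv, uv, huv, hluv, hNv⟩ := hNdecomp v
        rw [hNv, map_smul, hfN uv huv, if_neg (fun h => by rw [h] at hluv; omega), smul_zero]
      have hfbar : ∀ (u : Equiv.Perm (Fin n)), IsShort n (P ∪ Q) u → len n u ≤ len n u0 →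
          f (barM (N u)) = if u = u0 then 1 else 0 := by
        intro u hu hlenu
        have htri := bar_H_tri hone hmul hquad bar hbarH (len n u) u rfl
        have hsplitb : barM (N u) = N u + act (N 1) (bar (H u) - H u) := by
          have h1 : barM (N u) = act (N 1) (bar (H u)) := by
            rw [hNM u, hbar_actM, hbar_oneM]
          rw [h1]
          calc act (N 1) (bar (H u)) = act (N 1) (H u + (bar (H u) - H u)) := by
                congr 1
                abel
            _ = N u + act (N 1) (bar (H u) - H u) := by rw [hact_addrM, ← hNM]
        have hmem : bar (H u) - H u ∈ Submodule.span K (lowSet H (len n u0)) :=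
          low_mono hlenu htri
        have hzero : ∀ a ∈ Submodule.span K (lowSet H (len n u0)),
            f (act (N 1) a) = 0 := by
          intro a ha
          induction ha using Submodule.span_induction with
          | mem a ha0 =>
            obtain ⟨v, hv, rfl⟩ := ha0
            rw [← hNM v]
            exact hflow v hv
          | zero => rw [act_zero act hact_addrM, map_zero]
          | add x y _ _ hx hy => rw [hact_addrM, map_add, hx, hy, add_zero]
          | smul d x _ hx => rw [hact_smulrM, map_smul, hx, smul_zero]
        rw [hsplitb, map_add, hfN u hu, hzero _ hmem, add_zero]
      have hfm : f (∑ u : Equiv.Perm (Fin n), (q * Polynomial.aeval q (c u)) • N u)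
          = q * Polynomial.aeval q (c u0) := by
        rw [map_sum, Finset.sum_eq_single u0]
        · rw [map_smul, hfN u0 hu0short, if_pos rfl, smul_eq_mul, mul_one]
        · intro u _ hu
          by_cases hcu : c u = 0
          · simp [hcu]
          · have hushort : IsShort n (P ∪ Q) u := by
              by_contra h; exact hcu (hsupp u h)
            rw [map_smul, hfN u hushort, if_neg hu, smul_zero]
        · intro h; exact absurd (Finset.mem_univ u0) h
      have hfbarm : f (barM (∑ u : Equiv.Perm (Fin n), (q * Polynomial.aeval q (c u)) • N u))
          = barK (q * Polynomial.aeval q (c u0)) := by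
        rw [hbar_finsum, Finset.sum_congr rfl
          (fun u _ => hbar_smulM (q * Polynomial.aeval q (c u)) (N u)), map_sum,
          Finset.sum_eq_single u0]
        · rw [map_smul, hfbar u0 hu0short le_rfl, if_pos rfl, smul_eq_mul, mul_one]
        · intro u _ hu
          by_cases hcu : c u = 0
          · simp [hcu]
          · have hushort : IsShort n (P ∪ Q) u := by
              by_contra h; exact hcu (hsupp u h)
            have hlenu : len n u ≤ len n u0 := hu0max u (by simp [hSdef, hcu])
            rw [map_smul, hfbar u hushort hlenu, if_neg hu, smul_zero]
        · intro h; exact absurd (Finset.mem_univ u0) h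
      have heqc : barK (q * Polynomial.aeval q (c u0)) = q * Polynomial.aeval q (c u0) := by
        rw [← hfbarm, hbarfix, hfm]
      have hrig : Polynomial.aeval (q : K) (Polynomial.X * c u0)
          = Polynomial.aeval (q⁻¹ : K) (Polynomial.X * c u0) := by
        rw [map_mul, map_mul, Polynomial.aeval_X, Polynomial.aeval_X]
        rw [← heqc, map_mul, hbarKq, barK_aeval barK hbarKq]
      exact hu0ne (rigidZ (c u0) hrig)
    refine ⟨hzbar, ?_, ?_⟩
    · intro C' C hC' hC w hw
      obtain ⟨hbar', R', hR'supp, hC'w⟩ := hC' w hw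
      have hR'short : ∀ w', R' w' ≠ 0 → noLD (P' ∪ Q) w' := by
        intro w' h
        by_contra hnl
        exact h (hR'supp w' (fun hc => hnl (noLD_iff_short.mp hc.1)))
      have hzC' : z (C' w) = N w
          + ∑ w' : Equiv.Perm (Fin n), (q * Polynomial.aeval q (R' w')) • N w' := by
        rw [hC'w, map_add, hzall w, map_sum]
        congr 1
        apply Finset.sum_congr rfl
        intro w' _
        rw [map_smul, hzall]
      have hzC'bar : barM (z (C' w)) = z (C' w) := by rw [← hzbar, hbar']
      obtain ⟨c1, hc1supp, hc1eq⟩ := hGoodPiece R' hR'short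
      constructor
      · intro hws
        obtain ⟨hbarC, R, hRsupp, hCw⟩ := hC w hws
        have hRshort : ∀ w', R w' ≠ 0 → noLD (P' ∪ Q) w' := by
          intro w' h
          by_contra hnl
          refine h (hRsupp w' (fun hc => hnl ?_))
          exact noLD_mono (fun i hi => by
            rcases Finset.mem_union.mp hi with h' | h'
            · exact Finset.mem_union_left _ (hP'P h')
            · exact Finset.mem_union_right _ h') (noLD_iff_short.mp hc.1)
        obtain ⟨c2, hc2supp, hc2eq⟩ := hGoodPiece R hRshort
        have hEeq : z (C' w) - C w
            = ∑ u : Equiv.Perm (Fin n), (q * Polynomial.aeval q ((c1 - c2) u)) • N u := by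
          rw [hzC', hCw, hc1eq, hc2eq]
          rw [show ∀ x y1 y2 : M, x + y1 - (x + y2) = y1 - y2 from fun x y1 y2 => by abel]
          rw [← Finset.sum_sub_distrib]
          apply Finset.sum_congr rfl
          intro u _
          rw [← sub_smul]
          congr 1
          rw [Pi.sub_apply, map_sub, mul_sub]
        have hEbar : barM (z (C' w) - C w) = z (C' w) - C w := by
          rw [hbar_subM, hzC'bar, hbarC]
        have hall := hU1 (c1 - c2) (fun u hu => by
          rw [Pi.sub_apply, hc1supp u hu, hc2supp u hu, sub_zero]) (by rw [← hEeq, hEbar, hEeq])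
        have hE0 : z (C' w) - C w = 0 := by
          rw [hEeq, Finset.sum_eq_zero]
          intro u _
          rw [hall u]
          simp
        exact sub_eq_zero.mp hE0
      · intro hws
        obtain ⟨c0, hc0supp, hc0eq⟩ := hGoodN w (noLD_iff_short.mp hw) hws
        have hzeq : z (C' w)
            = ∑ u : Equiv.Perm (Fin n), (q * Polynomial.aeval q ((c0 + c1) u)) • N u := by
          rw [hzC', hc0eq, hc1eq, ← Finset.sum_add_distrib]
          apply Finset.sum_congr rfl
          intro u _
          rw [← add_smul]
          congr 1
          rw [Pi.add_apply, map_add, mul_add]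
        have hall := hU1 (c0 + c1) (fun u hu => by
          rw [Pi.add_apply, hc0supp u hu, hc1supp u hu, add_zero]) (by rw [← hzeq, hzC'bar, hzeq])
        rw [hzeq, Finset.sum_eq_zero]
        intro u _
        rw [hall u]
        simp
    · intro φ hφ
      -- the distinguished finite set of coset representatives
      set DF : Finset (Equiv.Perm (Fin n)) := Finset.univ.filter
        (fun x => x ∈ parab n P ∧ ∀ y ∈ parab n P', len n x ≤ len n (y * x)) with hDFdef
      have hDFmem : ∀ x, x ∈ DF ↔ x ∈ parab n P ∧ IsShort n P' x := by
        intro x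
        rw [hDFdef, Finset.mem_filter]
        constructor
        · rintro ⟨-, h1, h2⟩; exact ⟨h1, h2⟩
        · rintro ⟨h1, h2⟩; exact ⟨Finset.mem_univ _, h1, h2⟩
      have hDset : {x : Equiv.Perm (Fin n) | x ∈ parab n P ∧
          ∀ y ∈ parab n P', len n x ≤ len n (y * x)} = ↑DF := by
        ext x
        rw [Set.mem_setOf_eq, hDFdef, Finset.coe_filter]
        simp
      have h1DF : (1 : Equiv.Perm (Fin n)) ∈ DF := by
        rw [hDFmem]
        refine ⟨one_mem _, fun y hy => ?_⟩
        rw [mul_one, len_one]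
        exact Nat.zero_le _
      have hfinsum : ∀ w, (∑ᶠ x ∈ {x : Equiv.Perm (Fin n) | x ∈ parab n P ∧
            ∀ y ∈ parab n P', len n x ≤ len n (y * x)}, ((-q) ^ (len n x)) • N' (x * w))
          = ∑ x ∈ DF, ((-q) ^ (len n x)) • N' (x * w) := by
        intro w
        rw [hDset, finsum_mem_coe_finset]
      have hact'z : ∀ a : A, act' (0 : M') a = 0 := by
        intro a
        have h := hact_addlM' 0 0 a
        rw [add_zero] at h
        exact left_eq_add.mp h
      have hact'sum : ∀ (t : Finset (Equiv.Perm (Fin n))) (g : Equiv.Perm (Fin n) → M') (a : A),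
          act' (∑ x ∈ t, g x) a = ∑ x ∈ t, act' (g x) a := by
        intro t g a
        induction t using Finset.induction_on with
        | empty => simpa using hact'z a
        | insert _ _ hnm ih => rw [Finset.sum_insert hnm, hact_addlM', ih, Finset.sum_insert hnm]
      set ξ : M' := ∑ x ∈ DF, ((-q) ^ (len n x)) • N' x with hξdef
      have hactNx : ∀ x ∈ parab n P, act (N 1) (H x) = ((-q) ^ (len n x)) • N 1 := by
        intro x hx
        obtain ⟨l, hlP, hlw, hllen⟩ := parab_word (len n x) x rfl hx
        rw [act_red act (N 1) hact_mulM hact_smullM hact_oneM hone hmul gM hlw hllen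
          (fun i hi => hgMval i (Finset.mem_union_left _ (hlP i hi)))]
        congr 1
        rw [List.map_congr_left (fun i hi => show gM i = -q by rw [hgM]; simp [hlP i hi]),
          prod_map_const, hllen]
      have hlenadd : ∀ x ∈ parab n P, ∀ w, IsShort n (P ∪ Q) w →
          len n (x * w) = len n x + len n w := by
        intro x hx w hw
        exact len_parab_add (len n x) rfl hx
          (noLD_mono (fun i hi => Finset.mem_union_left _ hi) (noLD_iff_short.mp hw))
      have hss : ∀ (i : Fin (n - 1)) (y : Equiv.Perm (Fin n)), (y * s n i) * s n i = y := by
        intro i y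
        rw [mul_assoc, s_mul_self, mul_one]
      -- action of P-generators on ξ
      have hxiP : ∀ i ∈ P, act' ξ (H (s n i)) = (-q) • ξ := by
        intro i hiP
        have hdichot : ∀ x : Equiv.Perm (Fin n), len n (x * s n i) = len n x + 1 ∨
            len n x = len n (x * s n i) + 1 := by
          intro x
          rcases lt_trichotomy (x (fa i)) (x (fb i)) with h | h | h
          · exact Or.inl (len_mul_s_lt h)
          · exact absurd (Equiv.injective _ h) (fa_ne_fb i)
          · exact Or.inr (len_mul_s_gt h)
        have hval_bad : ∀ x ∈ DF, x * s n i ∉ DF →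
            act' (N' x) (H (s n i)) = (-q) • N' x := by
          intro x hx hxs
          obtain ⟨hxp, hxshort⟩ := (hDFmem x).mp hx
          have hxsp : x * s n i ∈ parab n P := mul_mem hxp (s_mem_parab hiP)
          have hxsns : ¬ noLD P' (x * s n i) := by
            intro hc
            exact hxs ((hDFmem _).mpr ⟨hxsp, noLD_iff_short.mpr hc⟩)
          obtain ⟨j, hjP', hj1, hj2⟩ := deodhar (noLD_iff_short.mp hxshort) hxsns
          have heq := deodhar_eq hj1 hj2
          have hup : len n (x * s n i) = len n x + 1 := by
            apply len_mul_s_lt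
            have e1 : x (fa i) = fa j := by rw [← hj1, perm_apply_inv_self]
            have e2 : x (fb i) = fb j := by rw [← hj2, perm_apply_inv_self]
            rw [e1, e2]
            exact fa_lt_fb j
          have hsj : len n (s n j * x) = len n (s n j) + len n x := by
            rw [← heq, hup, len_s]
            omega
          calc act' (N' x) (H (s n i))
              = act' (N' 1) (H x * H (s n i)) := by rw [hNM' x, hact_mulM']
            _ = act' (N' 1) (H (s n j) * H x) := by
                rw [← hmul x i hup, heq, H_mul_add hone hmul hsj]
            _ = act' (act' (N' 1) (H (s n j))) (H x) := by rw [hact_mulM']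
            _ = (-q) • N' x := by rw [hgenPM' j hjP', hact_smullM', ← hNM']
        have hval_up : ∀ x, len n (x * s n i) = len n x + 1 →
            act' (N' x) (H (s n i)) = N' (x * s n i) := by
          intro x hup
          rw [hNM' x, ← hact_mulM', ← hmul x i hup, ← hNM']
        have hval_dn : ∀ x, len n x = len n (x * s n i) + 1 →
            act' (N' x) (H (s n i)) = (q⁻¹ - q) • N' x + N' (x * s n i) := by
          intro x hdn
          rw [hNM' x, ← hact_mulM', H_mul_s_down hone hmul hquad hdn, hact_addrM',
            hact_smulrM', ← hNM', ← hNM']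
        set Dgood := DF.filter (fun x => x * s n i ∈ DF) with hDgood
        set Dbad := DF.filter (fun x => ¬ (x * s n i ∈ DF)) with hDbad
        set Dup := Dgood.filter (fun x => len n (x * s n i) = len n x + 1) with hDup
        set Ddn := Dgood.filter (fun x => ¬ (len n (x * s n i) = len n x + 1)) with hDdn
        have hbij : ∀ g : Equiv.Perm (Fin n) → M',
            ∑ y ∈ Ddn, g y = ∑ x ∈ Dup, g (x * s n i) := by
          intro g
          apply Finset.sum_bij' (fun y _ => y * s n i) (fun x _ => x * s n i)
          · intro y hy
            rw [hDdn, Finset.mem_filter, hDgood, Finset.mem_filter] at hy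
            obtain ⟨⟨hyDF, hysDF⟩, hnup⟩ := hy
            have hdn : len n y = len n (y * s n i) + 1 := (hdichot y).resolve_left hnup
            rw [hDup, Finset.mem_filter, hDgood, Finset.mem_filter]
            refine ⟨⟨hysDF, by rw [hss]; exact hyDF⟩, by rw [hss]; omega⟩
          · intro x hx
            rw [hDup, Finset.mem_filter, hDgood, Finset.mem_filter] at hx
            obtain ⟨⟨hxDF, hxsDF⟩, hup⟩ := hx
            rw [hDdn, Finset.mem_filter, hDgood, Finset.mem_filter]
            refine ⟨⟨hxsDF, by rw [hss]; exact hxDF⟩, fun hc => by rw [hss] at hc; omega⟩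
          · intro y _
            exact hss i y
          · intro x _
            exact hss i x
          · intro y _
            rw [hss]
        have hpair : ∀ x ∈ Dup,
            ((-q) ^ (len n x)) • act' (N' x) (H (s n i))
              + ((-q) ^ (len n (x * s n i))) • act' (N' (x * s n i)) (H (s n i))
            = (-q) • (((-q) ^ (len n x)) • N' x)
              + (-q) • (((-q) ^ (len n (x * s n i))) • N' (x * s n i)) := by
          intro x hx
          rw [hDup, Finset.mem_filter] at hx
          obtain ⟨-, hup⟩ := hx
          have hdnxs : len n (x * s n i) = len n ((x * s n i) * s n i) + 1 := by
            rw [hss]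
            omega
          rw [hval_up x hup, hval_dn (x * s n i) hdnxs, hss, hup]
          have hscal : (-q : K) ^ (len n x) + (-q) ^ (len n x + 1) * (q⁻¹ - q)
              = (-q) * (-q) ^ (len n x + 1) := by
            have hq := q_ne_zero
            field_simp
            ring
          rw [smul_add, smul_smul ((-q : K) ^ (len n x + 1)), ← add_assoc, ← add_smul, hscal,
            smul_smul, smul_smul]
          rw [add_comm]
          congr 1
          · congr 1
            ring
        have hsum1 : act' ξ (H (s n i))
            = ∑ x ∈ DF, ((-q) ^ (len n x)) • act' (N' x) (H (s n i)) := by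
          rw [hξdef, hact'sum]
          apply Finset.sum_congr rfl
          intro x _
          rw [hact_smullM']
        have hsplitF : ∀ g : Equiv.Perm (Fin n) → M',
            ∑ x ∈ DF, g x = (∑ x ∈ Dup, g x + ∑ x ∈ Ddn, g x) + ∑ x ∈ Dbad, g x := by
          intro g
          rw [hDup, hDdn, Finset.sum_filter_add_sum_filter_not Dgood _ g,
            hDgood, hDbad, Finset.sum_filter_add_sum_filter_not DF _ g]
        rw [hsum1, hsplitF]
        have hgoal2 : ξ = (∑ x ∈ Dup, ((-q) ^ (len n x)) • N' x
            + ∑ x ∈ Ddn, ((-q) ^ (len n x)) • N' x)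
            + ∑ x ∈ Dbad, ((-q) ^ (len n x)) • N' x := by
          rw [hξdef, hsplitF]
        rw [hgoal2, smul_add, smul_add]
        congr 1
        · -- good part
          rw [hbij (fun y => ((-q) ^ (len n y)) • act' (N' y) (H (s n i))),
            ← Finset.sum_add_distrib]
          rw [Finset.sum_congr rfl hpair, Finset.sum_add_distrib]
          rw [← Finset.smul_sum, ← Finset.smul_sum, ← smul_add, ← smul_add]
          congr 1
          congr 1
          rw [hbij (fun y => ((-q) ^ (len n y)) • N' y)]
        · -- bad part
          rw [Finset.smul_sum]
          apply Finset.sum_congr rfl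
          intro x hx
          rw [hDbad, Finset.mem_filter] at hx
          rw [hval_bad x hx.1 hx.2, smul_smul, smul_smul, mul_comm]
      have hxiQ : ∀ j ∈ Q, act' ξ (H (s n j)) = q⁻¹ • ξ := by
        intro j hjQ
        have hptwise : ∀ x ∈ DF, act' (N' x) (H (s n j)) = q⁻¹ • N' x := by
          intro x hx
          obtain ⟨hxp, -⟩ := (hDFmem x).mp hx
          have hcomm : x * s n j = s n j * x :=
            parab_commute hPQ x hxp (s n j) (s_mem_parab hjQ)
          have hnd : x (fa j) < x (fb j) := by
            rcases lt_trichotomy (x (fa j)) (x (fb j)) with h | h | h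
            · exact h
            · exact absurd (Equiv.injective _ h) (fa_ne_fb j)
            · exact absurd (descent_mem_right hxp h) (fun hc => hdisj j hc hjQ)
          have hup := len_mul_s_lt hnd
          have hsx : len n (s n j * x) = len n (s n j) + len n x := by
            rw [← hcomm, hup, len_s]
            omega
          calc act' (N' x) (H (s n j)) = act' (N' 1) (H x * H (s n j)) := by
                rw [hNM' x, hact_mulM']
            _ = act' (N' 1) (H (s n j) * H x) := by
                rw [← hmul x j hup, hcomm, H_mul_add hone hmul hsx]
            _ = q⁻¹ • N' x := by
                rw [hact_mulM', hgenQM' j hjQ, hact_smullM', ← hNM']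
        rw [hξdef, hact'sum, Finset.smul_sum]
        apply Finset.sum_congr rfl
        intro x hx
        rw [hact_smullM', hptwise x hx, smul_smul, smul_smul, mul_comm]
      have hξg : ∀ i ∈ P ∪ Q, act' ξ (H (s n i)) = gM i • ξ := by
        intro i hi
        rcases Finset.mem_union.mp hi with h | h
        · rw [hgM]
          simp only [h, if_pos]
          exact hxiP i h
        · have hnp : i ∉ P := fun hp => hdisj i hp h
          rw [hgM]
          simp only [hnp, if_neg, if_false]
          exact hxiQ i h
      have hφbasis : ∀ w, IsShort n (P ∪ Q) w → φ (N w) = act' ξ (H w) := by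
        intro w hw
        rw [hφ w hw, hfinsum w, hξdef, hact'sum]
        apply Finset.sum_congr rfl
        intro x hx
        obtain ⟨hxp, -⟩ := (hDFmem x).mp hx
        rw [hact_smullM']
        congr 1
        rw [hNM' x, ← hact_mulM', ← H_mul_add hone hmul (by rw [hlenadd x hxp w hw]), ← hNM']
      have hφall : ∀ v, φ (N v) = act' ξ (H v) := by
        intro v
        obtain ⟨l, u, hlJ, hu, hveq, hsum, hred⟩ := decomp_word (P ∪ Q) (len n v) v rfl
        have hadd : len n (wordProd n l * u) = l.length + len n u := by rw [← hveq]; omega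
        have h1 : N v = (l.map gM).prod • N u := by
          rw [hveq]
          exact hNdec (P ∪ Q) gM hgMval l u hlJ hred hadd
        have h2 : act' ξ (H v) = (l.map gM).prod • act' ξ (H u) := by
          rw [hveq, H_mul_add hone hmul (by rw [hadd, hred]), hact_mulM',
            act_red act' ξ hact_mulM' hact_smullM' hact_oneM' hone hmul gM rfl hred.symm
              (fun i hi => hξg i (hlJ i hi)), hact_smullM']
        rw [h1, map_smul, h2, hφbasis u (noLD_iff_short.mpr hu)]
      have hφA : ∀ a : A, φ (act (N 1) a) = act' ξ a := by
        let L1 : A →ₗ[K] M' :=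
          { toFun := fun a => φ (act (N 1) a)
            map_add' := fun a b => by
              show φ (act (N 1) (a + b)) = φ (act (N 1) a) + φ (act (N 1) b)
              rw [hact_addrM, map_add]
            map_smul' := fun c a => by
              show φ (act (N 1) (c • a)) = c • φ (act (N 1) a)
              rw [hact_smulrM, map_smul] }
        let L2 : A →ₗ[K] M' :=
          { toFun := fun a => act' ξ a
            map_add' := fun a b => hact_addrM' _ a b
            map_smul' := fun c a => by
              show act' ξ (c • a) = c • act' ξ a
              exact hact_smulrM' c _ a }
        have hLeq : L1 = L2 := by
          apply LinearMap.ext_on hHspan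
          rintro x ⟨v, rfl⟩
          show φ (act (N 1) (H v)) = act' ξ (H v)
          rw [← hNM]
          exact hφall v
        intro a
        exact DFunLike.congr_fun hLeq a
      have hφact : ∀ (m : M) (a : A), φ (act m a) = act' (φ m) a := by
        intro m a
        obtain ⟨b, rfl⟩ := hrepM m
        calc φ (act (act (N 1) b) a) = φ (act (N 1) (b * a)) := by rw [hact_mulM]
          _ = act' ξ (b * a) := hφA _
          _ = act' (act' ξ b) a := hact_mulM' _ _ _
          _ = act' (φ (act (N 1) b)) a := by rw [hφA]
      have hSceq : (∑ᶠ x ∈ {x : Equiv.Perm (Fin n) | x ∈ parab n P ∧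
            ∀ y ∈ parab n P', len n x ≤ len n (y * x)}, (q : K) ^ (2 * len n x))
          = ∑ x ∈ DF, (q : K) ^ (2 * len n x) := by
        rw [hDset, finsum_mem_coe_finset]
      have hzφN : ∀ w, IsShort n (P ∪ Q) w →
          z (φ (N w)) = (∑ x ∈ DF, (q : K) ^ (2 * len n x)) • N w := by
        intro w hw
        rw [hφ w hw, hfinsum w, map_sum, Finset.sum_smul]
        apply Finset.sum_congr rfl
        intro x hx
        obtain ⟨hxp, -⟩ := (hDFmem x).mp hx
        rw [map_smul, hzall]
        have hNxw : N (x * w) = ((-q) ^ (len n x)) • N w := by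
          rw [hNM (x * w), H_mul_add hone hmul (by rw [hlenadd x hxp w hw]),
            hact_mulM, hactNx x hxp, hact_smullM, ← hNM]
        rw [hNxw, smul_smul]
        congr 1
        rw [← pow_add, show len n x + len n x = 2 * len n x by omega, neg_pow, pow_mul,
          neg_one_sq, one_pow, one_mul]
      have hzφ : ∀ m : M, z (φ m) = (∑ x ∈ DF, (q : K) ^ (2 * len n x)) • m := by
        have hLeq : z.comp φ = (∑ x ∈ DF, (q : K) ^ (2 * len n x)) • LinearMap.id := by
          apply LinearMap.ext_on hNspanM
          rintro x ⟨w, hw, rfl⟩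
          show z (φ (N w)) = _
          rw [hzφN w hw]
          rfl
        intro m
        exact DFunLike.congr_fun hLeq m
      have hScne : (∑ x ∈ DF, (q : K) ^ (2 * len n x)) ≠ 0 := by
        have h1 : (∑ x ∈ DF, (q : K) ^ (2 * len n x))
            = algebraMap (Polynomial ℂ) K (∑ x ∈ DF, Polynomial.X ^ (2 * len n x)) := by
          rw [map_sum]
          apply Finset.sum_congr rfl
          intro x _
          rw [map_pow, RatFunc.algebraMap_X]
          rfl
        rw [h1]
        intro hc
        have h2 : (∑ x ∈ DF, (Polynomial.X : Polynomial ℂ) ^ (2 * len n x)) = 0 :=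
          algebraMap_poly_injective (by rw [hc, map_zero])
        have h3 := congrArg (Polynomial.eval 1) h2
        rw [Polynomial.eval_zero, Polynomial.eval_finset_sum] at h3
        rw [Finset.sum_congr rfl (fun x _ => by
          rw [Polynomial.eval_pow, Polynomial.eval_X, one_pow]), Finset.sum_const,
          nsmul_eq_mul, mul_one] at h3
        have hcard : DF.card = 0 := by exact_mod_cast h3
        rw [Finset.card_eq_zero] at hcard
        rw [hcard] at h1DF
        simp at h1DF
      refine ⟨⟨?_, hφact⟩, ?_⟩
      · have hker : ∀ m, φ m = 0 → m = 0 := by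
          intro m hm
          have h := hzφ m
          rw [hm, map_zero] at h
          rcases smul_eq_zero.mp h.symm with h' | h'
          · exact absurd h' hScne
          · exact h'
        intro a b hab
        have h1 : φ (a - b) = 0 := by rw [map_sub, hab, sub_self]
        exact sub_eq_zero.mp (hker _ h1)
      · intro m
        rw [hSceq, hzφ m]
end
end

section
/- For all X, Y ∈ M^p_q one has (Ψ(X), Ψ(Y))_{(1,...,1)} = [k]_0!·⟨X, Y⟩, where Ψ : M^p_q → (V^{⊗n})_k is the map N_w ↦ v_{η_min·w} and ⟨·,·⟩ is the bilinear form on M^p_q for which the standard basis {N_w : w ∈ W^{p+q}} is orthonormal. -/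
open scoped Classical

set_option maxHeartbeats 1000000
set_option synthInstance.maxHeartbeats 200000

noncomputable section

/-- The quantum integer `[k] = (q^k - q^{-k})/(q - q^{-1})`. -/
noncomputable def qnum (k : ℕ) : K := (q ^ k - q⁻¹ ^ k) / (q - q⁻¹)

/-- The quantum factorial `[k]! = [k][k-1]⋯[1]`. -/
noncomputable def qfact : ℕ → K
  | 0 => 1
  | k + 1 => qnum (k + 1) * qfact k

/-- The underlying vector space of `V(a_1) ⊗ ⋯ ⊗ V(a_n)`, with standard basis indexed by
sequences `η ∈ {0,1}^n`. -/
abbrev V (n : ℕ) : Type := (Fin n → Fin 2) → K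

/-- The standard basis vector `v_η`. -/
noncomputable def eb {n : ℕ} (η : Fin n → Fin 2) : V n := fun γ => if γ = η then 1 else 0

/-- The number of `1`s in `γ` strictly before position `i` (the Koszul sign exponent). -/
def onesBefore {n : ℕ} (γ : Fin n → Fin 2) (i : Fin n) : ℕ :=
  (Finset.univ.filter (fun k => k < i ∧ γ k = 1)).card

/-- The action of `E` on `V(a_1) ⊗ ⋯ ⊗ V(a_n)` (via the iterated comultiplication
`Δ(E) = E ⊗ K⁻¹ + 1 ⊗ E`, with the Koszul sign rule). -/
noncomputable def Eop (a : ℕ → ℕ) (n : ℕ) : Module.End K (V n) where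
  toFun f := fun γ => ∑ i : Fin n,
    if γ i = 0 then
      ((-1 : K) ^ onesBefore γ i) * qnum (a i)
        * q ^ (-((∑ j ∈ Finset.univ.filter (fun j => i < j), a j : ℕ) : ℤ))
        * f (Function.update γ i 1)
    else 0
  map_add' f g := by
    funext γ
    simp only [Pi.add_apply, ← Finset.sum_add_distrib]
    refine Finset.sum_congr rfl fun i _ => ?_
    split_ifs <;> ring
  map_smul' c f := by
    funext γ
    simp only [Pi.smul_apply, smul_eq_mul, RingHom.id_apply, Finset.mul_sum]
    refine Finset.sum_congr rfl fun i _ => ?_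
    split_ifs <;> ring

/-- The action of `F` on `V(a_1) ⊗ ⋯ ⊗ V(a_n)` (via the iterated comultiplication
`Δ(F) = F ⊗ 1 + K ⊗ F`, with the Koszul sign rule). -/
noncomputable def Fop (a : ℕ → ℕ) (n : ℕ) : Module.End K (V n) where
  toFun f := fun γ => ∑ i : Fin n,
    if γ i = 1 then
      ((-1 : K) ^ onesBefore γ i)
        * q ^ (∑ j ∈ Finset.univ.filter (fun j => j < i), a j)
        * f (Function.update γ i 0)
    else 0
  map_add' f g := by
    funext γ
    simp only [Pi.add_apply, ← Finset.sum_add_distrib]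
    refine Finset.sum_congr rfl fun i _ => ?_
    split_ifs <;> ring
  map_smul' c f := by
    funext γ
    simp only [Pi.smul_apply, smul_eq_mul, RingHom.id_apply, Finset.mul_sum]
    refine Finset.sum_congr rfl fun i _ => ?_
    split_ifs <;> ring

/-- The action of `q^h` for `h = c·h₁ + d·h₂` on `V(a_1) ⊗ ⋯ ⊗ V(a_n)`:
the basis vector `v^{a_i}_0` has weight `a_i ε₁` and `v^{a_i}_1` has weight
`(a_i - 1) ε₁ + ε₂`. -/
noncomputable def Kop (a : ℕ → ℕ) (n : ℕ) (c d : ℤ) : Module.End K (V n) where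
  toFun f := fun γ =>
    q ^ (∑ i : Fin n, (if γ i = 0 then c * (a i : ℤ) else c * ((a i : ℤ) - 1) + d)) * f γ
  map_add' f g := by
    funext γ
    simp only [Pi.add_apply]
    ring
  map_smul' c' f := by
    funext γ
    simp only [Pi.smul_apply, smul_eq_mul, RingHom.id_apply]
    ring

/-- The endomorphism `Ȟ_i` of `V^{⊗n}` (acting on the `i`-th and `(i+1)`-st tensor
factors, 0-based). -/
noncomputable def Hop (n : ℕ) (i : ℕ) (hi : i + 1 < n) : Module.End K (V n) where
  toFun f := fun γ =>
    if γ ⟨i, by omega⟩ = 0 ∧ γ ⟨i + 1, hi⟩ = 0 then q⁻¹ * f γ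
    else if γ ⟨i, by omega⟩ = 1 ∧ γ ⟨i + 1, hi⟩ = 1 then (-q) * f γ
    else if γ ⟨i, by omega⟩ = 0 ∧ γ ⟨i + 1, hi⟩ = 1 then
      f (fun k => γ (Equiv.swap ⟨i, by omega⟩ ⟨i + 1, hi⟩ k))
    else (q⁻¹ - q) * f γ + f (fun k => γ (Equiv.swap ⟨i, by omega⟩ ⟨i + 1, hi⟩ k))
  map_add' f g := by
    funext γ
    simp only [Pi.add_apply]
    split_ifs <;> ring
  map_smul' c f := by
    funext γ
    simp only [Pi.smul_apply, smul_eq_mul, RingHom.id_apply]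
    split_ifs <;> ring

/-- The constant sequence `(1,1,…)`: all tensor factors are the vector representation. -/
def one' : ℕ → ℕ := fun _ => 1

/-- The indices of the simple reflections generating `W_q = ⟨s_1,…,s_{k-1}⟩` (0-based). -/
def Qset (n k : ℕ) : Finset (Fin (n - 1)) :=
  Finset.univ.filter (fun i => (i : ℕ) + 1 < k)

/-- The indices of the simple reflections generating `W_p = ⟨s_{k+1},…,s_{n-1}⟩` (0-based). -/
def Pset (n k : ℕ) : Finset (Fin (n - 1)) :=
  Finset.univ.filter (fun i => k ≤ (i : ℕ))

/-- The minimal `{0,1}`-sequence `η_min = (0,…,0,1,…,1)` with `k` zeros. -/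
def etaMin (n k : ℕ) : Fin n → Fin 2 := fun i => if (i : ℕ) < k then 0 else 1

/-- The weight space `(V^{⊗n})_k`: the span of the standard basis vectors `v_η` with
exactly `k` entries of `η` equal to `0`. -/
noncomputable def weightSpace (n k : ℕ) : Submodule K (V n) :=
  Submodule.span K (eb '' {η : Fin n → Fin 2 | (Finset.univ.filter (fun i => η i = 0)).card = k})

/-- `β^η_j = a_j - η_j`. -/
def betaE (a : ℕ → ℕ) {m : ℕ} (η : Fin m → Fin 2) (i : Fin m) : ℕ := a i - (η i : ℕ)

/-- The diagonal coefficient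
`q^{Σ_{i≠j} β^η_i β^η_j}·[β^η_1+⋯+β^η_m]!/([β^η_1]!⋯[β^η_m]!)` of the bilinear form
(the sum in the exponent is over the unordered pairs `i ≠ j`). -/
noncomputable def formCoeff (a : ℕ → ℕ) (m : ℕ) (η : Fin m → Fin 2) : K :=
  q ^ (∑ p ∈ (Finset.univ ×ˢ Finset.univ).filter (fun p : Fin m × Fin m => p.1 < p.2),
        betaE a η p.1 * betaE a η p.2)
    * qfact (∑ i, betaE a η i) / ∏ i, qfact (betaE a η i)

/-- The symmetric bilinear form `(·,·)_a` on `V(a)`, for which the standard basis is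
orthogonal with `(v^a_η, v^a_η)_a = formCoeff a m η`. -/
noncomputable def Bform (a : ℕ → ℕ) (m : ℕ) (f g : V m) : K :=
  ∑ η : Fin m → Fin 2, formCoeff a m η * f η * g η

/-- The rescaled quantum factorial `[k]₀! = q^{k(k-1)/2}·[k]!`. -/
noncomputable def qfact0 (k : ℕ) : K := q ^ (k * (k - 1) / 2) * qfact k

/-! ### Auxiliary lemmas -/

namespace Stmt11Aux

/-- The set of inversions of a permutation. -/
def invSet {n : ℕ} (w : Equiv.Perm (Fin n)) : Finset (Fin n × Fin n) :=
  Finset.univ.filter (fun p => p.1 < p.2 ∧ w p.2 < w p.1)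

/-- The number of inversions. -/
def inv' {n : ℕ} (w : Equiv.Perm (Fin n)) : ℕ := (invSet w).card

lemma invSet_one {n : ℕ} : invSet (1 : Equiv.Perm (Fin n)) = ∅ := by
  ext p
  simp only [invSet, Finset.mem_filter, Finset.mem_univ, true_and, Finset.notMem_empty,
    iff_false]
  simp only [Equiv.Perm.coe_one, id_eq]
  rintro ⟨h1, h2⟩
  exact absurd h2 h1.asymm

lemma inv'_one {n : ℕ} : inv' (1 : Equiv.Perm (Fin n)) = 0 := by
  simp [inv', invSet_one]

lemma swap_lt_iff {n : ℕ} {a b c d : Fin n} (hab : (a : ℕ) + 1 = (b : ℕ))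
    (h1 : ¬(c = a ∧ d = b)) (h2 : ¬(c = b ∧ d = a)) :
    (Equiv.swap a b c < Equiv.swap a b d) ↔ c < d := by
  simp only [Equiv.swap_apply_def]
  simp only [not_and] at h1 h2
  simp only [Fin.ext_iff, Fin.lt_def] at *
  split_ifs <;> omega

lemma invSet_swap_asc {n : ℕ} (w : Equiv.Perm (Fin n)) {a b : Fin n}
    (hab : (a : ℕ) + 1 = (b : ℕ)) (h : w⁻¹ a < w⁻¹ b) :
    invSet (Equiv.swap a b * w) = insert (w⁻¹ a, w⁻¹ b) (invSet w) ∧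
      (w⁻¹ a, w⁻¹ b) ∉ invSet w := by
  have hab' : a < b := by rw [Fin.lt_def]; omega
  constructor
  · ext p
    simp only [invSet, Finset.mem_filter, Finset.mem_univ, true_and, Finset.mem_insert]
    simp only [Equiv.Perm.mul_apply]
    constructor
    · rintro ⟨hp, hv⟩
      by_cases hpr : p = (w⁻¹ a, w⁻¹ b)
      · exact Or.inl hpr
      · refine Or.inr ⟨hp, ?_⟩
        rw [← swap_lt_iff hab ?_ ?_]
        · exact hv
        · rintro ⟨u1, u2⟩
          have e2 : p.2 = w⁻¹ a := by rw [← u1, Equiv.Perm.coe_inv, Equiv.symm_apply_apply]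
          have e1 : p.1 = w⁻¹ b := by rw [← u2, Equiv.Perm.coe_inv, Equiv.symm_apply_apply]
          rw [e1, e2] at hp
          exact absurd hp h.asymm
        · rintro ⟨u1, u2⟩
          have e2 : p.2 = w⁻¹ b := by rw [← u1, Equiv.Perm.coe_inv, Equiv.symm_apply_apply]
          have e1 : p.1 = w⁻¹ a := by rw [← u2, Equiv.Perm.coe_inv, Equiv.symm_apply_apply]
          exact hpr (Prod.ext e1 e2)
    · rintro (rfl | ⟨hp, hv⟩)
      · refine ⟨h, ?_⟩
        simp only [Equiv.Perm.coe_inv, Equiv.apply_symm_apply, Equiv.swap_apply_left, Equiv.swap_apply_right]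
        exact hab'
      · refine ⟨hp, ?_⟩
        rw [swap_lt_iff hab ?_ ?_]
        · exact hv
        · rintro ⟨u1, u2⟩
          have e2 : p.2 = w⁻¹ a := by rw [← u1, Equiv.Perm.coe_inv, Equiv.symm_apply_apply]
          have e1 : p.1 = w⁻¹ b := by rw [← u2, Equiv.Perm.coe_inv, Equiv.symm_apply_apply]
          rw [e1, e2] at hp
          exact absurd hp h.asymm
        · rintro ⟨u1, u2⟩
          rw [u1, u2] at hv
          exact absurd hv hab'.asymm
  · simp only [invSet, Finset.mem_filter, Finset.mem_univ, true_and, not_and,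
      Equiv.Perm.coe_inv, Equiv.apply_symm_apply]
    intro _
    exact hab'.asymm

lemma invSet_swap_desc {n : ℕ} (w : Equiv.Perm (Fin n)) {a b : Fin n}
    (hab : (a : ℕ) + 1 = (b : ℕ)) (h : w⁻¹ b < w⁻¹ a) :
    invSet (Equiv.swap a b * w) = (invSet w).erase (w⁻¹ b, w⁻¹ a) ∧
      (w⁻¹ b, w⁻¹ a) ∈ invSet w := by
  set w' := Equiv.swap a b * w with hw'
  have h1 : w'⁻¹ a = w⁻¹ b := by
    simp [hw', mul_inv_rev, Equiv.swap_inv, Equiv.Perm.mul_apply, Equiv.swap_apply_left]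
  have h2 : w'⁻¹ b = w⁻¹ a := by
    simp [hw', mul_inv_rev, Equiv.swap_inv, Equiv.Perm.mul_apply, Equiv.swap_apply_right]
  have hasc := invSet_swap_asc w' hab (by rw [h1, h2]; exact h)
  have hww : Equiv.swap a b * w' = w := by rw [hw', ← mul_assoc, Equiv.swap_mul_self, one_mul]
  rw [hww, h1, h2] at hasc
  refine ⟨?_, ?_⟩
  · rw [hasc.1, Finset.erase_insert hasc.2]
  · rw [hasc.1]; exact Finset.mem_insert_self _ _

lemma inv'_swap_asc {n : ℕ} (w : Equiv.Perm (Fin n)) {a b : Fin n}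
    (hab : (a : ℕ) + 1 = (b : ℕ)) (h : w⁻¹ a < w⁻¹ b) :
    inv' (Equiv.swap a b * w) = inv' w + 1 := by
  obtain ⟨h1, h2⟩ := invSet_swap_asc w hab h
  rw [inv', h1, Finset.card_insert_of_notMem h2, inv']

lemma inv'_swap_desc {n : ℕ} (w : Equiv.Perm (Fin n)) {a b : Fin n}
    (hab : (a : ℕ) + 1 = (b : ℕ)) (h : w⁻¹ b < w⁻¹ a) :
    inv' (Equiv.swap a b * w) = inv' w - 1 ∧ 1 ≤ inv' w := by
  obtain ⟨h1, h2⟩ := invSet_swap_desc w hab h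
  constructor
  · rw [inv', h1, Finset.card_erase_of_mem h2, inv']
  · exact Finset.card_pos.mpr ⟨_, h2⟩

lemma s_eq_swap {n : ℕ} (i : Fin (n - 1)) (hi : (i : ℕ) + 1 < n) :
    s n i = Equiv.swap (⟨(i : ℕ), by omega⟩ : Fin n) ⟨(i : ℕ) + 1, hi⟩ := rfl

lemma inv'_s_mul_le {n : ℕ} (i : Fin (n - 1)) (w : Equiv.Perm (Fin n)) :
    inv' (s n i * w) ≤ inv' w + 1 := by
  have hi : (i : ℕ) + 1 < n := by have := i.isLt; omega
  set a : Fin n := ⟨(i : ℕ), by omega⟩ with ha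
  set b : Fin n := ⟨(i : ℕ) + 1, hi⟩ with hb
  have hab : (a : ℕ) + 1 = (b : ℕ) := rfl
  rw [show s n i = Equiv.swap a b from rfl]
  have hne : w⁻¹ a ≠ w⁻¹ b := by
    intro hcon
    have := w⁻¹.injective hcon
    simp [ha, hb, Fin.ext_iff] at this
  rcases lt_or_gt_of_ne hne with hlt | hgt
  · rw [inv'_swap_asc w hab hlt]
  · have := inv'_swap_desc w hab hgt
    omega

lemma wordProd_cons {n : ℕ} (i : Fin (n - 1)) (l : List (Fin (n - 1))) :
    wordProd n (i :: l) = s n i * wordProd n l := by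
  simp [wordProd]

lemma inv'_wordProd_le {n : ℕ} (l : List (Fin (n - 1))) :
    inv' (wordProd n l) ≤ l.length := by
  induction l with
  | nil => simp [wordProd, inv'_one]
  | cons i l ih =>
    rw [wordProd_cons]
    calc inv' (s n i * wordProd n l) ≤ inv' (wordProd n l) + 1 := inv'_s_mul_le i _
    _ ≤ l.length + 1 := by omega

lemma strictMono_of_consec {m : ℕ} {α : Type*} [Preorder α] {f : Fin m → α}
    (h : ∀ v (hv : v + 1 < m), f ⟨v, by omega⟩ < f ⟨v + 1, hv⟩) : StrictMono f := by
  have key : ∀ b (hb : b < m) a (ha : a < m), a < b → f ⟨a, ha⟩ < f ⟨b, hb⟩ := by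
    intro b
    induction b with
    | zero => omega
    | succ b ihb =>
      intro hb a ha hab
      rcases Nat.lt_or_ge a b with h' | h'
      · exact lt_trans (ihb (by omega) a ha h') (h b hb)
      · have : a = b := by omega
        subst this
        exact h a hb
  intro i j hij
  have := key (j : ℕ) j.isLt (i : ℕ) i.isLt hij
  simpa using this

lemma exists_word {n : ℕ} (w : Equiv.Perm (Fin n)) :
    ∃ l : List (Fin (n - 1)), l.length = inv' w ∧ wordProd n l = w := by
  have H : ∀ m (w : Equiv.Perm (Fin n)), inv' w = m →
      ∃ l : List (Fin (n - 1)), l.length = inv' w ∧ wordProd n l = w := by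
    intro m
    induction m using Nat.strong_induction_on with
    | _ m ih =>
      intro w hw
      by_cases hdesc : ∃ v : ℕ, ∃ hv : v + 1 < n, w⁻¹ ⟨v + 1, hv⟩ < w⁻¹ ⟨v, by omega⟩
      · obtain ⟨v, hv, hlt⟩ := hdesc
        set a : Fin n := ⟨v, by omega⟩ with ha
        set b : Fin n := ⟨v + 1, hv⟩ with hb
        have hab : (a : ℕ) + 1 = (b : ℕ) := rfl
        obtain ⟨hcard, hpos⟩ := inv'_swap_desc w hab hlt
        have hm : inv' (Equiv.swap a b * w) < m := by omega
        obtain ⟨l, hl, hprod⟩ := ih _ hm (Equiv.swap a b * w) rfl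
        refine ⟨(⟨v, by omega⟩ : Fin (n - 1)) :: l, ?_, ?_⟩
        · simp only [List.length_cons, hl, hcard]
          omega
        · rw [wordProd_cons, hprod, s_eq_swap _ hv, ← mul_assoc, Equiv.swap_mul_self, one_mul]
      · push_neg at hdesc
        have hmono : StrictMono (fun u : Fin n => w⁻¹ u) := by
          apply strictMono_of_consec
          intro v hv
          have h1 := hdesc v hv
          have hne : w⁻¹ (⟨v, by omega⟩ : Fin n) ≠ w⁻¹ ⟨v + 1, hv⟩ := by
            intro hcon
            have := w⁻¹.injective hcon
            simp [Fin.ext_iff] at this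
          exact lt_of_le_of_ne h1 hne
        have hrange : Set.range (fun u : Fin n => w⁻¹ u) = Set.range (id : Fin n → Fin n) := by
          rw [Set.range_id]
          exact Set.range_eq_univ.mpr w⁻¹.surjective
        have hid : (fun u : Fin n => w⁻¹ u) = (id : Fin n → Fin n) :=
          (@StrictMono.range_inj (Fin n) (Fin n) _ _ Finite.to_wellFoundedLT _ _
            hmono strictMono_id).mp hrange
        have hw1 : w = 1 := by
          have : w⁻¹ = 1 := by
            apply Equiv.ext
            intro u
            exact congrFun hid u
          rw [← inv_inv w, this, inv_one]
        refine ⟨[], ?_, ?_⟩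
        · simp [hw1, inv'_one]
        · simp [wordProd, hw1]
  exact H (inv' w) w rfl

lemma len_eq_inv' {n : ℕ} (w : Equiv.Perm (Fin n)) : len n w = inv' w := by
  obtain ⟨l, hl, hw⟩ := exists_word w
  apply le_antisymm
  · exact Nat.sInf_le ⟨l, hl, hw⟩
  · have hne : {k | ∃ l : List (Fin (n - 1)), l.length = k ∧ wordProd n l = w}.Nonempty :=
      ⟨inv' w, l, hl, hw⟩
    obtain ⟨l0, hl0, hw0⟩ := Nat.sInf_mem hne
    calc inv' w = inv' (wordProd n l0) := by rw [hw0]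
    _ ≤ l0.length := inv'_wordProd_le _
    _ = len n w := hl0

lemma short_asc {n k : ℕ} (hk : k ≤ n) {w : Equiv.Perm (Fin n)}
    (hs : IsShort n (Pset n k ∪ Qset n k) w)
    (v : ℕ) (hv : v + 1 < n) (hblock : v + 1 < k ∨ k ≤ v) :
    w⁻¹ ⟨v, by omega⟩ < w⁻¹ ⟨v + 1, hv⟩ := by
  by_contra hcon
  set a : Fin n := ⟨v, by omega⟩ with ha
  set b : Fin n := ⟨v + 1, hv⟩ with hb
  have hab : (a : ℕ) + 1 = (b : ℕ) := rfl
  have hne : w⁻¹ b ≠ w⁻¹ a := by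
    intro h
    have := w⁻¹.injective h
    simp [ha, hb, Fin.ext_iff] at this
  have hlt : w⁻¹ b < w⁻¹ a := lt_of_le_of_ne (not_lt.mp hcon) hne
  obtain ⟨hcard, hpos⟩ := inv'_swap_desc w hab hlt
  set i : Fin (n - 1) := ⟨v, by omega⟩ with hi
  have hmem : i ∈ Pset n k ∪ Qset n k := by
    rcases hblock with h | h
    · exact Finset.mem_union_right _ (by simp [Qset, hi]; omega)
    · exact Finset.mem_union_left _ (by simp [Pset, hi]; omega)
  have hpar : s n i ∈ parab n (Pset n k ∪ Qset n k) :=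
    Subgroup.subset_closure ⟨i, hmem, rfl⟩
  have hle := hs _ hpar
  rw [len_eq_inv', len_eq_inv'] at hle
  have hseq : s n i * w = Equiv.swap a b * w := by rw [s_eq_swap i hv]
  rw [hseq, hcard] at hle
  omega

lemma etaMin_eq_zero_iff {n k : ℕ} (j : Fin n) : etaMin n k j = 0 ↔ (j : ℕ) < k := by
  unfold etaMin
  split_ifs with h
  · simp [h]
  · simp [h]

lemma short_eq {n k : ℕ} (hk : k ≤ n) {w w' : Equiv.Perm (Fin n)}
    (hs : IsShort n (Pset n k ∪ Qset n k) w) (hs' : IsShort n (Pset n k ∪ Qset n k) w')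
    (heta : ∀ i, etaMin n k (w i) = etaMin n k (w' i)) : w = w' := by
  have hiff : ∀ j : Fin n, (w j : ℕ) < k ↔ (w' j : ℕ) < k := by
    intro j
    rw [← etaMin_eq_zero_iff (k := k) (w j), ← etaMin_eq_zero_iff (k := k) (w' j), heta j]
  -- the increasing enumerations of the two fibers
  have main : ∀ u : Equiv.Perm (Fin n), IsShort n (Pset n k ∪ Qset n k) u →
      (StrictMono (fun v : Fin k => u⁻¹ ⟨(v : ℕ), by omega⟩) ∧
       StrictMono (fun v : Fin (n - k) => u⁻¹ ⟨k + (v : ℕ), by omega⟩) ∧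
       Set.range (fun v : Fin k => u⁻¹ ⟨(v : ℕ), by omega⟩) = {j : Fin n | (u j : ℕ) < k} ∧
       Set.range (fun v : Fin (n - k) => u⁻¹ ⟨k + (v : ℕ), by omega⟩) =
         {j : Fin n | k ≤ (u j : ℕ)}) := by
    intro u hu
    refine ⟨?_, ?_, ?_, ?_⟩
    · apply strictMono_of_consec
      intro v hv
      exact short_asc hk hu v (by omega) (Or.inl (by omega))
    · apply strictMono_of_consec
      intro v hv
      exact short_asc hk hu (k + v) (by omega) (Or.inr (by omega))
    · ext j
      constructor
      · rintro ⟨v, rfl⟩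
        simp only [Set.mem_setOf_eq, Equiv.Perm.coe_inv, Equiv.apply_symm_apply]
        exact v.isLt
      · intro hj
        simp only [Set.mem_setOf_eq] at hj
        refine ⟨⟨(u j : ℕ), hj⟩, ?_⟩
        simp only
        rw [show (⟨((⟨(u j : ℕ), hj⟩ : Fin k) : ℕ), by omega⟩ : Fin n) = u j from Fin.ext rfl,
          Equiv.Perm.coe_inv, Equiv.symm_apply_apply]
    · ext j
      constructor
      · rintro ⟨v, rfl⟩
        simp only [Set.mem_setOf_eq, Equiv.Perm.coe_inv, Equiv.apply_symm_apply]
        omega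
      · intro hj
        simp only [Set.mem_setOf_eq] at hj
        refine ⟨⟨(u j : ℕ) - k, by omega⟩, ?_⟩
        simp only
        rw [show (⟨k + (((⟨(u j : ℕ) - k, by omega⟩ : Fin (n - k))) : ℕ), by omega⟩ : Fin n)
            = u j from Fin.ext (by simp; omega), Equiv.Perm.coe_inv, Equiv.symm_apply_apply]
  obtain ⟨hf, hg, hrf, hrg⟩ := main w hs
  obtain ⟨hf', hg', hrf', hrg'⟩ := main w' hs'
  have hsetf : {j : Fin n | (w j : ℕ) < k} = {j : Fin n | (w' j : ℕ) < k} := by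
    ext j; exact hiff j
  have hsetg : {j : Fin n | k ≤ (w j : ℕ)} = {j : Fin n | k ≤ (w' j : ℕ)} := by
    ext j
    simp only [Set.mem_setOf_eq, not_lt.symm]
    exact not_congr (hiff j)
  have hfeq : (fun v : Fin k => w⁻¹ (⟨(v : ℕ), by omega⟩ : Fin n)) =
      (fun v : Fin k => w'⁻¹ (⟨(v : ℕ), by omega⟩ : Fin n)) :=
    (@StrictMono.range_inj (Fin k) (Fin n) _ _ Finite.to_wellFoundedLT _ _ hf hf').mp
      (by rw [hrf, hrf', hsetf])
  have hgeq : (fun v : Fin (n - k) => w⁻¹ (⟨k + (v : ℕ), by omega⟩ : Fin n)) =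
      (fun v : Fin (n - k) => w'⁻¹ (⟨k + (v : ℕ), by omega⟩ : Fin n)) :=
    (@StrictMono.range_inj (Fin (n - k)) (Fin n) _ _ Finite.to_wellFoundedLT _ _ hg hg').mp
      (by rw [hrg, hrg', hsetg])
  have hinv : w⁻¹ = w'⁻¹ := by
    apply Equiv.ext
    intro u
    rcases Nat.lt_or_ge (u : ℕ) k with h | h
    · have := congrFun hfeq ⟨(u : ℕ), h⟩
      simpa [Fin.eta] using this
    · have := congrFun hgeq ⟨(u : ℕ) - k, by omega⟩
      simp only at this
      rwa [show (⟨k + ((⟨(u : ℕ) - k, by omega⟩ : Fin (n - k)) : ℕ), by omega⟩ : Fin n) = u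
        from Fin.ext (by simp; omega)] at this
  rw [← inv_inv w, hinv, inv_inv]

lemma q_ne_zero : (q : K) ≠ 0 := RatFunc.X_ne_zero

lemma q_sub_inv_ne : q - q⁻¹ ≠ 0 := by
  intro h
  rw [sub_eq_zero] at h
  have h2 : q * q = 1 := by
    nth_rewrite 1 [h]
    exact inv_mul_cancel₀ q_ne_zero
  have h3 : (Polynomial.X * Polynomial.X : Polynomial ℂ) = 1 := by
    apply RatFunc.algebraMap_injective ℂ
    rw [map_mul, map_one, RatFunc.algebraMap_X]
    exact h2
  have h4 := congrArg (Polynomial.eval (2 : ℂ)) h3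
  simp only [Polynomial.eval_mul, Polynomial.eval_X, Polynomial.eval_one] at h4
  norm_num at h4

lemma qnum_one : qnum 1 = 1 := by
  unfold qnum
  rw [pow_one, pow_one]
  exact div_self q_sub_inv_ne

lemma qfact_one : qfact 1 = 1 := by
  show qnum 1 * qfact 0 = 1
  rw [qnum_one, one_mul]
  rfl

lemma betaE_one' {m : ℕ} (η : Fin m → Fin 2) (i : Fin m) :
    betaE one' η i = if η i = 0 then 1 else 0 := by
  unfold betaE one'
  by_cases h : η i = 0
  · rw [if_pos h]
    simp [h]
  · rw [if_neg h]
    have h1 : (η i : ℕ) = 1 := by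
      have h2 := (η i).isLt
      have h0 : (η i : ℕ) ≠ 0 := fun hc => h (Fin.ext hc)
      omega
    simp [h1]

lemma card_lt_filter {n k : ℕ} (hk : k ≤ n) :
    (Finset.univ.filter (fun j : Fin n => (j : ℕ) < k)).card = k := by
  have : Finset.univ.filter (fun j : Fin n => (j : ℕ) < k)
      = Finset.map (Fin.castLEEmb hk) Finset.univ := by
    ext j
    simp only [Finset.mem_filter, Finset.mem_univ, true_and, Finset.mem_map]
    constructor
    · intro hj
      exact ⟨⟨(j : ℕ), hj⟩, Fin.ext rfl⟩
    · rintro ⟨a, -, rfl⟩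
      exact a.isLt
  rw [this, Finset.card_map, Finset.card_univ, Fintype.card_fin]

lemma etaMin_card {n k : ℕ} (hk : k ≤ n) (w : Equiv.Perm (Fin n)) :
    (Finset.univ.filter (fun i => etaMin n k (w i) = 0)).card = k := by
  have h1 : (Finset.univ.filter (fun i => etaMin n k (w i) = 0)).card
      = (Finset.univ.filter (fun j : Fin n => (j : ℕ) < k)).card := by
    apply Finset.card_bij (fun i _ => w i)
    · intro a ha
      simp only [Finset.mem_filter, Finset.mem_univ, true_and] at ha ⊢
      rwa [← etaMin_eq_zero_iff]
    · intro a _ b _ hab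
      exact w.injective hab
    · intro b hb
      simp only [Finset.mem_filter, Finset.mem_univ, true_and] at hb
      refine ⟨w⁻¹ b, ?_, by simp⟩
      simp only [Finset.mem_filter, Finset.mem_univ, true_and,
        Equiv.Perm.coe_inv, Equiv.apply_symm_apply]
      rwa [etaMin_eq_zero_iff]
  rw [h1, card_lt_filter hk]

lemma nat_sq (m : ℕ) : m * m - m = m * (m - 1) := by
  cases m with
  | zero => simp
  | succ m =>
    rw [Nat.succ_sub_one, Nat.mul_succ]
    omega

lemma card_pairs_lt {n : ℕ} (Z : Finset (Fin n)) :
    ((Finset.univ ×ˢ Finset.univ).filter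
      (fun p : Fin n × Fin n => p.1 < p.2 ∧ p.1 ∈ Z ∧ p.2 ∈ Z)).card
      = Z.card * (Z.card - 1) / 2 := by
  have hA : ((Finset.univ ×ˢ Finset.univ).filter
      (fun p : Fin n × Fin n => p.1 < p.2 ∧ p.1 ∈ Z ∧ p.2 ∈ Z))
      = (Z ×ˢ Z).filter (fun p => p.1 < p.2) := by
    ext p
    simp only [Finset.mem_filter, Finset.mem_product, Finset.mem_univ, true_and, and_true]
    tauto
  rw [hA]
  have hcardAB : ((Z ×ˢ Z).filter (fun p => p.1 < p.2)).card
      = ((Z ×ˢ Z).filter (fun p => p.2 < p.1)).card := by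
    apply Finset.card_bij (fun p _ => p.swap)
    · intro p hp
      simp only [Finset.mem_filter, Finset.mem_product, Prod.fst_swap, Prod.snd_swap] at hp ⊢
      exact ⟨⟨hp.1.2, hp.1.1⟩, hp.2⟩
    · intro a _ b _ h
      exact Prod.swap_injective h
    · intro b hb
      simp only [Finset.mem_filter, Finset.mem_product] at hb
      refine ⟨b.swap, ?_, by simp⟩
      simp only [Finset.mem_filter, Finset.mem_product, Prod.fst_swap, Prod.snd_swap]
      exact ⟨⟨hb.1.2, hb.1.1⟩, hb.2⟩
  have hoff : Z.offDiag = ((Z ×ˢ Z).filter (fun p => p.1 < p.2))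
      ∪ ((Z ×ˢ Z).filter (fun p => p.2 < p.1)) := by
    rw [← Finset.filter_or]
    ext p
    simp only [Finset.mem_offDiag, Finset.mem_filter, Finset.mem_product]
    constructor
    · rintro ⟨h1, h2, h3⟩
      exact ⟨⟨h1, h2⟩, lt_or_gt_of_ne h3⟩
    · rintro ⟨⟨h1, h2⟩, h3 | h3⟩
      · exact ⟨h1, h2, ne_of_lt h3⟩
      · exact ⟨h1, h2, (ne_of_lt h3).symm⟩
  have hdisj : Disjoint ((Z ×ˢ Z).filter (fun p => p.1 < p.2))
      ((Z ×ˢ Z).filter (fun p => p.2 < p.1)) := by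
    rw [Finset.disjoint_left]
    intro p hp hq
    simp only [Finset.mem_filter] at hp hq
    exact absurd hq.2 hp.2.asymm
  have hcard := Finset.offDiag_card Z
  rw [hoff, Finset.card_union_of_disjoint hdisj, ← hcardAB, nat_sq] at hcard
  omega

lemma formCoeff_eta {n k : ℕ} (hk : k ≤ n) (w : Equiv.Perm (Fin n)) :
    formCoeff one' n (fun i => etaMin n k (w i)) = qfact0 k := by
  set η : Fin n → Fin 2 := fun i => etaMin n k (w i) with hη
  set Z : Finset (Fin n) := Finset.univ.filter (fun i => η i = 0) with hZ
  have hZcard : Z.card = k := etaMin_card hk w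
  have hsum : (∑ i, betaE one' η i) = k := by
    rw [Finset.sum_congr rfl (fun i _ => betaE_one' η i), ← Finset.card_filter]
    exact hZcard
  have hexp : (∑ p ∈ (Finset.univ ×ˢ Finset.univ).filter
      (fun p : Fin n × Fin n => p.1 < p.2), betaE one' η p.1 * betaE one' η p.2)
      = k * (k - 1) / 2 := by
    have e1 : ∀ p : Fin n × Fin n, betaE one' η p.1 * betaE one' η p.2
        = if η p.1 = 0 ∧ η p.2 = 0 then 1 else 0 := by
      intro p
      rw [betaE_one', betaE_one']
      split_ifs <;> simp_all
    rw [Finset.sum_congr rfl (fun p _ => e1 p), ← Finset.card_filter, Finset.filter_filter]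
    rw [show ((Finset.univ ×ˢ Finset.univ).filter
        (fun p : Fin n × Fin n => p.1 < p.2 ∧ (η p.1 = 0 ∧ η p.2 = 0)))
        = ((Finset.univ ×ˢ Finset.univ).filter
        (fun p : Fin n × Fin n => p.1 < p.2 ∧ p.1 ∈ Z ∧ p.2 ∈ Z)) from by
      ext p
      simp [hZ]]
    rw [card_pairs_lt Z, hZcard]
  have hprod : (∏ i, qfact (betaE one' η i)) = 1 := by
    apply Finset.prod_eq_one
    intro i _
    rw [betaE_one']
    split_ifs
    · exact qfact_one
    · rfl
  unfold formCoeff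
  rw [hexp, hsum, hprod, div_one]
  rfl

lemma Bform_addl (a : ℕ → ℕ) (m : ℕ) (f g h : V m) :
    Bform a m (f + g) h = Bform a m f h + Bform a m g h := by
  unfold Bform
  rw [← Finset.sum_add_distrib]
  exact Finset.sum_congr rfl fun η _ => by simp only [Pi.add_apply]; ring

lemma Bform_addr (a : ℕ → ℕ) (m : ℕ) (f g h : V m) :
    Bform a m f (g + h) = Bform a m f g + Bform a m f h := by
  unfold Bform
  rw [← Finset.sum_add_distrib]
  exact Finset.sum_congr rfl fun η _ => by simp only [Pi.add_apply]; ring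

lemma Bform_smull (a : ℕ → ℕ) (m : ℕ) (c : K) (f h : V m) :
    Bform a m (c • f) h = c * Bform a m f h := by
  unfold Bform
  rw [Finset.mul_sum]
  exact Finset.sum_congr rfl fun η _ => by simp only [Pi.smul_apply, smul_eq_mul]; ring

lemma Bform_smulr (a : ℕ → ℕ) (m : ℕ) (c : K) (f h : V m) :
    Bform a m f (c • h) = c * Bform a m f h := by
  unfold Bform
  rw [Finset.mul_sum]
  exact Finset.sum_congr rfl fun η _ => by simp only [Pi.smul_apply, smul_eq_mul]; ring

lemma Bform_eb {m : ℕ} (a : ℕ → ℕ) (η γ : Fin m → Fin 2) :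
    Bform a m (eb η) (eb γ) = if η = γ then formCoeff a m η else 0 := by
  unfold Bform eb
  rw [Finset.sum_eq_single η]
  · rw [if_pos rfl]
    by_cases h : η = γ
    · rw [if_pos h, if_pos h]
      ring
    · rw [if_neg h, if_neg h]
      ring
  · intro b _ hb
    rw [if_neg hb]
    ring
  · intro h
    exact absurd (Finset.mem_univ η) h

end Stmt11Aux


/-!
STATEMENT 11: For all `X, Y ∈ M^p_q` one has `(Ψ(X), Ψ(Y))_{(1,…,1)} = [k]₀!·⟨X, Y⟩`,
where `Ψ : M^p_q → (V^{⊗n})_k` is the map `N_w ↦ v_{η_min·w}` and `⟨·,·⟩` is the bilinear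
form on `M^p_q` for which the standard basis `{N_w : w ∈ W^{p+q}}` is orthonormal.
-/

theorem statement11 (n k : ℕ) (hk : k ≤ n)
    (A : Type) [Ring A] [Algebra K A]
    (H : Equiv.Perm (Fin n) → A)
    (hHLI : LinearIndependent K H)
    (hHspan : Submodule.span K (Set.range H) = ⊤)
    (hone : H 1 = 1)
    (hmul : ∀ (w : Equiv.Perm (Fin n)) (i : Fin (n - 1)),
      len n (w * s n i) = len n w + 1 → H (w * s n i) = H w * H (s n i))
    (hquad : ∀ i : Fin (n - 1),
      H (s n i) * H (s n i) = (q⁻¹ - q) • H (s n i) + 1)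
    (M : Type) [AddCommGroup M] [Module K M]
    (act : M → A → M)
    (hact_addl : ∀ (m m' : M) (a : A), act (m + m') a = act m a + act m' a)
    (hact_addr : ∀ (m : M) (a b : A), act m (a + b) = act m a + act m b)
    (hact_smull : ∀ (c : K) (m : M) (a : A), act (c • m) a = c • act m a)
    (hact_smulr : ∀ (c : K) (m : M) (a : A), act m (c • a) = c • act m a)
    (hact_one : ∀ m : M, act m 1 = m)
    (hact_mul : ∀ (m : M) (a b : A), act m (a * b) = act (act m a) b)
    (N : Equiv.Perm (Fin n) → M)
    (hN : ∀ w, N w = act (N 1) (H w))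
    (hgenP : ∀ i ∈ Pset n k, act (N 1) (H (s n i)) = (-q) • N 1)
    (hgenQ : ∀ i ∈ Qset n k, act (N 1) (H (s n i)) = q⁻¹ • N 1)
    (hNLI : LinearIndependent K
      (fun w : {w : Equiv.Perm (Fin n) // IsShort n (Pset n k ∪ Qset n k) w} => N w))
    (hNspan : Submodule.span K (N '' {w | IsShort n (Pset n k ∪ Qset n k) w}) = ⊤)
    -- the bilinear form on M^p_q for which the standard basis is orthonormal
    (Bm : M → M → K)
    (hBm_addl : ∀ (X X' Y : M), Bm (X + X') Y = Bm X Y + Bm X' Y)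
    (hBm_addr : ∀ (X Y Y' : M), Bm X (Y + Y') = Bm X Y + Bm X Y')
    (hBm_smull : ∀ (c : K) (X Y : M), Bm (c • X) Y = c * Bm X Y)
    (hBm_smulr : ∀ (c : K) (X Y : M), Bm X (c • Y) = c * Bm X Y)
    (hBm_orth : ∀ w w' : Equiv.Perm (Fin n),
      IsShort n (Pset n k ∪ Qset n k) w → IsShort n (Pset n k ∪ Qset n k) w' →
      Bm (N w) (N w') = if w = w' then 1 else 0)
    -- the map Ψ : M^p_q → (V^{⊗n})_k, N_w ↦ v_{η_min·w}
    (Ψ : M →ₗ[K] V n)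
    (hΨ : ∀ w : Equiv.Perm (Fin n), IsShort n (Pset n k ∪ Qset n k) w →
      Ψ (N w) = eb (fun i => etaMin n k (w i))) :
    ∀ X Y : M, Bform one' n (Ψ X) (Ψ Y) = qfact0 k * Bm X Y := by
  open Stmt11Aux in
  classical
  set L1 : M →ₗ[K] M →ₗ[K] K := LinearMap.mk₂ K (fun X Y => Bform one' n (Ψ X) (Ψ Y))
    (fun X X' Y => by simp only [map_add, Stmt11Aux.Bform_addl])
    (fun c X Y => by simp only [map_smul, Stmt11Aux.Bform_smull, smul_eq_mul])
    (fun X Y Y' => by simp only [map_add, Stmt11Aux.Bform_addr])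
    (fun c X Y => by simp only [map_smul, Stmt11Aux.Bform_smulr, smul_eq_mul]) with hL1
  set L2 : M →ₗ[K] M →ₗ[K] K := LinearMap.mk₂ K (fun X Y => qfact0 k * Bm X Y)
    (fun X X' Y => by simp only [hBm_addl]; ring)
    (fun c X Y => by simp only [hBm_smull, smul_eq_mul]; ring)
    (fun X Y Y' => by simp only [hBm_addr]; ring)
    (fun c X Y => by simp only [hBm_smulr, smul_eq_mul]; ring) with hL2
  have hLeq : L1 = L2 := by
    apply LinearMap.ext_on hNspan
    rintro x ⟨w, hw, rfl⟩
    apply LinearMap.ext_on hNspan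
    rintro y ⟨w', hw', rfl⟩
    simp only [hL1, hL2, LinearMap.mk₂_apply]
    rw [hΨ w hw, hΨ w' hw', hBm_orth w w' hw hw', Stmt11Aux.Bform_eb]
    by_cases h : w = w'
    · subst h
      rw [if_pos rfl, if_pos rfl, mul_one, Stmt11Aux.formCoeff_eta hk]
    · rw [if_neg h, if_neg (fun hee =>
        h (Stmt11Aux.short_eq hk hw hw' (fun i => congrFun hee i))), mul_zero]
  intro X Y
  have hfin := LinearMap.congr_fun (LinearMap.congr_fun hLeq X) Y
  simpa only [hL1, hL2, LinearMap.mk₂_apply] using hfin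
end
end

section
/- Let a = (a_1,...,a_l) be a composition of n and 0 ≤ k ≤ n. The map w ↦ T_a(w) = w·T_a^min is a bijection from (S_n/S_a)^short to the set of (n-k,k)-tableaux of type a, and it restricts to a bijection from Λ_k(a) to the set of admissible (n-k,k)-tableaux of type a. -/
/-!
STATEMENT 19: Let `a = (a_1,…,a_l)` be a composition of `n` and `0 ≤ k ≤ n`.  The map
`w ↦ T_a(w) = w·T_a^min` is a bijection from `(S_n/S_a)^short` to the set of
`(n-k,k)`-tableaux of type `a`, and it restricts to a bijection from `Λ_k(a)` to the set
of admissible `(n-k,k)`-tableaux of type `a`.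

A hook tableau of shape `(n-k,k)` is modelled as a function `T : Fin n → Fin l` on the
`n` boxes, numbered `0,…,k-1` along the column from bottom to top and then `k,…,n-1`
along the row from left to right (the corner box, number `k`, belongs to the row).
`S_n` acts on tableaux by permuting boxes, `(w·T)(b) = T(w⁻¹ b)`; the minimal tableau
`T_a^min` places the entries `1^{a_1} 2^{a_2} ⋯ l^{a_l}` in weakly increasing order along
the boxes, and the Young subgroup `S_a` is its stabilizer, generated by the simple
transpositions of adjacent boxes with equal entries of `T_a^min`.
-/

open scoped Classical

noncomputable section

/-- `w` is a shortest representative of its coset `w·S_L` in `S_n / S_L`. -/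
def IsShortR (n : ℕ) (L : Finset (Fin (n - 1))) (w : Equiv.Perm (Fin n)) : Prop :=
  ∀ x ∈ parab n L, len n w ≤ len n (w * x)

/-- The set `Λ^p_q(λ) = { w ∈ (S_n/S_λ)^short : w S_λ ⊆ W^p and w S_λ ∩ w_q W^q ≠ ∅ }`,
where `w_q` is the longest element of `W_q`. -/
def LambdaSet (n : ℕ) (P Q L : Finset (Fin (n - 1))) (wq : Equiv.Perm (Fin n)) :
    Set (Equiv.Perm (Fin n)) :=
  {w | IsShortR n L w ∧
    (∀ x ∈ parab n L, IsShort n P (w * x)) ∧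
    (∃ x ∈ parab n L, ∃ u : Equiv.Perm (Fin n), IsShort n Q u ∧ w * x = wq * u)}

/-- `T` is an `(n-k,k)`-tableau of type `a`: each entry `v` occurs exactly `a v` times. -/
def IsType {n l : ℕ} (a : Fin l → ℕ) (T : Fin n → Fin l) : Prop :=
  ∀ v : Fin l, (Finset.univ.filter (fun b => T b = v)).card = a v

/-- `T` is admissible: the entries of the column (boxes `0,…,k-1`, from bottom to top)
are non-increasing and the entries of the row (boxes `k,…,n-1`, from left to right) are
strictly increasing. -/
def Admissible {n l : ℕ} (k : ℕ) (T : Fin n → Fin l) : Prop :=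
  (∀ i j : Fin n, (i : ℕ) < (j : ℕ) → (j : ℕ) < k → T j ≤ T i) ∧
  (∀ i j : Fin n, k ≤ (i : ℕ) → (i : ℕ) < (j : ℕ) → T i < T j)

namespace S19
open Finset

variable {n : ℕ}

def invSet (g : Equiv.Perm (Fin n)) : Finset (Fin n × Fin n) :=
  Finset.univ.filter (fun p => p.1 < p.2 ∧ g p.2 < g p.1)

def invc (g : Equiv.Perm (Fin n)) : ℕ := (invSet g).card

lemma mem_invSet {g : Equiv.Perm (Fin n)} {p : Fin n × Fin n} :
    p ∈ invSet g ↔ p.1 < p.2 ∧ g p.2 < g p.1 := by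
  simp [invSet]

lemma swap_lt {a b x y : Fin n} (hab : (b : ℕ) = (a : ℕ) + 1) (hxy : x < y)
    (hne : ¬(x = a ∧ y = b)) : Equiv.swap a b x < Equiv.swap a b y := by
  have hxy' : (x : ℕ) < (y : ℕ) := hxy
  rcases eq_or_ne x a with rfl | hxa
  · have hyb : y ≠ b := fun h => hne ⟨rfl, h⟩
    have hya : y ≠ x := (ne_of_gt hxy)
    rw [Equiv.swap_apply_left, Equiv.swap_apply_of_ne_of_ne hya hyb]
    have : (y : ℕ) ≠ (b : ℕ) := fun h => hyb (Fin.ext h)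
    exact Fin.lt_def.2 (by omega)
  · rcases eq_or_ne x b with rfl | hxb
    · have hya : y ≠ a := fun h => by
        subst h; exact absurd hxy (by exact lt_asymm (Fin.lt_def.2 (by omega)))
      have hyb : y ≠ x := (ne_of_gt hxy)
      rw [Equiv.swap_apply_right, Equiv.swap_apply_of_ne_of_ne hya hyb]
      exact lt_trans (Fin.lt_def.2 (by omega)) hxy
    · rw [Equiv.swap_apply_of_ne_of_ne hxa hxb]
      rcases eq_or_ne y a with rfl | hya
      · rw [Equiv.swap_apply_left]
        exact Fin.lt_def.2 (by omega)
      · rcases eq_or_ne y b with rfl | hyb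
        · rw [Equiv.swap_apply_right]
          have : (x : ℕ) ≠ (a : ℕ) := fun h => hxa (Fin.ext h)
          exact Fin.lt_def.2 (by omega)
        · rw [Equiv.swap_apply_of_ne_of_ne hya hyb]; exact hxy

lemma invSet_mul_swap_of_lt {g : Equiv.Perm (Fin n)} {a b : Fin n}
    (hab : (b : ℕ) = (a : ℕ) + 1) (h : g a < g b) :
    invSet (g * Equiv.swap a b) =
      insert (a, b) ((invSet g).image
        (fun p => (Equiv.swap a b p.1, Equiv.swap a b p.2))) := by
  have hlt : a < b := Fin.lt_def.2 (by omega)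
  ext p
  obtain ⟨x, y⟩ := p
  simp only [mem_invSet, mem_insert, mem_image, Equiv.Perm.mul_apply, Prod.mk.injEq,
    Prod.exists]
  constructor
  · rintro ⟨hxy, hinv⟩
    by_cases hc : x = a ∧ y = b
    · exact Or.inl hc
    · refine Or.inr ⟨Equiv.swap a b x, Equiv.swap a b y, ⟨swap_lt hab hxy hc, ?_⟩, by simp, by simp⟩
      simpa using hinv
  · rintro (⟨rfl, rfl⟩ | ⟨x', y', ⟨hxy', hinv'⟩, rfl, rfl⟩)
    · simp [hlt, h]
    · have hne : ¬(x' = a ∧ y' = b) := by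
        rintro ⟨rfl, rfl⟩
        exact absurd h (not_lt.2 (le_of_lt hinv'))
      refine ⟨swap_lt hab hxy' hne, ?_⟩
      simpa using hinv'

lemma invc_mul_swap_of_lt {g : Equiv.Perm (Fin n)} {a b : Fin n}
    (hab : (b : ℕ) = (a : ℕ) + 1) (h : g a < g b) :
    invc (g * Equiv.swap a b) = invc g + 1 := by
  have hinj : Function.Injective (fun p : Fin n × Fin n => (Equiv.swap a b p.1, Equiv.swap a b p.2)) := by
    rintro ⟨x, y⟩ ⟨x', y'⟩ hp
    simp only [Prod.mk.injEq] at hp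
    exact Prod.ext (Equiv.injective _ hp.1) (Equiv.injective _ hp.2)
  have hnot : (a, b) ∉ (invSet g).image
      (fun p : Fin n × Fin n => (Equiv.swap a b p.1, Equiv.swap a b p.2)) := by
    intro hmem
    obtain ⟨⟨x, y⟩, hxy, heq⟩ := mem_image.1 hmem
    simp only [Prod.mk.injEq] at heq
    have hx : x = b := by
      have h2 := congrArg (Equiv.swap a b) heq.1; simpa using h2
    have hy : y = a := by
      have h2 := congrArg (Equiv.swap a b) heq.2; simpa using h2
    rw [hx, hy] at hxy
    have hba := Fin.lt_def.1 (mem_invSet.1 hxy).1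
    simp only at hba
    omega
  rw [invc, invSet_mul_swap_of_lt hab h, card_insert_of_notMem hnot,
    card_image_of_injective _ hinj]
  rfl

lemma invc_mul_swap_of_gt {g : Equiv.Perm (Fin n)} {a b : Fin n}
    (hab : (b : ℕ) = (a : ℕ) + 1) (h : g b < g a) :
    invc g = invc (g * Equiv.swap a b) + 1 := by
  have h' : (g * Equiv.swap a b) a < (g * Equiv.swap a b) b := by
    simpa using h
  have := invc_mul_swap_of_lt hab h'
  rwa [mul_assoc, Equiv.swap_mul_self, mul_one] at this

lemma invc_mul_swap_le {g : Equiv.Perm (Fin n)} {a b : Fin n}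
    (hab : (b : ℕ) = (a : ℕ) + 1) :
    invc (g * Equiv.swap a b) ≤ invc g + 1 := by
  have hne : g a ≠ g b := fun h => by
    have : a = b := Equiv.injective _ h
    subst this; omega
  rcases lt_or_gt_of_ne hne with h | h
  · exact le_of_eq (invc_mul_swap_of_lt hab h)
  · have := invc_mul_swap_of_gt hab h; omega

lemma invc_inv (g : Equiv.Perm (Fin n)) : invc g⁻¹ = invc g := by
  refine Finset.card_nbij' (fun p => (g⁻¹ p.2, g⁻¹ p.1)) (fun q => (g q.2, g q.1)) ?_ ?_ ?_ ?_
  · rintro ⟨x, y⟩ hp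
    obtain ⟨h1, h2⟩ := mem_invSet.1 hp
    exact mem_invSet.2 ⟨h2, by simpa using h1⟩
  · rintro ⟨x, y⟩ hq
    obtain ⟨h1, h2⟩ := mem_invSet.1 hq
    exact mem_invSet.2 ⟨h2, by simpa using h1⟩
  · rintro ⟨x, y⟩ _; simp
  · rintro ⟨x, y⟩ _; simp

lemma strictMono_of_adj {g : Equiv.Perm (Fin n)}
    (h : ∀ a b : Fin n, (b : ℕ) = (a : ℕ) + 1 → g a < g b) : StrictMono g := by
  have key : ∀ m : ℕ, ∀ a b : Fin n, (b : ℕ) = (a : ℕ) + m + 1 → g a < g b := by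
    intro m
    induction m with
    | zero => intro a b hab; exact h a b (by omega)
    | succ m ih =>
      intro a b hab
      have hcb : ((a : ℕ) + m + 1) < n := by have := b.isLt; omega
      exact lt_trans (ih a ⟨(a : ℕ) + m + 1, hcb⟩ rfl) (h _ b (by simpa using by omega))
  intro a b hab
  have : (b : ℕ) = (a : ℕ) + ((b : ℕ) - (a : ℕ) - 1) + 1 := by
    have := Fin.lt_def.1 hab; omega
  exact key _ a b this

lemma perm_eq_one_of_strictMono {g : Equiv.Perm (Fin n)} (h : StrictMono g) : g = 1 := by
  haveI : WellFoundedLT (Fin n) := inferInstance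
  have key : (⇑g : Fin n → Fin n) = id :=
    (StrictMono.range_inj (γ := Fin n) h strictMono_id).mp
      (by rw [g.surjective.range_eq, Set.range_id])
  ext x
  have hx := congrFun key x
  simp only [id] at hx
  simp [hx]

lemma exists_adj_descent {g : Equiv.Perm (Fin n)} (h : g ≠ 1) :
    ∃ a b : Fin n, (b : ℕ) = (a : ℕ) + 1 ∧ g b < g a := by
  by_contra hc
  push_neg at hc
  refine h (perm_eq_one_of_strictMono (strictMono_of_adj ?_))
  intro a b hab
  have hne : g a ≠ g b := fun hh => by
    have : a = b := Equiv.injective _ hh; subst this; omega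
  exact lt_of_le_of_ne (hc a b hab) hne

lemma invc_one : invc (1 : Equiv.Perm (Fin n)) = 0 := by
  rw [invc, Finset.card_eq_zero]
  ext p
  simp only [mem_invSet, Finset.notMem_empty, iff_false, not_and]
  intro h1
  simp only [Equiv.Perm.one_apply]
  exact not_lt.2 (le_of_lt h1)

/-- index helpers -/
def loF (i : Fin (n - 1)) : Fin n := ⟨(i : ℕ), by have := i.isLt; omega⟩
def hiF (i : Fin (n - 1)) : Fin n := ⟨(i : ℕ) + 1, by have := i.isLt; omega⟩

lemma s_eq (i : Fin (n - 1)) : s n i = Equiv.swap (loF i) (hiF i) := rfl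

lemma hiF_val (i : Fin (n - 1)) : ((hiF i : Fin n) : ℕ) = ((loF i : Fin n) : ℕ) + 1 := rfl

lemma exists_word (g : Equiv.Perm (Fin n)) :
    ∃ l : List (Fin (n - 1)), l.length = invc g ∧ wordProd n l = g := by
  generalize hm : invc g = m
  induction m using Nat.strong_induction_on generalizing g with
  | _ m ih =>
    by_cases h1 : g = 1
    · subst h1
      rw [invc_one] at hm
      exact ⟨[], by simp [← hm], by simp [wordProd]⟩
    · obtain ⟨a, b, hab, hd⟩ := exists_adj_descent h1
      have hblt := b.isLt
      have halt : (a : ℕ) < n - 1 := by omega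
      set i : Fin (n - 1) := ⟨(a : ℕ), halt⟩ with hi
      have hla : loF i = a := Fin.ext rfl
      have hhb : hiF i = b := Fin.ext (by simp [hiF, hab, hi])
      have hkey := invc_mul_swap_of_gt hab hd
      have hlt : invc (g * Equiv.swap a b) < m := by omega
      obtain ⟨l', hl', hp'⟩ := ih _ hlt (g * Equiv.swap a b) rfl
      refine ⟨l' ++ [i], ?_, ?_⟩
      · have hlen : (l' ++ [i]).length = l'.length + 1 := by simp
        omega
      · rw [wordProd, List.map_append, List.prod_append]
        simp only [List.map_cons, List.map_nil, List.prod_cons, List.prod_nil, mul_one]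
        rw [← wordProd, hp', s_eq, hla, hhb, mul_assoc, Equiv.swap_mul_self, mul_one]

lemma invc_wordProd_le (l : List (Fin (n - 1))) : invc (wordProd n l) ≤ l.length := by
  induction l with
  | nil => simp [wordProd, invc_one]
  | cons i t ih =>
    have : wordProd n (i :: t) = s n i * wordProd n t := by
      simp [wordProd]
    rw [this]
    set h := wordProd n t
    have hsinv : (s n i)⁻¹ = s n i := by
      rw [s_eq]; exact Equiv.swap_inv _ _
    have h1 : invc (s n i * h) = invc (h⁻¹ * s n i) := by
      conv_lhs => rw [← invc_inv (s n i * h)]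
      rw [mul_inv_rev, hsinv]
    rw [h1, s_eq]
    calc invc (h⁻¹ * Equiv.swap (loF i) (hiF i)) ≤ invc h⁻¹ + 1 :=
          invc_mul_swap_le (hiF_val i)
      _ = invc h + 1 := by rw [invc_inv]
      _ ≤ t.length + 1 := by omega
  
lemma len_eq_invc (g : Equiv.Perm (Fin n)) : len n g = invc g := by
  obtain ⟨l, hl, hp⟩ := exists_word g
  apply le_antisymm
  · exact Nat.sInf_le ⟨l, hl, hp⟩
  · refine le_csInf ⟨invc g, l, hl, hp⟩ ?_
    rintro m ⟨l', hl', hp'⟩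
    rw [← hp', ← hl']
    exact invc_wordProd_le l'


section Parab

variable {α : Type*} [LinearOrder α] {f : Fin n → α} {P : Finset (Fin (n - 1))}

/-- A swap of adjacent positions in the same fiber preserves `f`. -/
lemma f_swap_eq (hP : ∀ i : Fin (n - 1), i ∈ P ↔ f (loF i) = f (hiF i))
    {i : Fin (n - 1)} (hi : i ∈ P) (b : Fin n) :
    f (Equiv.swap (loF i) (hiF i) b) = f b := by
  rcases eq_or_ne b (loF i) with rfl | h1
  · rw [Equiv.swap_apply_left]; exact ((hP i).1 hi).symm
  · rcases eq_or_ne b (hiF i) with rfl | h2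
    · rw [Equiv.swap_apply_right]; exact (hP i).1 hi
    · rw [Equiv.swap_apply_of_ne_of_ne h1 h2]

lemma mem_parab_iff (hf : Monotone f)
    (hP : ∀ i : Fin (n - 1), i ∈ P ↔ f (loF i) = f (hiF i))
    (x : Equiv.Perm (Fin n)) :
    x ∈ parab n P ↔ ∀ b, f (x b) = f b := by
  constructor
  · intro hx
    refine Subgroup.closure_induction ?_ ?_ ?_ ?_ hx
    · rintro σ ⟨i, hi, rfl⟩ b
      rw [s_eq]
      exact f_swap_eq hP hi b
    · intro b; rfl
    · intro u v _ _ hu hv b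
      rw [Equiv.Perm.mul_apply, hu, hv]
    · intro u _ hu b
      conv_rhs => rw [← Equiv.apply_symm_apply u b]
      exact (hu (u⁻¹ b)).symm
  · intro hx
    generalize hm : invc x = m
    induction m using Nat.strong_induction_on generalizing x with
    | _ m ih =>
      by_cases h1 : x = 1
      · subst h1; exact one_mem _
      · obtain ⟨a, b, hab, hd⟩ := exists_adj_descent h1
        have hblt := b.isLt
        have halt : (a : ℕ) < n - 1 := by omega
        set i : Fin (n - 1) := ⟨(a : ℕ), halt⟩ with hidef
        have hla : loF i = a := Fin.ext rfl
        have hhb : hiF i = b := Fin.ext (by simp [hiF, hab, hidef])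
        have hiP : i ∈ P := by
          rw [hP i, hla, hhb]
          have hab' : a < b := Fin.lt_def.2 (by omega)
          exact le_antisymm (hf (le_of_lt hab')) (by
            have := hf (le_of_lt hd)
            rwa [hx a, hx b] at this)
        have hx' : ∀ c, f ((x * Equiv.swap a b) c) = f c := by
          intro c
          rw [Equiv.Perm.mul_apply]
          have : f (Equiv.swap a b c) = f c := by
            rw [← hla, ← hhb]
            exact f_swap_eq hP hiP c
          rw [hx _, this]
        have hkey := invc_mul_swap_of_gt hab hd
        have hmem := ih (invc (x * Equiv.swap a b)) (by omega) _ hx' rfl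
        have hgen : Equiv.swap a b ∈ parab n P := by
          apply Subgroup.subset_closure
          exact ⟨i, hiP, by rw [s_eq, hla, hhb]⟩
        have : x = (x * Equiv.swap a b) * Equiv.swap a b := by
          rw [mul_assoc, Equiv.swap_mul_self, mul_one]
        rw [this]
        exact mul_mem hmem hgen

/-- In a fiber of a monotone `f`, an adjacently-increasing map is strictly increasing. -/
lemma fiber_strictMono (hf : Monotone f)
    (hP : ∀ i : Fin (n - 1), i ∈ P ↔ f (loF i) = f (hiF i))
    {w : Equiv.Perm (Fin n)} (hw : ∀ i ∈ P, w (loF i) < w (hiF i)) :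
    ∀ c d : Fin n, c < d → f c = f d → w c < w d := by
  have step : ∀ c d : Fin n, (d : ℕ) = (c : ℕ) + 1 → f c = f d → w c < w d := by
    intro c d hcd hfcd
    have hdlt := d.isLt
    have hclt : (c : ℕ) < n - 1 := by omega
    set i : Fin (n - 1) := ⟨(c : ℕ), hclt⟩ with hidef
    have hlc : loF i = c := Fin.ext rfl
    have hhd : hiF i = d := Fin.ext (by simp [hiF, hcd, hidef])
    have hiP : i ∈ P := by rw [hP i, hlc, hhd]; exact hfcd
    have := hw i hiP
    rwa [hlc, hhd] at this
  have key : ∀ m : ℕ, ∀ c d : Fin n, (d : ℕ) = (c : ℕ) + m + 1 → f c = f d → w c < w d := by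
    intro m
    induction m with
    | zero => intro c d hcd; exact step c d (by omega)
    | succ m ihm =>
      intro c d hcd hfcd
      have helt : ((c : ℕ) + m + 1) < n := by have := d.isLt; omega
      set e : Fin n := ⟨(c : ℕ) + m + 1, helt⟩ with hedef
      have hce : c < e := Fin.lt_def.2 (by simp [hedef])
      have hed : e < d := Fin.lt_def.2 (by simp [hedef]; omega)
      have hfce : f c = f e :=
        le_antisymm (hf (le_of_lt hce)) (hfcd ▸ hf (le_of_lt hed))
      exact lt_trans (ihm c e (by simp [hedef]) hfce)
        (step e d (by simp [hedef]; omega) (hfce ▸ hfcd))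
  intro c d hcd hfcd
  have : (d : ℕ) = (c : ℕ) + ((d : ℕ) - (c : ℕ) - 1) + 1 := by
    have := Fin.lt_def.1 hcd; omega
  exact key _ c d this hfcd

lemma f_inv_eq {x : Equiv.Perm (Fin n)} (hx : ∀ b, f (x b) = f b) :
    ∀ b, f (x⁻¹ b) = f b := by
  intro b
  conv_rhs => rw [← Equiv.apply_symm_apply x b]
  exact (hx (x⁻¹ b)).symm

lemma invc_mul_parab (hf : Monotone f)
    {w x : Equiv.Perm (Fin n)} (hx : ∀ b, f (x b) = f b)
    (hw : ∀ c d : Fin n, c < d → f c = f d → w c < w d) :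
    invc (w * x) = invc w + invc x := by
  classical
  have hx' := f_inv_eq hx
  -- cross pairs
  have hcross : ((invSet (w * x)).filter (fun p => ¬ f p.1 = f p.2)).card = invc w := by
    refine Finset.card_nbij' (fun p => (x p.1, x p.2)) (fun q => (x⁻¹ q.1, x⁻¹ q.2)) ?_ ?_ ?_ ?_
    · rintro ⟨c, d⟩ hp
      obtain ⟨hp1, hfne⟩ := Finset.mem_filter.1 hp
      obtain ⟨hlt, hinv⟩ := mem_invSet.1 hp1
      simp only at hfne hlt hinv ⊢
      have hflt : f c < f d := lt_of_le_of_ne (hf (le_of_lt hlt)) hfne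
      have hxlt : x c < x d := by
        by_contra hcon
        push_neg at hcon
        have := hf hcon
        rw [hx c, hx d] at this
        exact absurd hflt (not_lt.2 this)
      refine mem_invSet.2 ⟨hxlt, ?_⟩
      simpa [Equiv.Perm.mul_apply] using hinv
    · rintro ⟨c, d⟩ hq
      obtain ⟨hlt, hinv⟩ := mem_invSet.1 hq
      simp only at hlt hinv ⊢
      have hfne : f c ≠ f d := by
        intro hcon
        exact absurd (hw c d hlt hcon) (not_lt.2 (le_of_lt hinv))
      have hflt : f c < f d := lt_of_le_of_ne (hf (le_of_lt hlt)) hfne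
      have hxlt : x⁻¹ c < x⁻¹ d := by
        by_contra hcon
        push_neg at hcon
        have := hf hcon
        rw [hx' c, hx' d] at this
        exact absurd hflt (not_lt.2 this)
      refine Finset.mem_filter.2 ⟨mem_invSet.2 ⟨hxlt, by
        simp only [Equiv.Perm.mul_apply, Equiv.Perm.coe_inv, Equiv.apply_symm_apply]
        exact hinv⟩, by
        simp only
        rw [hx' c, hx' d]
        exact hfne⟩
    · rintro ⟨c, d⟩ _; simp
    · rintro ⟨c, d⟩ _; simp
  -- same-fiber pairs
  have hsame : (invSet (w * x)).filter (fun p => f p.1 = f p.2) = invSet x := by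
    ext ⟨c, d⟩
    simp only [Finset.mem_filter, mem_invSet, Equiv.Perm.mul_apply]
    constructor
    · rintro ⟨⟨hlt, hinv⟩, hfe⟩
      refine ⟨hlt, ?_⟩
      by_contra hcon
      push_neg at hcon
      rcases lt_or_eq_of_le hcon with hlt2 | heq
      · have hfxe : f (x c) = f (x d) := by rw [hx c, hx d]; exact hfe
        exact absurd (hw _ _ hlt2 hfxe) (not_lt.2 (le_of_lt hinv))
      · rw [Equiv.injective x heq] at hinv
        exact lt_irrefl _ hinv
    · rintro ⟨hlt, hinv⟩
      have hfe : f c = f d := by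
        have h1 : f (x d) ≤ f (x c) := hf (le_of_lt hinv)
        rw [hx c, hx d] at h1
        exact le_antisymm (hf (le_of_lt hlt)) h1
      have hfxe : f (x d) = f (x c) := by rw [hx c, hx d]; exact hfe.symm
      exact ⟨⟨hlt, hw _ _ hinv hfxe⟩, hfe⟩
  have hunion : invSet (w * x) =
      ((invSet (w * x)).filter (fun p => f p.1 = f p.2)) ∪
        ((invSet (w * x)).filter (fun p => ¬ f p.1 = f p.2)) :=
    (Finset.filter_union_filter_not_eq _ _).symm
  have hdisj : Disjoint ((invSet (w * x)).filter (fun p => f p.1 = f p.2))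
      ((invSet (w * x)).filter (fun p => ¬ f p.1 = f p.2)) :=
    Finset.disjoint_filter_filter_not _ _ _
  have : invc (w * x) = ((invSet (w * x)).filter (fun p => f p.1 = f p.2)).card +
      ((invSet (w * x)).filter (fun p => ¬ f p.1 = f p.2)).card := by
    rw [invc]
    conv_lhs => rw [hunion]
    exact Finset.card_union_of_disjoint hdisj
  rw [this, hsame, hcross]
  rw [invc, invc]
  omega

lemma isShortR_iff (hf : Monotone f)
    (hP : ∀ i : Fin (n - 1), i ∈ P ↔ f (loF i) = f (hiF i))
    (w : Equiv.Perm (Fin n)) :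
    IsShortR n P w ↔ ∀ i ∈ P, w (loF i) < w (hiF i) := by
  constructor
  · intro hw i hi
    by_contra hcon
    push_neg at hcon
    have hne : w (loF i) ≠ w (hiF i) := by
      intro h
      have : loF i = hiF i := Equiv.injective _ h
      have := congrArg Fin.val this
      simp [loF, hiF] at this
    have hgt : w (hiF i) < w (loF i) := lt_of_le_of_ne hcon hne.symm
    have hgen : Equiv.swap (loF i) (hiF i) ∈ parab n P :=
      Subgroup.subset_closure ⟨i, hi, (s_eq i)⟩
    have := hw _ hgen
    rw [len_eq_invc, len_eq_invc] at this
    have hdec := invc_mul_swap_of_gt (hiF_val i) hgt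
    omega
  · intro hw x hx
    rw [len_eq_invc, len_eq_invc,
      invc_mul_parab hf ((mem_parab_iff hf hP x).1 hx)
        (fiber_strictMono hf hP hw)]
    omega

lemma isShort_iff (hf : Monotone f)
    (hP : ∀ i : Fin (n - 1), i ∈ P ↔ f (loF i) = f (hiF i))
    (u : Equiv.Perm (Fin n)) :
    IsShort n P u ↔ ∀ i ∈ P, u⁻¹ (loF i) < u⁻¹ (hiF i) := by
  have key : IsShort n P u ↔ IsShortR n P u⁻¹ := by
    constructor
    · intro h x hx
      have h1 := h x⁻¹ (inv_mem hx)
      rw [len_eq_invc, len_eq_invc] at h1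
      have h2 : invc (u⁻¹ * x) = invc (x⁻¹ * u) := by
        rw [← invc_inv (u⁻¹ * x), mul_inv_rev, inv_inv]
      rw [len_eq_invc, len_eq_invc, invc_inv u, h2]
      exact h1
    · intro h x hx
      have h1 := h x⁻¹ (inv_mem hx)
      rw [len_eq_invc, len_eq_invc] at h1
      have h2 : invc (u⁻¹ * x⁻¹) = invc (x * u) := by
        rw [← mul_inv_rev, invc_inv]
      rw [invc_inv u, h2] at h1
      rw [len_eq_invc, len_eq_invc]
      exact h1
  rw [key, isShortR_iff hf hP]

end Parab


section Count

variable {l : ℕ} {a : Fin l → ℕ}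

lemma downClosed_mem_iff {S : Finset (Fin n)} (h : ∀ b b' : Fin n, b' ≤ b → b ∈ S → b' ∈ S)
    (b : Fin n) : b ∈ S ↔ (b : ℕ) < S.card := by
  constructor
  · intro hb
    have hsub : Finset.Iic b ⊆ S := fun c hc => h b c (Finset.mem_Iic.1 hc) hb
    have := Finset.card_le_card hsub
    rw [Fin.card_Iic] at this
    omega
  · intro hb
    by_contra hbS
    have hsub : S ⊆ Finset.Iio b := by
      intro c hc
      rw [Finset.mem_Iio]
      by_contra hcb
      push_neg at hcb
      exact hbS (h c b hcb hc)
    have := Finset.card_le_card hsub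
    rw [Fin.card_Iio] at this
    omega

lemma count_le {g : Fin n → Fin l} (ht : IsType a g) (v : Fin l) :
    (Finset.univ.filter (fun b => g b ≤ v)).card =
      ∑ u ∈ Finset.univ.filter (fun u => u ≤ v), a u := by
  have hsplit : Finset.univ.filter (fun b => g b ≤ v) =
      (Finset.univ.filter (fun u => u ≤ v)).biUnion
        (fun u => Finset.univ.filter (fun b => g b = u)) := by
    ext b
    simp only [Finset.mem_filter, Finset.mem_biUnion, Finset.mem_univ, true_and]
    constructor
    · intro hb; exact ⟨g b, hb, rfl⟩
    · rintro ⟨u, hu, rfl⟩; exact hu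
  rw [hsplit, Finset.card_biUnion]
  · exact Finset.sum_congr rfl (fun u _ => ht u)
  · intro u _ u' _ huu'
    refine Finset.disjoint_left.2 (fun b hb hb' => ?_)
    rw [Finset.mem_filter] at hb hb'
    exact huu' (hb.2.symm.trans hb'.2)

lemma count_lt {g : Fin n → Fin l} (ht : IsType a g) (v : Fin l) :
    (Finset.univ.filter (fun b => g b < v)).card =
      ∑ u ∈ Finset.univ.filter (fun u => u < v), a u := by
  have hsplit : Finset.univ.filter (fun b => g b < v) =
      (Finset.univ.filter (fun u => u < v)).biUnion
        (fun u => Finset.univ.filter (fun b => g b = u)) := by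
    ext b
    simp only [Finset.mem_filter, Finset.mem_biUnion, Finset.mem_univ, true_and]
    constructor
    · intro hb; exact ⟨g b, hb, rfl⟩
    · rintro ⟨u, hu, rfl⟩; exact hu
  rw [hsplit, Finset.card_biUnion]
  · exact Finset.sum_congr rfl (fun u _ => ht u)
  · intro u _ u' _ huu'
    refine Finset.disjoint_left.2 (fun b hb hb' => ?_)
    rw [Finset.mem_filter] at hb hb'
    exact huu' (hb.2.symm.trans hb'.2)

lemma mono_le_iff {g : Fin n → Fin l} (hg : Monotone g) (ht : IsType a g) (v : Fin l)
    (b : Fin n) : g b ≤ v ↔ (b : ℕ) < ∑ u ∈ Finset.univ.filter (fun u => u ≤ v), a u := by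
  have hdc : ∀ c c' : Fin n, c' ≤ c → c ∈ Finset.univ.filter (fun b => g b ≤ v) →
      c' ∈ Finset.univ.filter (fun b => g b ≤ v) := by
    intro c c' hcc' hc
    rw [Finset.mem_filter] at hc ⊢
    exact ⟨Finset.mem_univ _, le_trans (hg hcc') hc.2⟩
  have h1 := downClosed_mem_iff hdc b
  rw [Finset.mem_filter, count_le ht v] at h1
  simpa using h1

end Count


lemma mono_lt_iff {l : ℕ} {a : Fin l → ℕ} {g : Fin n → Fin l} (hg : Monotone g)
    (ht : IsType a g) (v : Fin l) (b : Fin n) :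
    g b < v ↔ (b : ℕ) < ∑ u ∈ Finset.univ.filter (fun u => u < v), a u := by
  have hdc : ∀ c c' : Fin n, c' ≤ c → c ∈ Finset.univ.filter (fun b => g b < v) →
      c' ∈ Finset.univ.filter (fun b => g b < v) := by
    intro c c' hcc' hc
    rw [Finset.mem_filter] at hc ⊢
    exact ⟨Finset.mem_univ _, lt_of_le_of_lt (hg hcc') hc.2⟩
  have h1 := downClosed_mem_iff hdc b
  rw [Finset.mem_filter, count_lt ht v] at h1
  simpa using h1

/-- A monotone tableau of type `a` satisfies the defining property of `Tmin`, hence equals it. -/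
lemma monotone_type_eq {l : ℕ} {a : Fin l → ℕ} {Tmin g : Fin n → Fin l}
    (hTmin : ∀ (b : Fin n) (v : Fin l), Tmin b = v ↔
      (∑ u ∈ Finset.univ.filter (fun u => u < v), a u) ≤ (b : ℕ) ∧
        (b : ℕ) < ∑ u ∈ Finset.univ.filter (fun u => u ≤ v), a u)
    (hg : Monotone g) (ht : IsType a g) : g = Tmin := by
  funext b
  symm
  rw [hTmin b (g b)]
  constructor
  · have := (mono_lt_iff hg ht (g b) b).not.1 (by simp)
    omega
  · exact (mono_le_iff hg ht (g b) b).1 le_rfl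

lemma Tmin_monotone {l : ℕ} {a : Fin l → ℕ} {Tmin : Fin n → Fin l}
    (hTmin : ∀ (b : Fin n) (v : Fin l), Tmin b = v ↔
      (∑ u ∈ Finset.univ.filter (fun u => u < v), a u) ≤ (b : ℕ) ∧
        (b : ℕ) < ∑ u ∈ Finset.univ.filter (fun u => u ≤ v), a u) :
    Monotone Tmin := by
  intro b b' hbb'
  by_contra hcon
  push_neg at hcon
  have h1 := (hTmin b (Tmin b)).1 rfl
  have h2 := (hTmin b' (Tmin b')).1 rfl
  have hsub : Finset.univ.filter (fun u : Fin l => u ≤ Tmin b') ⊆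
      Finset.univ.filter (fun u : Fin l => u < Tmin b) := by
    intro u hu
    rw [Finset.mem_filter] at hu ⊢
    exact ⟨Finset.mem_univ _, lt_of_le_of_lt hu.2 hcon⟩
  have hmono := Finset.sum_le_sum_of_subset hsub (f := a)
  have hbb'' : (b : ℕ) ≤ (b' : ℕ) := hbb'
  omega

lemma Tmin_isType {l : ℕ} {a : Fin l → ℕ} {Tmin : Fin n → Fin l}
    (hsum : ∑ i, a i = n)
    (hTmin : ∀ (b : Fin n) (v : Fin l), Tmin b = v ↔
      (∑ u ∈ Finset.univ.filter (fun u => u < v), a u) ≤ (b : ℕ) ∧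
        (b : ℕ) < ∑ u ∈ Finset.univ.filter (fun u => u ≤ v), a u) :
    IsType a Tmin := by
  intro v
  set Clt := ∑ u ∈ Finset.univ.filter (fun u : Fin l => u < v), a u with hClt
  set Cle := ∑ u ∈ Finset.univ.filter (fun u : Fin l => u ≤ v), a u with hCle
  have hCker : Cle = Clt + a v := by
    rw [hCle, hClt]
    have : Finset.univ.filter (fun u : Fin l => u ≤ v) =
        insert v (Finset.univ.filter (fun u : Fin l => u < v)) := by
      ext u
      simp only [Finset.mem_filter, Finset.mem_insert, Finset.mem_univ, true_and]
      constructor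
      · intro hu
        rcases lt_or_eq_of_le hu with h | h
        · exact Or.inr h
        · exact Or.inl h
      · rintro (rfl | hu)
        · exact le_rfl
        · exact le_of_lt hu
    rw [this, Finset.sum_insert (by simp)]
    omega
  have hle_n : Cle ≤ n := by
    rw [← hsum, hCle]
    exact Finset.sum_le_sum_of_subset (Finset.filter_subset _ _)
  have hcard : (Finset.univ.filter (fun b : Fin n => Tmin b = v)).card =
      (Finset.Ico Clt Cle).card := by
    refine Finset.card_bij' (fun b _ => (b : ℕ)) (fun m hm => ⟨m, by
      rw [Finset.mem_Ico] at hm; omega⟩) ?_ ?_ ?_ ?_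
    · intro b hb
      rw [Finset.mem_filter] at hb
      have h3 := (hTmin b v).1 hb.2
      simp only [Finset.mem_Ico]
      exact ⟨h3.1, h3.2⟩
    · intro m hm
      have hm' := Finset.mem_Ico.1 hm
      rw [Finset.mem_filter]
      refine ⟨Finset.mem_univ _, (hTmin _ v).2 ?_⟩
      simp only [Fin.val_mk]
      omega
    · intro b _
      exact Fin.ext rfl
    · intro m _
      rfl
  rw [hcard, Nat.card_Ico]
  omega

lemma isType_comp {l : ℕ} {a : Fin l → ℕ} {T : Fin n → Fin l} (ht : IsType a T)
    (σ : Equiv.Perm (Fin n)) : IsType a (fun b => T (σ b)) := by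
  intro v
  rw [← ht v]
  refine Finset.card_nbij' (fun b => σ b) (fun b => σ⁻¹ b) ?_ ?_ ?_ ?_
  · intro b hb
    rw [Finset.mem_coe, Finset.mem_filter] at hb ⊢
    exact ⟨Finset.mem_univ _, hb.2⟩
  · intro b hb
    rw [Finset.mem_coe, Finset.mem_filter] at hb ⊢
    refine ⟨Finset.mem_univ _, ?_⟩
    simpa using hb.2
  · intro b _; simp
  · intro b _; simp


section Rho

/-- The longest element of `W_q`: reversal of `0,…,k-1`, identity above. -/
def rhoP (n k : ℕ) (hk : k ≤ n) : Equiv.Perm (Fin n) :=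
  Function.Involutive.toPerm
    (fun b => if h : (b : ℕ) < k then ⟨k - 1 - (b : ℕ), by omega⟩ else b)
    (by
      intro b
      by_cases h : (b : ℕ) < k
      · have h2 : k - 1 - (b : ℕ) < k := by omega
        simp only [h, dif_pos, Fin.val_mk, h2]
        exact Fin.ext (by simp; omega)
      · simp only [h, dif_neg, not_false_iff])

lemma rhoP_apply_lt {k : ℕ} (hk : k ≤ n) {b : Fin n} (hb : (b : ℕ) < k) :
    ((rhoP n k hk b : Fin n) : ℕ) = k - 1 - (b : ℕ) := by
  simp only [rhoP, Function.Involutive.coe_toPerm, hb, dif_pos]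
  show ((if h : (b : ℕ) < k then (⟨k - 1 - (b : ℕ), by omega⟩ : Fin n) else b : Fin n) : ℕ) = _
  rw [dif_pos hb]

lemma rhoP_apply_ge {k : ℕ} (hk : k ≤ n) {b : Fin n} (hb : k ≤ (b : ℕ)) :
    rhoP n k hk b = b := by
  simp only [rhoP, Function.Involutive.coe_toPerm]
  show (if h : (b : ℕ) < k then (⟨k - 1 - (b : ℕ), by omega⟩ : Fin n) else b) = b
  rw [dif_neg (by omega)]

lemma rhoP_inv {k : ℕ} (hk : k ≤ n) : (rhoP n k hk)⁻¹ = rhoP n k hk := by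
  have : (rhoP n k hk).symm = rhoP n k hk := Function.Involutive.toPerm_symm _
  exact this

/-- the monotone function whose level sets define `Qset`. -/
lemma Qset_spec (k : ℕ) :
    ∀ i : Fin (n - 1), i ∈ Qset n k ↔
      (fun b : Fin n => max (b : ℕ) (k - 1)) (loF i) =
        (fun b : Fin n => max (b : ℕ) (k - 1)) (hiF i) := by
  intro i
  simp only [Qset, Finset.mem_filter, Finset.mem_univ, true_and, loF, hiF]
  omega

lemma fq_monotone (k : ℕ) : Monotone (fun b : Fin n => max (b : ℕ) (k - 1)) := by
  intro b b' hbb'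
  have : (b : ℕ) ≤ (b' : ℕ) := hbb'
  simp only
  omega

lemma Pset_spec (k : ℕ) :
    ∀ i : Fin (n - 1), i ∈ Pset n k ↔
      (fun b : Fin n => min (b : ℕ) k) (loF i) =
        (fun b : Fin n => min (b : ℕ) k) (hiF i) := by
  intro i
  simp only [Pset, Finset.mem_filter, Finset.mem_univ, true_and, loF, hiF]
  omega

lemma fp_monotone (k : ℕ) : Monotone (fun b : Fin n => min (b : ℕ) k) := by
  intro b b' hbb'
  have : (b : ℕ) ≤ (b' : ℕ) := hbb'
  simp only
  omega

lemma mem_parab_Q_iff {k : ℕ} (x : Equiv.Perm (Fin n)) :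
    x ∈ parab n (Qset n k) ↔ ∀ b : Fin n, max ((x b : Fin n) : ℕ) (k - 1) = max (b : ℕ) (k - 1) :=
  mem_parab_iff (fq_monotone k) (Qset_spec k) x

lemma parab_Q_fix {k : ℕ} {x : Equiv.Perm (Fin n)} (hx : x ∈ parab n (Qset n k))
    {b : Fin n} (hb : k ≤ (b : ℕ)) : x b = b := by
  have h := (mem_parab_Q_iff x).1 hx b
  have hb' : max (b : ℕ) (k - 1) = (b : ℕ) := by omega
  rw [hb'] at h
  have : ((x b : Fin n) : ℕ) = (b : ℕ) := by
    rcases le_or_gt ((x b : Fin n) : ℕ) (k - 1) with h2 | h2 <;> omega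
  exact Fin.ext this

lemma parab_Q_maps_lt {k : ℕ} {x : Equiv.Perm (Fin n)} (hx : x ∈ parab n (Qset n k))
    {b : Fin n} (hb : (b : ℕ) < k) : ((x b : Fin n) : ℕ) < k := by
  by_contra hcon
  push_neg at hcon
  have hfix : x (x b) = x b := parab_Q_fix hx hcon
  have : x b = b := Equiv.injective x hfix
  rw [this] at hcon
  omega

lemma rhoP_mem_parab_Q {k : ℕ} (hk : k ≤ n) : rhoP n k hk ∈ parab n (Qset n k) := by
  rw [mem_parab_Q_iff]
  intro b
  by_cases hb : (b : ℕ) < k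
  · rw [rhoP_apply_lt hk hb]
    omega
  · rw [rhoP_apply_ge hk (by omega)]

end Rho


section Wq

variable {k : ℕ}

lemma invSet_parab_Q_subset {x : Equiv.Perm (Fin n)} (hx : x ∈ parab n (Qset n k)) :
    invSet x ⊆ Finset.univ.filter (fun p : Fin n × Fin n => p.1 < p.2 ∧ (p.2 : ℕ) < k) := by
  rintro ⟨c, d⟩ hp
  obtain ⟨hlt, hinv⟩ := mem_invSet.1 hp
  refine Finset.mem_filter.2 ⟨Finset.mem_univ _, hlt, ?_⟩
  simp only at hlt hinv ⊢
  by_contra hcon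
  push_neg at hcon
  have hd : x d = d := parab_Q_fix hx hcon
  rcases lt_or_ge (c : ℕ) k with hc | hc
  · have hmap := parab_Q_maps_lt hx hc
    rw [hd] at hinv
    have hdlt := Fin.lt_def.1 hinv
    omega
  · have hcfix : x c = c := parab_Q_fix hx hc
    rw [hd, hcfix] at hinv
    exact absurd hlt (not_lt.2 (le_of_lt hinv))

lemma invSet_rhoP (hk : k ≤ n) :
    invSet (rhoP n k hk) =
      Finset.univ.filter (fun p : Fin n × Fin n => p.1 < p.2 ∧ (p.2 : ℕ) < k) := by
  ext ⟨c, d⟩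
  simp only [mem_invSet, Finset.mem_filter, Finset.mem_univ, true_and]
  constructor
  · rintro ⟨hlt, hinv⟩
    refine ⟨hlt, ?_⟩
    by_contra hcon
    push_neg at hcon
    rw [rhoP_apply_ge hk hcon] at hinv
    rcases lt_or_ge (c : ℕ) k with hc | hc
    · have hval := rhoP_apply_lt hk hc
      have hdlt := Fin.lt_def.1 hinv
      omega
    · rw [rhoP_apply_ge hk hc] at hinv
      exact absurd hlt (not_lt.2 (le_of_lt hinv))
  · rintro ⟨hlt, hdk⟩
    refine ⟨hlt, ?_⟩
    have hck : (c : ℕ) < k := lt_trans (Fin.lt_def.1 hlt) hdk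
    rw [Fin.lt_def, rhoP_apply_lt hk hck, rhoP_apply_lt hk hdk]
    have := Fin.lt_def.1 hlt
    omega

lemma wq_eq_rhoP (hk : k ≤ n) {wq : Equiv.Perm (Fin n)}
    (h1 : wq ∈ parab n (Qset n k)) (h2 : ∀ x ∈ parab n (Qset n k), len n x ≤ len n wq) :
    wq = rhoP n k hk := by
  have hsub := invSet_parab_Q_subset h1
  have hlen := h2 _ (rhoP_mem_parab_Q hk)
  rw [len_eq_invc, len_eq_invc] at hlen
  have hEq : invSet wq =
      Finset.univ.filter (fun p : Fin n × Fin n => p.1 < p.2 ∧ (p.2 : ℕ) < k) := by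
    apply Finset.eq_of_subset_of_card_le hsub
    rw [← invSet_rhoP hk]
    exact hlen
  have hfix : ∀ b : Fin n, k ≤ (b : ℕ) → wq b = b := fun b hb => parab_Q_fix h1 hb
  have hrev : ∀ c d : Fin n, c < d → (d : ℕ) < k → wq d < wq c := by
    intro c d hcd hdk
    have hmem : (c, d) ∈ invSet wq := by
      rw [hEq]
      exact Finset.mem_filter.2 ⟨Finset.mem_univ _, hcd, hdk⟩
    exact (mem_invSet.1 hmem).2
  have hsm : StrictMono (⇑(wq * rhoP n k hk)) := by
    intro a b hab
    simp only [Equiv.Perm.mul_apply]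
    rcases lt_or_ge (b : ℕ) k with hbk | hbk
    · have hak : (a : ℕ) < k := lt_trans (Fin.lt_def.1 hab) hbk
      have hra := rhoP_apply_lt hk hak
      have hrb := rhoP_apply_lt hk hbk
      have hlt2 : rhoP n k hk b < rhoP n k hk a := by
        rw [Fin.lt_def, hra, hrb]
        have := Fin.lt_def.1 hab
        omega
      exact hrev _ _ hlt2 (by omega)
    · have hrb : rhoP n k hk b = b := rhoP_apply_ge hk hbk
      rw [hrb, hfix b hbk]
      rcases lt_or_ge (a : ℕ) k with hak | hak
      · have hra := rhoP_apply_lt hk hak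
        have hmap : ((wq (rhoP n k hk a) : Fin n) : ℕ) < k :=
          parab_Q_maps_lt h1 (by omega)
        rw [Fin.lt_def]
        omega
      · rw [rhoP_apply_ge hk hak, hfix a hak]
        exact hab
  have hone : wq * rhoP n k hk = 1 := perm_eq_one_of_strictMono hsm
  have heq := eq_inv_of_mul_eq_one_left hone
  rw [heq, rhoP_inv hk]

end Wq

section Chain

variable {β : Type*} [Preorder β]

lemma chain_lt_of_adj {g : Fin n → β} {k : ℕ}
    (hadj : ∀ i : Fin (n - 1), (i : ℕ) + 1 < k → g (loF i) < g (hiF i)) :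
    ∀ c d : Fin n, c < d → (d : ℕ) < k → g c < g d := by
  have step : ∀ c d : Fin n, (d : ℕ) = (c : ℕ) + 1 → (d : ℕ) < k → g c < g d := by
    intro c d hcd hdk
    have hlt : (c : ℕ) < n - 1 := by have := d.isLt; omega
    have h := hadj ⟨(c : ℕ), hlt⟩ (by simp only [Fin.val_mk]; omega)
    have hl : loF ⟨(c : ℕ), hlt⟩ = c := Fin.ext rfl
    have hh : hiF ⟨(c : ℕ), hlt⟩ = d := Fin.ext (by simp only [hiF, Fin.val_mk]; omega)
    rwa [hl, hh] at h
  have key : ∀ m : ℕ, ∀ c d : Fin n, (d : ℕ) = (c : ℕ) + m + 1 → (d : ℕ) < k → g c < g d := by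
    intro m
    induction m with
    | zero => intro c d hcd hdk; exact step c d (by omega) hdk
    | succ m ih =>
      intro c d hcd hdk
      have helt : (c : ℕ) + m + 1 < n := by have := d.isLt; omega
      exact lt_trans (ih c ⟨(c : ℕ) + m + 1, helt⟩ (by simp) (by simp only [Fin.val_mk]; omega))
        (step ⟨(c : ℕ) + m + 1, helt⟩ d (by simp only [Fin.val_mk]; omega) hdk)
  intro c d hcd hdk
  have := Fin.lt_def.1 hcd
  exact key ((d : ℕ) - (c : ℕ) - 1) c d (by omega) hdk

lemma chain_lt_of_adj_ge {g : Fin n → β} {k : ℕ}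
    (hadj : ∀ i : Fin (n - 1), k ≤ (i : ℕ) → g (loF i) < g (hiF i)) :
    ∀ c d : Fin n, k ≤ (c : ℕ) → c < d → g c < g d := by
  have step : ∀ c d : Fin n, (d : ℕ) = (c : ℕ) + 1 → k ≤ (c : ℕ) → g c < g d := by
    intro c d hcd hck
    have hlt : (c : ℕ) < n - 1 := by have := d.isLt; omega
    have h := hadj ⟨(c : ℕ), hlt⟩ (by simp only [Fin.val_mk]; omega)
    have hl : loF ⟨(c : ℕ), hlt⟩ = c := Fin.ext rfl
    have hh : hiF ⟨(c : ℕ), hlt⟩ = d := Fin.ext (by simp only [hiF, Fin.val_mk]; omega)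
    rwa [hl, hh] at h
  have key : ∀ m : ℕ, ∀ c d : Fin n, (d : ℕ) = (c : ℕ) + m + 1 → k ≤ (c : ℕ) → g c < g d := by
    intro m
    induction m with
    | zero => intro c d hcd hck; exact step c d (by omega) hck
    | succ m ih =>
      intro c d hcd hck
      have helt : (c : ℕ) + m + 1 < n := by have := d.isLt; omega
      exact lt_trans (ih c ⟨(c : ℕ) + m + 1, helt⟩ (by simp) hck)
        (step ⟨(c : ℕ) + m + 1, helt⟩ d (by simp only [Fin.val_mk]; omega) (by simp only [Fin.val_mk]; omega))
  intro c d hck hcd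
  have := Fin.lt_def.1 hcd
  exact key ((d : ℕ) - (c : ℕ) - 1) c d (by omega) hck

end Chain


end S19

open S19

theorem statement19 (n l k : ℕ) (hk : k ≤ n)
    (a : Fin l → ℕ) (ha : ∀ i, 0 < a i) (hsum : ∑ i, a i = n)
    -- the minimal tableau T_a^min of type a
    (Tmin : Fin n → Fin l)
    (hTmin : ∀ (b : Fin n) (v : Fin l), Tmin b = v ↔
      (∑ u ∈ Finset.univ.filter (fun u => u < v), a u) ≤ (b : ℕ) ∧
        (b : ℕ) < ∑ u ∈ Finset.univ.filter (fun u => u ≤ v), a u)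
    -- the Young subgroup S_a: the stabilizer of T_a^min, generated by the simple
    -- transpositions of adjacent boxes with equal entries
    (Sa : Finset (Fin (n - 1)))
    (hSa : ∀ i : Fin (n - 1), i ∈ Sa ↔
      Tmin ⟨(i : ℕ), by have := i.isLt; omega⟩ = Tmin ⟨(i : ℕ) + 1, by have := i.isLt; omega⟩)
    -- the longest element of W_q = ⟨s_1,…,s_{k-1}⟩
    (wq : Equiv.Perm (Fin n))
    (hwq : wq ∈ parab n (Qset n k) ∧ ∀ x ∈ parab n (Qset n k), len n x ≤ len n wq) :
    -- the map w ↦ T_a(w) = w·T_a^min is a bijection from (S_n/S_a)^short onto the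
    -- (n-k,k)-tableaux of type a ...
    Set.BijOn (fun w : Equiv.Perm (Fin n) => (fun b => Tmin (w⁻¹ b)))
      {w | IsShortR n Sa w} {T : Fin n → Fin l | IsType a T} ∧
    -- ... and restricts to a bijection from Λ_k(a) onto the admissible ones
    Set.BijOn (fun w : Equiv.Perm (Fin n) => (fun b => Tmin (w⁻¹ b)))
      (LambdaSet n (Pset n k) (Qset n k) Sa wq)
      {T : Fin n → Fin l | IsType a T ∧ Admissible k T} := by
  have hmono : Monotone Tmin := Tmin_monotone hTmin
  have htype : IsType a Tmin := Tmin_isType hsum hTmin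
  have hSa' : ∀ i : Fin (n - 1), i ∈ Sa ↔ Tmin (loF i) = Tmin (hiF i) := hSa
  have hstab : ∀ x : Equiv.Perm (Fin n), x ∈ parab n Sa ↔ ∀ b, Tmin (x b) = Tmin b :=
    mem_parab_iff hmono hSa'
  -- swaps within a fiber of Tmin lie in the Young subgroup
  have hswap_mem : ∀ c d : Fin n, Tmin c = Tmin d → Equiv.swap c d ∈ parab n Sa := by
    intro c d hcd
    rw [hstab]
    intro b
    rcases eq_or_ne b c with rfl | h1
    · rw [Equiv.swap_apply_left]; exact hcd.symm
    · rcases eq_or_ne b d with rfl | h2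
      · rw [Equiv.swap_apply_right]; exact hcd
      · rw [Equiv.swap_apply_of_ne_of_ne h1 h2]
  -- a shortest coset representative equals the sorting permutation of its tableau
  have key_sort : ∀ w : Equiv.Perm (Fin n), IsShortR n Sa w →
      w = Tuple.sort (fun b => Tmin (w⁻¹ b)) := by
    intro w hw
    rw [Tuple.eq_sort_iff]
    have hcomp : (fun b => Tmin (w⁻¹ b)) ∘ ⇑w = Tmin := by
      funext b; simp
    constructor
    · rw [hcomp]; exact hmono
    · intro i j hij hfij
      simp only [Equiv.Perm.coe_inv, Equiv.symm_apply_apply] at hfij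
      exact fiber_strictMono hmono hSa' ((isShortR_iff hmono hSa' w).1 hw) i j hij hfij
  -- part 1 : surjectivity data
  have surj1 : ∀ T : Fin n → Fin l, IsType a T →
      ∃ w : Equiv.Perm (Fin n), IsShortR n Sa w ∧ (fun b => Tmin (w⁻¹ b)) = T := by
    intro T hT
    set w := Tuple.sort T with hwdef
    have hsortu := Tuple.eq_sort_iff.1 hwdef
    have hTw : (fun b => T (w b)) = Tmin :=
      monotone_type_eq hTmin hsortu.1 (isType_comp hT w)
    have hshort : IsShortR n Sa w := by
      rw [isShortR_iff hmono hSa' w]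
      intro i hi
      have hf := (hSa' i).1 hi
      have h1 : T (w (loF i)) = T (w (hiF i)) := by
        have e1 := congrFun hTw (loF i)
        have e2 := congrFun hTw (hiF i)
        rw [e1, e2]; exact hf
      refine hsortu.2 (loF i) (hiF i) (Fin.lt_def.2 (by simp [loF, hiF])) h1
    refine ⟨w, hshort, ?_⟩
    funext b
    have := congrFun hTw (w⁻¹ b)
    rw [this.symm]
    simp
  have maps1 : ∀ w : Equiv.Perm (Fin n), IsType a (fun b => Tmin (w⁻¹ b)) := by
    intro w
    exact isType_comp htype w⁻¹
  have bij1 : Set.BijOn (fun w : Equiv.Perm (Fin n) => (fun b => Tmin (w⁻¹ b)))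
      {w | IsShortR n Sa w} {T : Fin n → Fin l | IsType a T} := by
    refine ⟨fun w _ => maps1 w, ?_, ?_⟩
    · intro w hw w' hw' heq
      rw [key_sort w hw, key_sort w' hw']
      simp only at heq
      rw [heq]
    · intro T hT
      obtain ⟨w, hshort, hTw⟩ := surj1 T hT
      exact ⟨w, hshort, hTw⟩
  refine ⟨bij1, ?_⟩
  -- part 2
  set ρ : Equiv.Perm (Fin n) := rhoP n k hk with hρdef
  have hwqρ : wq = ρ := wq_eq_rhoP hk hwq.1 hwq.2
  have hρ_lt : ∀ b : Fin n, (b : ℕ) < k → ((ρ b : Fin n) : ℕ) = k - 1 - (b : ℕ) :=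
    fun b hb => rhoP_apply_lt hk hb
  have hρ_ge : ∀ b : Fin n, k ≤ (b : ℕ) → ρ b = b := fun b hb => rhoP_apply_ge hk hb
  -- row condition
  have row_iff : ∀ w : Equiv.Perm (Fin n), IsShortR n Sa w →
      ((∀ x ∈ parab n Sa, IsShort n (Pset n k) (w * x)) ↔
        (∀ i j : Fin n, k ≤ (i : ℕ) → (i : ℕ) < (j : ℕ) →
          Tmin (w⁻¹ i) < Tmin (w⁻¹ j))) := by
    intro w hw
    constructor
    · intro hcond
      have hadjrow : ∀ i : Fin (n - 1), k ≤ (i : ℕ) →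
          Tmin (w⁻¹ (loF i)) < Tmin (w⁻¹ (hiF i)) := by
        intro i hik
        have hiP : i ∈ Pset n k := Finset.mem_filter.2 ⟨Finset.mem_univ _, hik⟩
        have h1 := (isShort_iff (fp_monotone k) (Pset_spec k) (w * 1)).1
          (hcond 1 (one_mem _)) i hiP
        rw [mul_one] at h1
        have hle : Tmin (w⁻¹ (loF i)) ≤ Tmin (w⁻¹ (hiF i)) := hmono (le_of_lt h1)
        rcases lt_or_eq_of_le hle with hlt | heq
        · exact hlt
        · exfalso
          set c := w⁻¹ (loF i) with hc
          set d := w⁻¹ (hiF i) with hd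
          have hx := hswap_mem c d heq
          have h2 := (isShort_iff (fp_monotone k) (Pset_spec k) (w * Equiv.swap c d)).1
            (hcond _ hx) i hiP
          rw [mul_inv_rev] at h2
          simp only [Equiv.Perm.mul_apply] at h2
          have hsw : (Equiv.swap c d)⁻¹ = Equiv.swap c d := Equiv.swap_inv c d
          rw [hsw] at h2
          rw [← hc, ← hd] at h2
          rw [Equiv.swap_apply_left, Equiv.swap_apply_right] at h2
          exact absurd h1 (not_lt.2 (le_of_lt h2))
      intro i j hik hij
      exact chain_lt_of_adj_ge (g := fun b => Tmin (w⁻¹ b)) hadjrow i j hik (Fin.lt_def.2 hij)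
    · intro hrow x hx
      rw [isShort_iff (fp_monotone k) (Pset_spec k)]
      intro i hiP
      have hik : k ≤ (i : ℕ) := (Finset.mem_filter.1 hiP).2
      have h2 : Tmin (w⁻¹ (loF i)) < Tmin (w⁻¹ (hiF i)) :=
        hrow (loF i) (hiF i) hik (by simp [loF, hiF])
      have hx' : ∀ b, Tmin (x⁻¹ b) = Tmin b := f_inv_eq ((hstab x).1 hx)
      rw [mul_inv_rev]
      simp only [Equiv.Perm.mul_apply]
      by_contra hcon
      push_neg at hcon
      have := hmono hcon
      rw [hx' (w⁻¹ (loF i)), hx' (w⁻¹ (hiF i))] at this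
      exact absurd h2 (not_lt.2 this)
  -- column condition
  have col_iff : ∀ w : Equiv.Perm (Fin n), IsShortR n Sa w →
      ((∃ x ∈ parab n Sa, ∃ u : Equiv.Perm (Fin n),
          IsShort n (Qset n k) u ∧ w * x = wq * u) ↔
        (∀ i j : Fin n, (i : ℕ) < (j : ℕ) → (j : ℕ) < k →
          Tmin (w⁻¹ j) ≤ Tmin (w⁻¹ i))) := by
    intro w hw
    constructor
    · rintro ⟨x, hx, u, hu, heq⟩ i j hij hjk
      have hik : (i : ℕ) < k := by omega
      have hwinv : ∀ c : Fin n, w⁻¹ c = x (u⁻¹ (wq⁻¹ c)) := by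
        intro c
        have : w = wq * u * x⁻¹ := by
          rw [← heq, mul_assoc, mul_inv_cancel, mul_one]
        rw [this]
        simp [mul_assoc]
      have hTm : ∀ c : Fin n, Tmin (w⁻¹ c) = Tmin (u⁻¹ (wq⁻¹ c)) := by
        intro c
        rw [hwinv c]
        exact (hstab x).1 hx _
      have huinc : ∀ c d : Fin n, c < d → (d : ℕ) < k → u⁻¹ c < u⁻¹ d := by
        refine chain_lt_of_adj (g := fun b => u⁻¹ b) ?_
        intro i' hi'
        exact (isShort_iff (fq_monotone k) (Qset_spec k) u).1 hu i'
          (Finset.mem_filter.2 ⟨Finset.mem_univ _, hi'⟩)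
      have hwq_inv : wq⁻¹ = ρ := by rw [hwqρ, hρdef, rhoP_inv hk]
      rw [hTm i, hTm j, hwq_inv]
      have hρj := hρ_lt j hjk
      have hρi := hρ_lt i hik
      have hlt2 : ρ j < ρ i := Fin.lt_def.2 (by omega)
      have := huinc (ρ j) (ρ i) hlt2 (by omega)
      exact hmono (le_of_lt this)
    · intro hcol
      set T : Fin n → Fin l := fun b => Tmin (w⁻¹ b) with hTdef
      have hTtype : IsType a T := maps1 w
      set u : Equiv.Perm (Fin n) := Tuple.sort (fun b => T (ρ b)) with hudef
      have hsortu := Tuple.eq_sort_iff.1 hudef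
      have htypeρu : IsType a (fun b => T (ρ (u b))) :=
        isType_comp (isType_comp hTtype ρ) u
      have hTρu : (fun b => T (ρ (u b))) = Tmin :=
        monotone_type_eq hTmin hsortu.1 htypeρu
      have hushort : IsShort n (Qset n k) u := by
        rw [isShort_iff (fq_monotone k) (Qset_spec k)]
        intro i hiQ
        have hik : (i : ℕ) + 1 < k := (Finset.mem_filter.1 hiQ).2
        by_contra hcon
        push_neg at hcon
        have hne : u⁻¹ (hiF i) ≠ u⁻¹ (loF i) := by
          intro h
          have := Equiv.injective _ h
          have := congrArg Fin.val this
          simp [loF, hiF] at this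
        have hqp : u⁻¹ (hiF i) < u⁻¹ (loF i) := lt_of_le_of_ne hcon hne
        have hle2 : Tmin (u⁻¹ (hiF i)) ≤ Tmin (u⁻¹ (loF i)) := hmono (le_of_lt hqp)
        have e1 : Tmin (u⁻¹ (hiF i)) = T (ρ (hiF i)) := by
          have := congrFun hTρu (u⁻¹ (hiF i))
          rw [← this]
          simp
        have e2 : Tmin (u⁻¹ (loF i)) = T (ρ (loF i)) := by
          have := congrFun hTρu (u⁻¹ (loF i))
          rw [← this]
          simp
        have hvhi : ((hiF i : Fin n) : ℕ) = (i : ℕ) + 1 := rfl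
        have hvlo : ((loF i : Fin n) : ℕ) = (i : ℕ) := rfl
        have hρhi := hρ_lt (hiF i) (by rw [hvhi]; omega)
        have hρlo := hρ_lt (loF i) (by rw [hvlo]; omega)
        rw [hvhi] at hρhi
        rw [hvlo] at hρlo
        have hlp : (ρ (hiF i) : ℕ) < (ρ (loF i) : ℕ) := by omega
        have hcol2 : T (ρ (loF i)) ≤ T (ρ (hiF i)) :=
          hcol (ρ (hiF i)) (ρ (loF i)) hlp (by omega)
        have hTeq : T (ρ (u (u⁻¹ (hiF i)))) = T (ρ (u (u⁻¹ (loF i)))) := by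
          simp only [Equiv.Perm.coe_inv, Equiv.apply_symm_apply]
          rw [e1, e2] at hle2
          exact le_antisymm hle2 hcol2
        have hfin := hsortu.2 _ _ hqp hTeq
        simp only [Equiv.Perm.coe_inv, Equiv.apply_symm_apply] at hfin
        have hfin2 := Fin.lt_def.1 hfin
        have hvhi2 : ((hiF i : Fin n) : ℕ) = (i : ℕ) + 1 := rfl
        have hvlo2 : ((loF i : Fin n) : ℕ) = (i : ℕ) := rfl
        rw [hvhi2, hvlo2] at hfin2
        omega
      refine ⟨w⁻¹ * (wq * u), ?_, u, hushort, by rw [← mul_assoc, mul_inv_cancel, one_mul]⟩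
      rw [hstab]
      intro b
      have hc : (w⁻¹ * (wq * u)) b = w⁻¹ (ρ (u b)) := by
        simp [hwqρ, Equiv.Perm.mul_apply]
      rw [hc]
      have := congrFun hTρu b
      exact this
  -- assemble part 2
  constructor
  · intro w hw
    obtain ⟨hw1, hw2, hw3⟩ := hw
    refine ⟨maps1 w, ?_, ?_⟩
    · intro i j hij hjk
      exact (col_iff w hw1).1 hw3 i j hij hjk
    · intro i j hik hij
      exact (row_iff w hw1).1 hw2 i j hik hij
  constructor
  · exact Set.InjOn.mono (fun w hw => hw.1) bij1.injOn
  · intro T hT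
    obtain ⟨hTtype, hTadm⟩ := hT
    obtain ⟨w, hshort, hTw⟩ := surj1 T hTtype
    refine ⟨w, ⟨hshort, ?_, ?_⟩, hTw⟩
    · refine (row_iff w hshort).2 ?_
      intro i j hik hij
      have e1 := congrFun hTw i
      have e2 := congrFun hTw j
      rw [e1, e2]
      exact hTadm.2 i j hik hij
    · refine (col_iff w hshort).2 ?_
      intro i j hij hjk
      have e1 := congrFun hTw i
      have e2 := congrFun hTw j
      rw [e1, e2]
      exact hTadm.1 i j hij hjk
end
end
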